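/- arXiv:1610.05869 — 6 statements merged into one kernel-verified Lean document; each statement's English description precedes it below -/
import Mathlib

section
/- Let N ≥ 1. The argmin chain (A_N(n); n ≥ 0) has the Markov property: for every n ≥ 0, all states i_0, i_1, …, i_n, j in {0, 1, …, N} such that ℙ(A_N(0) = i_0, A_N(1) = i_1, …, A_N(n) = i_n) > 0, one has ℙ(A_N(n+1) = j | A_N(0) = i_0, …, A_N(n) = i_n) = ℙ(A_N(n+1) = j | A_N(n) = i_n). -/
open MeasureTheory ProbabilityTheory Finset
open scoped Classical ProbabilityTheory

/-- Partial sums `S n = X 1 + ⋯ + X n` of the steps `X`. -/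
noncomputable def walkSum {Ω : Type*} (X : ℕ → Ω → ℝ) (n : ℕ) (ω : Ω) : ℝ :=
  ∑ i ∈ Finset.range n, X (i + 1) ω

/-- The argmin chain: the last `i ∈ {0,…,N}` at which `S (n+i)` equals the minimum of the
walk over the window `{n, …, n+N}`. -/
noncomputable def argminChain {Ω : Type*} (X : ℕ → Ω → ℝ) (N n : ℕ) (ω : Ω) : ℕ :=
  ((Finset.range (N + 1)).filter
    (fun i => ∀ k ∈ Finset.range (N + 1), walkSum X (n + i) ω ≤ walkSum X (n + k) ω)).sup id

/-- `p n = ℙ(S 1 ≥ 0, …, S n ≥ 0)`, as a real number. -/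
noncomputable def stayNonneg {Ω : Type*} [MeasurableSpace Ω] (μ : MeasureTheory.Measure Ω)
    (X : ℕ → Ω → ℝ) (n : ℕ) : ℝ :=
  (μ {ω | ∀ k ∈ Finset.Icc 1 n, 0 ≤ walkSum X k ω}).toReal

/-- `p̃ n = ℙ(S 1 > 0, …, S n > 0)`, as a real number. -/
noncomputable def stayPos {Ω : Type*} [MeasurableSpace Ω] (μ : MeasureTheory.Measure Ω)
    (X : ℕ → Ω → ℝ) (n : ℕ) : ℝ :=
  (μ {ω | ∀ k ∈ Finset.Icc 1 n, 0 < walkSum X k ω}).toReal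

/-- Pochhammer symbol `(θ)_{n↑} = θ (θ+1) ⋯ (θ+n-1)`. -/
noncomputable def poch (θ : ℝ) (n : ℕ) : ℝ := ∏ i ∈ Finset.range n, (θ + i)
/-- last argmin of `f` over `{m, …, m+N}`, truncated at position `M`. -/
noncomputable def lastArgmin (f : ℕ → ℝ) (N m M : ℕ) : ℕ :=
  ((Finset.range (N + 1)).filter
    (fun i => m + i ≤ M ∧ ∀ k ∈ Finset.range (N + 1), m + k ≤ M → f (m + i) ≤ f (m + k))).sup id

lemma lastArgmin_filter_nonempty (f : ℕ → ℝ) (N m M : ℕ) (hmM : m ≤ M) :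
    ((Finset.range (N + 1)).filter
    (fun i => m + i ≤ M ∧ ∀ k ∈ Finset.range (N + 1), m + k ≤ M → f (m + i) ≤ f (m + k))).Nonempty := by
  obtain ⟨a, ha, hmin⟩ := Finset.exists_min_image
    (((Finset.range (N+1)).filter (fun k => m + k ≤ M))) (fun k => f (m + k))
    ⟨0, by simp [hmM]⟩
  simp only [Finset.mem_filter, Finset.mem_range] at ha
  refine ⟨a, ?_⟩
  simp only [Finset.mem_filter, Finset.mem_range]
  refine ⟨ha.1, ha.2, fun k hk hkM => hmin k ?_⟩
  simp only [Finset.mem_filter, Finset.mem_range]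
  exact ⟨by simpa using hk, hkM⟩

lemma sup_id_eq_iff {F : Finset ℕ} (hF : F.Nonempty) {a : ℕ} :
    F.sup id = a ↔ a ∈ F ∧ ∀ b ∈ F, b ≤ a := by
  have hsup : F.sup id = F.max' hF := (Finset.sup'_eq_sup hF id).symm
  rw [hsup]
  constructor
  · rintro rfl
    exact ⟨F.max'_mem hF, fun b hb => F.le_max' b hb⟩
  · rintro ⟨ha, hb⟩
    exact le_antisymm (Finset.max'_le _ _ _ hb) (F.le_max' a ha)

lemma lastArgmin_eq_iff (f : ℕ → ℝ) (N m M : ℕ) (hmM : m ≤ M) (a : ℕ) :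
    lastArgmin f N m M = a ↔
      a ≤ N ∧ m + a ≤ M ∧ (∀ k, k ≤ N → m + k ≤ M → f (m + a) ≤ f (m + k)) ∧
        (∀ k, k ≤ N → m + k ≤ M → a < k → f (m + a) < f (m + k)) := by
  rw [lastArgmin, sup_id_eq_iff (lastArgmin_filter_nonempty f N m M hmM)]
  simp only [Finset.mem_filter, Finset.mem_range, Nat.lt_succ_iff]
  constructor
  · rintro ⟨⟨haN, haM, hmin⟩, hmax⟩
    refine ⟨haN, haM, fun k hk hkM => hmin k (by simpa [Nat.lt_succ_iff] using hk) hkM,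
      fun k hk hkM hak => ?_⟩
    have hknot : ¬ (m + k ≤ M ∧ ∀ l, l ≤ N → m + l ≤ M → f (m + k) ≤ f (m + l)) := by
      intro hcon
      exact absurd (hmax k ⟨hk, hcon⟩) (by omega)
    push_neg at hknot
    obtain ⟨l, hl, hlM, hlt⟩ := hknot hkM
    exact lt_of_le_of_lt (hmin l hl hlM) hlt
  · rintro ⟨haN, haM, hmin, hstrict⟩
    refine ⟨⟨haN, haM, fun k hk hkM => hmin k (by simpa [Nat.lt_succ_iff] using hk) hkM⟩,
      fun b hb => ?_⟩
    obtain ⟨hbN, hbM, hbmin⟩ := hb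
    by_contra hab
    push_neg at hab
    have h1 : f (m + a) < f (m + b) := hstrict b hbN hbM hab
    have h2 : f (m + b) ≤ f (m + a) := hbmin a (by simpa [Nat.lt_succ_iff] using haN) haM
    linarith

lemma lastArgmin_congr (f g : ℕ → ℝ) (N m M : ℕ)
    (h : ∀ s t, m ≤ s → s ≤ M → m ≤ t → t ≤ M → (f s ≤ f t ↔ g s ≤ g t)) :
    lastArgmin f N m M = lastArgmin g N m M := by
  unfold lastArgmin
  congr 1
  ext x
  simp only [Finset.mem_filter]
  refine and_congr_right fun hx => ?_
  constructor
  · rintro ⟨hxM, hmin⟩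
    exact ⟨hxM, fun k hk hkM => (h (m+x) (m+k) (by omega) hxM (by omega) hkM).mp (hmin k hk hkM)⟩
  · rintro ⟨hxM, hmin⟩
    exact ⟨hxM, fun k hk hkM => (h (m+x) (m+k) (by omega) hxM (by omega) hkM).mpr (hmin k hk hkM)⟩

lemma argminChain_eq_lastArgmin {Ω : Type*} (X : ℕ → Ω → ℝ) (N m : ℕ) (ω : Ω) :
    argminChain X N m ω = lastArgmin (fun t => walkSum X t ω) N m (m + N) := by
  unfold argminChain lastArgmin
  congr 1
  ext x
  simp only [Finset.mem_filter]
  refine and_congr_right fun hx => ?_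
  simp only [Finset.mem_range, Nat.lt_succ_iff] at hx
  constructor
  · intro hmin
    exact ⟨by omega, fun k hk _ => hmin k hk⟩
  · rintro ⟨-, hmin⟩
    intro k hk
    exact hmin k hk (by simp only [Finset.mem_range, Nat.lt_succ_iff] at hk; omega)
lemma walkSum_add_sum_Ioc {Ω : Type*} (X : ℕ → Ω → ℝ) (ω : Ω) {a b : ℕ} (h : a ≤ b) :
    walkSum X b ω = walkSum X a ω + ∑ l ∈ Finset.Ioc a b, X l ω := by
  induction b, h using Nat.le_induction with
  | base => simp
  | succ b hab ih =>
      rw [walkSum, Finset.sum_range_succ, ← walkSum, ih, Finset.sum_Ioc_succ_top hab]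
      ring

lemma walkSum_eq_sum_Icc {Ω : Type*} (X : ℕ → Ω → ℝ) (ω : Ω) (t : ℕ) :
    walkSum X t ω = ∑ l ∈ Finset.Icc 1 t, X l ω := by
  have h0 : walkSum X 0 ω = 0 := by simp [walkSum]
  have := walkSum_add_sum_Ioc X ω (Nat.zero_le t)
  rw [h0, zero_add] at this
  rw [this]
  congr 1

lemma measurable_walkSum {Ω : Type*} [MeasurableSpace Ω] (X : ℕ → Ω → ℝ)
    (hmeas : ∀ i, Measurable (X i)) (t : ℕ) : Measurable (fun ω => walkSum X t ω) :=
  Finset.measurable_sum _ (fun _ _ => hmeas _)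

noncomputable def initSum (M : ℕ) (y : ↥(Finset.Icc 1 M) → ℝ) (t : ℕ) : ℝ :=
  ∑ l ∈ Finset.Icc 1 t, if h : l ∈ Finset.Icc 1 M then y ⟨l, h⟩ else 0

noncomputable def blockSum (M K : ℕ) (y : ↥(Finset.Ioc M K) → ℝ) (t : ℕ) : ℝ :=
  ∑ l ∈ Finset.Ioc M t, if h : l ∈ Finset.Ioc M K then y ⟨l, h⟩ else 0

lemma initSum_eval {Ω : Type*} (X : ℕ → Ω → ℝ) (M t : ℕ) (ht : t ≤ M) (ω : Ω) :
    initSum M (fun l : (Finset.Icc 1 M : Finset ℕ) => X l ω) t = walkSum X t ω := by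
  rw [walkSum_eq_sum_Icc]
  apply Finset.sum_congr rfl
  intro l hl
  simp only [Finset.mem_Icc] at hl
  rw [dif_pos (by simp only [Finset.mem_Icc]; omega)]

lemma blockSum_eval {Ω : Type*} (X : ℕ → Ω → ℝ) (M K t : ℕ) (hM : M ≤ t) (ht : t ≤ K) (ω : Ω) :
    blockSum M K (fun l : (Finset.Ioc M K : Finset ℕ) => X l ω) t
      = walkSum X t ω - walkSum X M ω := by
  rw [walkSum_add_sum_Ioc X ω hM]
  have : ∑ l ∈ Finset.Ioc M t, X l ω = blockSum M K (fun l : (Finset.Ioc M K : Finset ℕ) => X l ω) t := by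
    apply Finset.sum_congr rfl
    intro l hl
    simp only [Finset.mem_Ioc] at hl
    rw [dif_pos (by simp only [Finset.mem_Ioc]; omega)]
  rw [← this]
  ring

lemma measurable_initSum (M t : ℕ) : Measurable (fun y => initSum M y t) := by
  apply Finset.measurable_sum
  intro l _
  by_cases h : l ∈ Finset.Icc 1 M
  · simpa [h] using measurable_pi_apply (⟨l, h⟩ : (Finset.Icc 1 M : Finset ℕ))
  · simpa [h] using measurable_const

lemma measurable_blockSum (M K t : ℕ) : Measurable (fun y => blockSum M K y t) := by
  apply Finset.measurable_sum
  intro l _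
  by_cases h : l ∈ Finset.Ioc M K
  · simpa [h] using measurable_pi_apply (⟨l, h⟩ : (Finset.Ioc M K : Finset ℕ))
  · simpa [h] using measurable_const

lemma measurableSet_lastArgmin_eq {α : Type*} [MeasurableSpace α] (F : α → ℕ → ℝ)
    (hF : ∀ t, Measurable fun y => F y t) (N m M a : ℕ) (hmM : m ≤ M) :
    MeasurableSet {y | lastArgmin (F y) N m M = a} := by
  have hset : {y | lastArgmin (F y) N m M = a} =
      ({y : α | a ≤ N} ∩ {y : α | m + a ≤ M}) ∩
      ((⋂ (k : ℕ) (_ : k ≤ N) (_ : m + k ≤ M), {y | F y (m + a) ≤ F y (m + k)}) ∩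
      (⋂ (k : ℕ) (_ : k ≤ N) (_ : m + k ≤ M) (_ : a < k), {y | F y (m + a) < F y (m + k)})) := by
    ext y
    simp only [Set.mem_inter_iff, Set.mem_iInter, Set.mem_setOf_eq,
      lastArgmin_eq_iff _ _ _ _ hmM]
    tauto
  rw [hset]
  refine ((MeasurableSet.const _).inter (MeasurableSet.const _)).inter (MeasurableSet.inter ?_ ?_)
  · exact MeasurableSet.iInter fun k => MeasurableSet.iInter fun _ =>
      MeasurableSet.iInter fun _ => measurableSet_le (hF _) (hF _)
  · exact MeasurableSet.iInter fun k => MeasurableSet.iInter fun _ =>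
      MeasurableSet.iInter fun _ => MeasurableSet.iInter fun _ => measurableSet_lt (hF _) (hF _)

lemma measurableSet_argminChain_eq {Ω : Type*} [MeasurableSpace Ω] (X : ℕ → Ω → ℝ)
    (hmeas : ∀ i, Measurable (X i)) (N m a : ℕ) :
    MeasurableSet {ω | argminChain X N m ω = a} := by
  have : {ω | argminChain X N m ω = a}
      = {ω | lastArgmin (fun t => walkSum X t ω) N m (m + N) = a} := by
    ext ω; rw [Set.mem_setOf_eq, argminChain_eq_lastArgmin]; rfl
  rw [this]
  exact measurableSet_lastArgmin_eq _ (fun t => measurable_walkSum X hmeas t) _ _ _ _ (by omega)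
open scoped ENNReal in
lemma ennreal_cancel (b c f : ℝ≥0∞) (hb0 : b ≠ 0) (hbt : b ≠ ⊤) :
    (b * c)⁻¹ * (b * f) = c⁻¹ * f := by
  rw [ENNReal.mul_inv (Or.inl hb0) (Or.inl hbt), mul_mul_mul_comm,
    ENNReal.inv_mul_cancel hb0 hbt, one_mul]

/-- The argmin chain has the Markov property: conditionally on the whole past
`A_N(0) = i_0, …, A_N(n) = i_n` (an event of positive probability), the probability that
`A_N(n+1) = j` only depends on `i_n`. -/
theorem argminChain_markov
    {Ω : Type*} [MeasurableSpace Ω] (μ : MeasureTheory.Measure Ω) [IsProbabilityMeasure μ]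
    (X : ℕ → Ω → ℝ) (hmeas : ∀ i, Measurable (X i))
    (hindep : iIndepFun X μ)
    (hident : ∀ i, IdentDistrib (X i) (X 1) μ μ)
    (N : ℕ) (hN : 1 ≤ N) (n : ℕ) (i : ℕ → ℕ) (j : ℕ)
    (hi : ∀ m, m ≤ n → i m ≤ N) (hj : j ≤ N)
    (hpos : 0 < μ (⋂ m ∈ Finset.range (n + 1), {ω | argminChain X N m ω = i m})) :
    ((μ[|⋂ m ∈ Finset.range (n + 1), {ω | argminChain X N m ω = i m}])
        {ω | argminChain X N (n + 1) ω = j}).toReal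
      = ((μ[|{ω | argminChain X N n ω = i n}])
        {ω | argminChain X N (n + 1) ω = j}).toReal := by
  set M : ℕ := n + i n with hM
  set K : ℕ := n + N + 1 with hK
  have hiN : i n ≤ N := hi n le_rfl
  have hMK : M + 1 ≤ K := by omega
  -- notation for the walk
  set S : Ω → ℕ → ℝ := fun ω t => walkSum X t ω with hSdef
  -- the two tuple maps
  set Φ₁ : Ω → (↥(Finset.Icc 1 M) → ℝ) := fun ω l => X l ω with hΦ₁
  set Φ₂ : Ω → (↥(Finset.Ioc M K) → ℝ) := fun ω l => X l ω with hΦ₂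
  -- evaluation lemmas
  have hq : ∀ (ω : Ω) (t : ℕ), t ≤ M → initSum M (Φ₁ ω) t = S ω t := by
    intro ω t ht; exact initSum_eval X M t ht ω
  have hr : ∀ (ω : Ω) (t : ℕ), M ≤ t → t ≤ K → blockSum M K (Φ₂ ω) t = S ω t - S ω M := by
    intro ω t h1 h2; exact blockSum_eval X M K t h1 h2 ω
  -- product-space events
  set MB : Set (↥(Finset.Icc 1 M) → ℝ) :=
    ⋂ (m : ℕ) (_ : m ≤ n), {y | lastArgmin (initSum M y) N m M = i m} with hMBdef
  set MBn : Set (↥(Finset.Icc 1 M) → ℝ) :=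
    ⋂ (k : ℕ) (_ : k ≤ i n), {y | initSum M y M ≤ initSum M y (n + k)} with hMBndef
  set MC : Set (↥(Finset.Ioc M K) → ℝ) :=
    ⋂ (t : ℕ) (_ : M < t) (_ : t ≤ n + N), {y | 0 < blockSum M K y t} with hMCdef
  set MG : Set (↥(Finset.Ioc M K) → ℝ) := {y | blockSum M K y K ≤ 0} with hMGdef
  set MAj : Set (↥(Finset.Ioc M K) → ℝ) :=
    {y | lastArgmin (blockSum M K y) N (n + 1) K = j} with hMAdef
  set MF : Set (↥(Finset.Ioc M K) → ℝ) :=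
    MC ∩ (if 1 ≤ i n then (if j = N then MG else if j = i n - 1 then MGᶜ else ∅) else MAj)
    with hMFdef
  -- measurability of the product-space events
  have hmMB : MeasurableSet MB := by
    refine MeasurableSet.iInter fun m => MeasurableSet.iInter fun hm => ?_
    exact measurableSet_lastArgmin_eq _ (measurable_initSum M) N m M (i m) (by omega)
  have hmMBn : MeasurableSet MBn := by
    refine MeasurableSet.iInter fun k => MeasurableSet.iInter fun hk => ?_
    exact measurableSet_le (measurable_initSum M M) (measurable_initSum M (n + k))
  have hmMC : MeasurableSet MC := by
    refine MeasurableSet.iInter fun t => MeasurableSet.iInter fun h1 =>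
      MeasurableSet.iInter fun h2 => ?_
    exact measurableSet_lt measurable_const (measurable_blockSum M K t)
  have hmMG : MeasurableSet MG := measurableSet_le (measurable_blockSum M K K) measurable_const
  have hmMAj : MeasurableSet MAj :=
    measurableSet_lastArgmin_eq _ (measurable_blockSum M K) N (n + 1) K j (by omega)
  have hmMF : MeasurableSet MF := by
    refine hmMC.inter ?_
    split_ifs
    · exact hmMG
    · exact hmMG.compl
    · exact MeasurableSet.empty
    · exact hmMAj
  -- independence
  have hIndep : IndepFun Φ₁ Φ₂ μ := by
    refine hindep.indepFun_finset (Finset.Icc 1 M) (Finset.Ioc M K) ?_ hmeas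
    simp only [Finset.disjoint_left, Finset.mem_Icc, Finset.mem_Ioc]
    omega
  have hmul : ∀ (s : Set (↥(Finset.Icc 1 M) → ℝ)) (t : Set (↥(Finset.Ioc M K) → ℝ)),
      MeasurableSet s → MeasurableSet t →
      μ (Φ₁ ⁻¹' s ∩ Φ₂ ⁻¹' t) = μ (Φ₁ ⁻¹' s) * μ (Φ₂ ⁻¹' t) := by
    intro s t hs ht
    exact (indepFun_iff_measure_inter_preimage_eq_mul.mp hIndep) s t hs ht
  -- characterization of argmin over full windows
  have hAIff : ∀ (m : ℕ) (ω : Ω) (a : ℕ), argminChain X N m ω = a ↔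
      (a ≤ N ∧ (∀ k, k ≤ N → S ω (m + a) ≤ S ω (m + k)) ∧
        (∀ k, k ≤ N → a < k → S ω (m + a) < S ω (m + k))) := by
    intro m ω a
    rw [argminChain_eq_lastArgmin, lastArgmin_eq_iff _ _ _ _ (Nat.le_add_right m N)]
    constructor
    · rintro ⟨h1, h2, h3, h4⟩
      exact ⟨h1, fun k hk => h3 k hk (by omega), fun k hk h => h4 k hk (by omega) h⟩
    · rintro ⟨h1, h2, h3⟩
      exact ⟨h1, by omega, fun k hk _ => h2 k hk, fun k hk _ h => h3 k hk h⟩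
  -- facts on the event {A_N(n) = i n}
  have hEnIff : ∀ ω : Ω, argminChain X N n ω = i n ↔
      ((∀ k, k ≤ N → S ω M ≤ S ω (n + k)) ∧
        (∀ k, k ≤ N → i n < k → S ω M < S ω (n + k))) := by
    intro ω
    rw [hAIff n ω (i n)]
    constructor
    · rintro ⟨-, h2, h3⟩; exact ⟨h2, h3⟩
    · rintro ⟨h2, h3⟩; exact ⟨hiN, h2, h3⟩
  -- the C event in terms of the walk
  have hCeq : ∀ ω : Ω, Φ₂ ω ∈ MC ↔ ∀ t, M < t → t ≤ n + N → S ω M < S ω t := by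
    intro ω
    rw [hMCdef]
    simp only [Set.mem_iInter, Set.mem_setOf_eq]
    constructor
    · intro h t h1 h2
      have := h t h1 h2
      rw [hr ω t (by omega) (by omega)] at this
      linarith
    · intro h t h1 h2
      rw [hr ω t (by omega) (by omega)]
      have := h t h1 h2
      linarith
  have hGeq : ∀ ω : Ω, Φ₂ ω ∈ MG ↔ S ω K ≤ S ω M := by
    intro ω
    rw [hMGdef]
    simp only [Set.mem_setOf_eq]
    rw [hr ω K (by omega) le_rfl]
    constructor <;> intro h <;> linarith
  -- relating truncated argmins over the first block to the walk
  have hBeq : ∀ (ω : Ω) (m : ℕ), m ≤ M →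
      lastArgmin (initSum M (Φ₁ ω)) N m M = lastArgmin (S ω) N m M := by
    intro ω m hm
    refine lastArgmin_congr _ _ N m M fun s t h1 h2 h3 h4 => ?_
    rw [hq ω s h2, hq ω t h4]
  -- key: on C, the argmin chain computes from the truncated window
  have hkey1 : ∀ ω : Ω, (∀ t, M < t → t ≤ n + N → S ω M < S ω t) →
      ∀ m, m ≤ n → argminChain X N m ω = lastArgmin (S ω) N m M := by
    intro ω hC m hm
    have hmM : m ≤ M := by omega
    obtain ⟨h1, h2, h3, h4⟩ :=
      (lastArgmin_eq_iff (S ω) N m M hmM (lastArgmin (S ω) N m M)).mp rfl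
    rw [hAIff m ω]
    set a := lastArgmin (S ω) N m M
    have haux : ∀ k, k ≤ N → ¬ (m + k ≤ M) → S ω (m + a) < S ω (m + k) := by
      intro k hk hkM
      have hMlt : M < m + k := by omega
      have hko : M - m ≤ N := by omega
      have h5 : S ω (m + a) ≤ S ω (m + (M - m)) := h3 (M - m) hko (by omega)
      have h6 : S ω M < S ω (m + k) := hC (m + k) hMlt (by omega)
      have h7 : m + (M - m) = M := by omega
      rw [h7] at h5
      linarith
    refine ⟨h1, fun k hk => ?_, fun k hk hak => ?_⟩
    · by_cases hkM : m + k ≤ M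
      · exact h3 k hk hkM
      · exact le_of_lt (haux k hk hkM)
    · by_cases hkM : m + k ≤ M
      · exact h4 k hk hkM hak
      · exact haux k hk hkM
  -- E = B ∩ C
  have hE : (⋂ m ∈ Finset.range (n + 1), {ω | argminChain X N m ω = i m})
      = Φ₁ ⁻¹' MB ∩ Φ₂ ⁻¹' MC := by
    ext ω
    simp only [Set.mem_iInter, Set.mem_inter_iff, Set.mem_preimage, Finset.mem_range,
      Nat.lt_succ_iff, Set.mem_setOf_eq, hMBdef]
    constructor
    · intro h
      have hEn : argminChain X N n ω = i n := h n le_rfl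
      have hCω : ∀ t, M < t → t ≤ n + N → S ω M < S ω t := by
        intro t h1 h2
        obtain ⟨-, hstrict⟩ := (hEnIff ω).mp hEn
        have h7 : n + (t - n) = t := by omega
        have := hstrict (t - n) (by omega) (by omega)
        rwa [h7] at this
      refine ⟨fun m hm => ?_, (hCeq ω).mpr hCω⟩
      rw [hBeq ω m (by omega), ← hkey1 ω hCω m hm]
      exact h m hm
    · rintro ⟨hB, hC⟩ m hm
      have hCω := (hCeq ω).mp hC
      rw [hkey1 ω hCω m hm, ← hBeq ω m (by omega)]
      exact hB m hm
  -- En = Bn ∩ C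
  have hEn : {ω | argminChain X N n ω = i n} = Φ₁ ⁻¹' MBn ∩ Φ₂ ⁻¹' MC := by
    ext ω
    simp only [Set.mem_inter_iff, Set.mem_preimage, Set.mem_setOf_eq, hMBndef, Set.mem_iInter]
    rw [hEnIff ω]
    constructor
    · rintro ⟨hmin, hstrict⟩
      constructor
      · intro k hk
        rw [hq ω M le_rfl, hq ω (n + k) (by omega)]
        exact hmin k (by omega)
      · rw [hCeq ω]
        intro t h1 h2
        have h7 : n + (t - n) = t := by omega
        have := hstrict (t - n) (by omega) (by omega)
        rwa [h7] at this
    · rintro ⟨hBn, hC⟩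
      have hCω := (hCeq ω).mp hC
      constructor
      · intro k hk
        by_cases hki : k ≤ i n
        · have := hBn k hki
          rwa [hq ω M le_rfl, hq ω (n + k) (by omega)] at this
        · exact le_of_lt (hCω (n + k) (by omega) (by omega))
      · intro k hk hik
        exact hCω (n + k) (by omega) (by omega)
  -- claims about the next step of the chain
  have claim_a : ∀ ω : Ω, argminChain X N n ω = i n → S ω K ≤ S ω M →
      argminChain X N (n + 1) ω = N := by
    intro ω hEnω hle
    obtain ⟨hmin, -⟩ := (hEnIff ω).mp hEnω
    rw [hAIff (n + 1) ω N]
    refine ⟨le_rfl, fun k hk => ?_, fun k hk h => by omega⟩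
    have h1 : n + 1 + N = K := by omega
    rw [h1]
    rcases Nat.lt_or_ge k N with hkN | hkN
    · have h2 : n + 1 + k = n + (k + 1) := by omega
      rw [h2]
      exact le_trans hle (hmin (k + 1) (by omega))
    · have h3 : k = N := by omega
      rw [h3, h1]
  have claim_b : ∀ ω : Ω, argminChain X N n ω = i n → 1 ≤ i n → S ω M < S ω K →
      argminChain X N (n + 1) ω = i n - 1 := by
    intro ω hEnω hin hlt
    obtain ⟨hmin, hstrict⟩ := (hEnIff ω).mp hEnω
    rw [hAIff (n + 1) ω (i n - 1)]
    have hidx : n + 1 + (i n - 1) = M := by omega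
    rw [hidx]
    refine ⟨by omega, fun k hk => ?_, fun k hk hak => ?_⟩
    · rcases Nat.lt_or_ge k N with hkN | hkN
      · have h2 : n + 1 + k = n + (k + 1) := by omega
        rw [h2]
        exact hmin (k + 1) (by omega)
      · have h3 : n + 1 + k = K := by omega
        rw [h3]
        exact le_of_lt hlt
    · rcases Nat.lt_or_ge k N with hkN | hkN
      · have h2 : n + 1 + k = n + (k + 1) := by omega
        rw [h2]
        exact hstrict (k + 1) (by omega) (by omega)
      · have h3 : n + 1 + k = K := by omega
        rw [h3]
        exact hlt
  -- the argmin of the next window through the second block (case i n = 0)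
  have hAeq : i n = 0 → ∀ ω : Ω,
      (Φ₂ ω ∈ MAj ↔ argminChain X N (n + 1) ω = j) := by
    intro hin ω
    have hMn : M = n := by omega
    rw [hMAdef]
    simp only [Set.mem_setOf_eq]
    have h1 : n + 1 + N = K := by omega
    rw [argminChain_eq_lastArgmin, h1]
    constructor <;> intro h <;> rw [← h] <;>
      [skip; skip] <;>
      · refine lastArgmin_congr _ _ N (n + 1) K fun s t hs1 hs2 ht1 ht2 => ?_
        rw [hr ω s (by omega) hs2, hr ω t (by omega) ht2]
        constructor <;> intro hh <;> linarith
  -- the central set identity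
  have hkey : ∀ P : Set Ω, (P ∩ Φ₂ ⁻¹' MC ⊆ {ω | argminChain X N n ω = i n}) →
      (P ∩ Φ₂ ⁻¹' MC) ∩ {ω | argminChain X N (n + 1) ω = j} = P ∩ Φ₂ ⁻¹' MF := by
    intro P hsub
    have hMF' : ∀ ω : Ω, Φ₂ ω ∈ MF ↔ (Φ₂ ω ∈ MC ∧ Φ₂ ω ∈
        (if 1 ≤ i n then (if j = N then MG else if j = i n - 1 then MGᶜ else ∅) else MAj)) := by
      intro ω; rw [hMFdef]; exact Set.mem_inter_iff _ _ _
    ext ω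
    simp only [Set.mem_inter_iff, Set.mem_preimage, Set.mem_setOf_eq]
    constructor
    · rintro ⟨⟨hP, hC⟩, hA⟩
      refine ⟨hP, (hMF' ω).mpr ⟨hC, ?_⟩⟩
      have hEnω : argminChain X N n ω = i n := hsub ⟨hP, hC⟩
      by_cases hin : 1 ≤ i n
      · rw [if_pos hin]
        rcases le_or_gt (S ω K) (S ω M) with hle | hlt
        · have hAN := claim_a ω hEnω hle
          have hjN : j = N := by rw [← hA, hAN]
          rw [if_pos hjN]
          exact (hGeq ω).mpr hle
        · have hAb := claim_b ω hEnω hin hlt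
          have hjb : j = i n - 1 := by rw [← hA, hAb]
          have hjN : j ≠ N := by omega
          rw [if_neg hjN, if_pos hjb]
          intro hcon
          exact absurd ((hGeq ω).mp hcon) (by linarith)
      · rw [if_neg hin]
        exact (hAeq (by omega) ω).mpr hA
    · rintro ⟨hP, hMFω⟩
      obtain ⟨hC, hIf⟩ := (hMF' ω).mp hMFω
      refine ⟨⟨hP, hC⟩, ?_⟩
      have hEnω : argminChain X N n ω = i n := hsub ⟨hP, hC⟩
      by_cases hin : 1 ≤ i n
      · rw [if_pos hin] at hIf
        by_cases hjN : j = N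
        · rw [if_pos hjN] at hIf
          rw [hjN]
          exact claim_a ω hEnω ((hGeq ω).mp hIf)
        · rw [if_neg hjN] at hIf
          by_cases hjb : j = i n - 1
          · rw [if_pos hjb] at hIf
            have hlt : S ω M < S ω K := by
              by_contra hcon
              exact hIf ((hGeq ω).mpr (by linarith))
            rw [hjb]
            exact claim_b ω hEnω hin hlt
          · rw [if_neg hjb] at hIf
            exact absurd hIf (Set.notMem_empty _)
      · rw [if_neg hin] at hIf
        exact (hAeq (by omega) ω).mp hIf
  -- measurability of the conditioning events
  have hmE : MeasurableSet (⋂ m ∈ Finset.range (n + 1), {ω | argminChain X N m ω = i m}) := by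
    refine MeasurableSet.iInter fun m => MeasurableSet.iInter fun _ => ?_
    exact measurableSet_argminChain_eq X hmeas N m (i m)
  have hmEn : MeasurableSet {ω | argminChain X N n ω = i n} :=
    measurableSet_argminChain_eq X hmeas N n (i n)
  -- subset facts
  have hEsubEn : (⋂ m ∈ Finset.range (n + 1), {ω | argminChain X N m ω = i m})
      ⊆ {ω | argminChain X N n ω = i n} := by
    intro ω hω
    simp only [Set.mem_iInter, Finset.mem_range] at hω
    exact hω n (by omega)
  -- the two set identities for the numerators
  have hnum1 : (⋂ m ∈ Finset.range (n + 1), {ω | argminChain X N m ω = i m})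
      ∩ {ω | argminChain X N (n + 1) ω = j} = Φ₁ ⁻¹' MB ∩ Φ₂ ⁻¹' MF := by
    rw [hE]
    exact hkey (Φ₁ ⁻¹' MB) (by rw [← hE]; exact hEsubEn)
  have hnum2 : {ω | argminChain X N n ω = i n}
      ∩ {ω | argminChain X N (n + 1) ω = j} = Φ₁ ⁻¹' MBn ∩ Φ₂ ⁻¹' MF := by
    rw [hEn]
    exact hkey (Φ₁ ⁻¹' MBn) (by rw [← hEn])
  -- measure computations
  have hμE : μ (⋂ m ∈ Finset.range (n + 1), {ω | argminChain X N m ω = i m})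
      = μ (Φ₁ ⁻¹' MB) * μ (Φ₂ ⁻¹' MC) := by rw [hE]; exact hmul _ _ hmMB hmMC
  have hμEn : μ {ω | argminChain X N n ω = i n}
      = μ (Φ₁ ⁻¹' MBn) * μ (Φ₂ ⁻¹' MC) := by rw [hEn]; exact hmul _ _ hmMBn hmMC
  have hμnum1 : μ ((⋂ m ∈ Finset.range (n + 1), {ω | argminChain X N m ω = i m})
      ∩ {ω | argminChain X N (n + 1) ω = j}) = μ (Φ₁ ⁻¹' MB) * μ (Φ₂ ⁻¹' MF) := by
    rw [hnum1]; exact hmul _ _ hmMB hmMF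
  have hμnum2 : μ ({ω | argminChain X N n ω = i n}
      ∩ {ω | argminChain X N (n + 1) ω = j}) = μ (Φ₁ ⁻¹' MBn) * μ (Φ₂ ⁻¹' MF) := by
    rw [hnum2]; exact hmul _ _ hmMBn hmMF
  -- positivity facts
  have hb0 : μ (Φ₁ ⁻¹' MB) ≠ 0 := by
    intro h
    rw [hμE, h, zero_mul] at hpos
    exact lt_irrefl _ hpos
  have hbn0 : μ (Φ₁ ⁻¹' MBn) ≠ 0 := by
    intro h
    have hle := measure_mono (μ := μ) hEsubEn
    rw [hμEn, h, zero_mul, nonpos_iff_eq_zero] at hle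
    rw [hle] at hpos
    exact lt_irrefl _ hpos
  -- conclusion
  rw [cond_apply hmE μ, cond_apply hmEn μ, hμE, hμEn, hμnum1, hμnum2,
    ennreal_cancel _ _ _ hb0 (measure_ne_top μ _),
    ennreal_cancel _ _ _ hbn0 (measure_ne_top μ _)]
end

section
/- Let N ≥ 1, n ≥ 0 and 0 < i ≤ N, and assume ℙ(A_N(n) = i) > 0 (equivalently p_i p̃_{N−i} > 0). Then the transition probabilities of the argmin chain from state i are ℙ(A_N(n+1) = N | A_N(n) = i) = 1 − p̃_{N+1−i}/p̃_{N−i} and ℙ(A_N(n+1) = i−1 | A_N(n) = i) = p̃_{N+1−i}/p̃_{N−i}; in particular the chain can only move from i to i−1 or to N. -/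
open MeasureTheory ProbabilityTheory Finset
open scoped Classical ProbabilityTheory

namespace AMAux

/-! ### Deterministic lemmas about the argmin chain -/

lemma walkSum_add {Ω : Type*} (X : ℕ → Ω → ℝ) (s k : ℕ) (ω : Ω) :
    walkSum X (s + k) ω = walkSum X s ω + ∑ j ∈ Finset.range k, X (s + 1 + j) ω := by
  rw [walkSum, walkSum, Finset.sum_range_add]
  congr 1
  exact Finset.sum_congr rfl fun x _ => by rw [show s + x + 1 = s + 1 + x by omega]

lemma argmin_eq_iff {Ω : Type*} (X : ℕ → Ω → ℝ) (N n i : ℕ) (hi : i ≤ N) (ω : Ω) :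
    argminChain X N n ω = i ↔
      (∀ k ≤ N, walkSum X (n + i) ω ≤ walkSum X (n + k) ω) ∧
      (∀ k, i < k → k ≤ N → walkSum X (n + i) ω < walkSum X (n + k) ω) := by
  set F := ((Finset.range (N + 1)).filter
    (fun i => ∀ k ∈ Finset.range (N + 1), walkSum X (n + i) ω ≤ walkSum X (n + k) ω)) with hF
  have hmemF : ∀ j, j ∈ F ↔ j ≤ N ∧ ∀ k ≤ N, walkSum X (n + j) ω ≤ walkSum X (n + k) ω := by
    intro j
    simp only [hF, Finset.mem_filter, Finset.mem_range, Nat.lt_succ_iff]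
  have hne : F.Nonempty := by
    obtain ⟨a, ha, hmin⟩ := Finset.exists_min_image (Finset.range (N + 1))
      (fun k => walkSum X (n + k) ω) ⟨0, by simp⟩
    exact ⟨a, (hmemF a).2 ⟨Nat.lt_succ_iff.mp (Finset.mem_range.mp ha),
      fun k hk => hmin k (Finset.mem_range.mpr (Nat.lt_succ_iff.mpr hk))⟩⟩
  constructor
  · intro h
    rw [argminChain, ← hF] at h
    have hiF : i ∈ F := by
      obtain ⟨b, hb, hmax⟩ := Finset.exists_max_image F id hne
      have hsb : F.sup id = b :=
        le_antisymm (Finset.sup_le hmax) (Finset.le_sup (f := id) hb)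
      have hib : b = i := by rw [← h, hsb]
      rwa [hib] at hb
    obtain ⟨hiN', h1⟩ := (hmemF i).1 hiF
    refine ⟨h1, fun k hik hkN => ?_⟩
    by_contra hcon
    push_neg at hcon
    have hkF : k ∈ F := (hmemF k).2 ⟨hkN, fun k' hk' => le_trans hcon (h1 k' hk')⟩
    have hki : id k ≤ i := h ▸ Finset.le_sup (f := id) hkF
    simp only [id] at hki
    omega
  · rintro ⟨h1, h2⟩
    have hiF : i ∈ F := (hmemF i).2 ⟨hi, h1⟩
    rw [argminChain, ← hF]
    refine le_antisymm (Finset.sup_le fun j hj => ?_) (Finset.le_sup (f := id) hiF)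
    by_contra hcon
    push_neg at hcon
    obtain ⟨hjN, hj1⟩ := (hmemF j).1 hj
    exact absurd (hj1 i hi) (not_le.mpr (h2 j hcon hjN))

lemma step_to_N {Ω : Type*} {X : ℕ → Ω → ℝ} {N n i : ℕ} {ω : Ω} (hiN : i ≤ N)
    (h : argminChain X N n ω = i) (hle : walkSum X (n + N + 1) ω ≤ walkSum X (n + i) ω) :
    argminChain X N (n + 1) ω = N := by
  obtain ⟨h1, _h2⟩ := (argmin_eq_iff X N n i hiN ω).1 h
  rw [argmin_eq_iff X N (n + 1) N le_rfl ω]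
  refine ⟨fun k hk => ?_, fun k hk1 hk2 => by omega⟩
  rcases eq_or_lt_of_le hk with rfl | hlt
  · exact le_rfl
  · rw [show n + 1 + N = n + N + 1 by omega, show n + 1 + k = n + (k + 1) by omega]
    exact hle.trans (h1 (k + 1) (by omega))

lemma step_to_pred {Ω : Type*} {X : ℕ → Ω → ℝ} {N n i : ℕ} {ω : Ω} (hi0 : 0 < i) (hiN : i ≤ N)
    (h : argminChain X N n ω = i) (hgt : walkSum X (n + i) ω < walkSum X (n + N + 1) ω) :
    argminChain X N (n + 1) ω = i - 1 := by
  obtain ⟨h1, h2⟩ := (argmin_eq_iff X N n i hiN ω).1 h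
  rw [argmin_eq_iff X N (n + 1) (i - 1) (by omega) ω]
  have e : n + 1 + (i - 1) = n + i := by omega
  constructor
  · intro k hk
    rw [e]
    rcases eq_or_lt_of_le hk with rfl | hlt
    · rw [show n + 1 + k = n + k + 1 by omega]
      exact le_of_lt hgt
    · rw [show n + 1 + k = n + (k + 1) by omega]
      exact h1 (k + 1) (by omega)
  · intro k hk1 hk2
    rw [e]
    rcases eq_or_lt_of_le hk2 with rfl | hlt
    · rw [show n + 1 + k = n + k + 1 by omega]
      exact hgt
    · rw [show n + 1 + k = n + (k + 1) by omega]
      exact h2 (k + 1) (by omega) (by omega)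

/-! ### Tuple partial sums and the relevant measurable sets -/

noncomputable def psum (m : ℕ) (y : Fin m → ℝ) (r : ℕ) : ℝ :=
  ∑ j : Fin m, if (j : ℕ) < r then y j else 0

lemma measurable_psum (m r : ℕ) : Measurable (fun y : Fin m → ℝ => psum m y r) := by
  apply Finset.measurable_sum
  intro j _
  by_cases h : (j : ℕ) < r
  · simpa [h] using (measurable_pi_apply j)
  · simpa [h] using (measurable_const : Measurable fun _ : Fin m → ℝ => (0:ℝ))

lemma psum_eq (m : ℕ) (f : ℕ → ℝ) {k : ℕ} (hk : k ≤ m) :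
    psum m (fun j => f j) k = ∑ j ∈ Finset.range k, f j := by
  rw [psum, Fin.sum_univ_eq_sum_range (fun a => if a < k then f a else 0) m,
    ← Finset.sum_filter]
  congr 1
  ext a
  simp only [Finset.mem_filter, Finset.mem_range]
  omega

lemma psum_block {Ω : Type*} (X : ℕ → Ω → ℝ) (s m : ℕ) (ω : Ω) {k : ℕ} (hk : k ≤ m) :
    psum m (fun j : Fin m => X (s + 1 + (j : ℕ)) ω) k
      = walkSum X (s + k) ω - walkSum X s ω := by
  rw [walkSum_add X s k ω, psum_eq m (fun a => X (s + 1 + a) ω) hk]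
  ring

/-- the set of tuples whose first `b` partial sums are positive -/
def posSet (m b : ℕ) : Set (Fin m → ℝ) :=
  {y | ∀ r ∈ Finset.Icc 1 b, 0 < psum m y r}

lemma measurableSet_posSet (m b : ℕ) : MeasurableSet (posSet m b) := by
  have h : posSet m b = ⋂ r ∈ Finset.Icc 1 b, {y : Fin m → ℝ | 0 < psum m y r} := by
    ext y; simp [posSet]
  rw [h]
  exact MeasurableSet.biInter (Finset.Icc 1 b).countable_toSet fun r _ =>
    measurableSet_lt measurable_const (measurable_psum m r)

lemma posSet_mono (m : ℕ) {b b' : ℕ} (h : b ≤ b') : posSet m b' ⊆ posSet m b :=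
  fun y hy r hr => hy r (Finset.mem_Icc.mpr ⟨(Finset.mem_Icc.mp hr).1,
    le_trans (Finset.mem_Icc.mp hr).2 h⟩)

lemma mem_posSet_iff {Ω : Type*} (X : ℕ → Ω → ℝ) (s m b : ℕ) (hb : b ≤ m) (ω : Ω) :
    ((fun j : Fin m => X (s + 1 + (j : ℕ)) ω) ∈ posSet m b)
      ↔ ∀ k, 0 < k → k ≤ b → walkSum X s ω < walkSum X (s + k) ω := by
  simp only [posSet, Set.mem_setOf_eq, Finset.mem_Icc]
  constructor
  · intro h k hk1 hk2
    have := h k ⟨hk1, hk2⟩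
    rw [psum_block X s m ω (le_trans hk2 hb)] at this
    linarith
  · intro h r hr
    rw [psum_block X s m ω (le_trans hr.2 hb)]
    have := h r hr.1 hr.2
    linarith

/-- the set of tuples whose last partial sum is minimal among the first `i` partial sums -/
def minSet (i : ℕ) : Set (Fin i → ℝ) :=
  {y | ∀ k ≤ i, psum i y i ≤ psum i y k}

lemma measurableSet_minSet (i : ℕ) : MeasurableSet (minSet i) := by
  have h : minSet i = ⋂ k ∈ Finset.range (i+1), {y : Fin i → ℝ | psum i y i ≤ psum i y k} := by
    ext y; simp only [minSet, Set.mem_setOf_eq, Set.mem_iInter, Finset.mem_range,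
      Nat.lt_succ_iff]
  rw [h]
  exact MeasurableSet.biInter (Finset.range (i+1)).countable_toSet fun k _ =>
    measurableSet_le (measurable_psum i i) (measurable_psum i k)

lemma mem_minSet_iff {Ω : Type*} (X : ℕ → Ω → ℝ) (s i : ℕ) (ω : Ω) :
    ((fun j : Fin i => X (s + 1 + (j : ℕ)) ω) ∈ minSet i)
      ↔ ∀ k ≤ i, walkSum X (s + i) ω ≤ walkSum X (s + k) ω := by
  simp only [minSet, Set.mem_setOf_eq]
  constructor
  · intro h k hk
    have := h k hk
    rw [psum_block X s i ω le_rfl, psum_block X s i ω hk] at this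
    linarith
  · intro h k hk
    rw [psum_block X s i ω le_rfl, psum_block X s i ω hk]
    have := h k hk
    linarith

/-! ### Probabilistic lemmas -/

variable {Ω : Type*} [MeasurableSpace Ω] (μ : MeasureTheory.Measure Ω) [IsProbabilityMeasure μ]
  (X : ℕ → Ω → ℝ)

/-- law of a block of `m` consecutive steps starting after time `s`. -/
lemma map_block (hmeas : ∀ i, Measurable (X i))
    (hindep : iIndepFun X μ)
    (hident : ∀ i, IdentDistrib (X i) (X 1) μ μ) (s m : ℕ) :
    μ.map (fun ω (j : Fin m) => X (s + 1 + (j : ℕ)) ω)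
      = Measure.pi (fun _ : Fin m => μ.map (X 1)) := by
  have hν : IsProbabilityMeasure (μ.map (X 1)) :=
    Measure.isProbabilityMeasure_map (hmeas 1).aemeasurable
  have hΦ : Measurable (fun ω (j : Fin m) => X (s + 1 + (j : ℕ)) ω) :=
    measurable_pi_lambda _ fun j => hmeas _
  refine (Measure.pi_eq fun t ht => ?_).symm
  rw [Measure.map_apply hΦ (MeasurableSet.univ_pi ht)]
  set e : Fin m → ℕ := fun j => s + 1 + (j : ℕ) with he
  have einj : Function.Injective e := by
    intro a b hab
    simp only [he] at hab
    exact Fin.ext (by omega)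
  set sets : ℕ → Set ℝ := fun k =>
    if h : k - (s+1) < m ∧ s + 1 ≤ k then t ⟨k - (s+1), h.1⟩ else Set.univ with hsets
  have hsete : ∀ j : Fin m, sets (e j) = t j := by
    intro j
    have hjm := j.isLt
    have h : e j - (s+1) < m ∧ s + 1 ≤ e j := ⟨by simp only [he]; omega, by simp only [he]; omega⟩
    simp only [hsets]
    rw [dif_pos h]
    have hje : (⟨e j - (s+1), h.1⟩ : Fin m) = j := Fin.ext (by simp only [he]; omega)
    rw [hje]
  have hmeas_sets : ∀ k, MeasurableSet (sets k) := by
    intro k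
    by_cases hk : k - (s+1) < m ∧ s + 1 ≤ k
    · simp only [hsets]
      rw [dif_pos hk]
      exact ht _
    · simp only [hsets]
      rw [dif_neg hk]
      exact MeasurableSet.univ
  have key := hindep.measure_inter_preimage_eq_mul
    (S := Finset.image e Finset.univ) (sets := sets) (fun k _ => hmeas_sets k)
  have hLHS : (⋂ k ∈ Finset.image e Finset.univ, X k ⁻¹' sets k)
      = (fun ω (j : Fin m) => X (s + 1 + (j : ℕ)) ω) ⁻¹' (Set.univ.pi t) := by
    ext ω
    simp only [Set.mem_iInter, Finset.mem_image, Finset.mem_univ, true_and,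
      Set.mem_preimage, Set.mem_pi, Set.mem_univ, forall_true_left]
    constructor
    · intro h j
      have := h (e j) ⟨j, rfl⟩
      rwa [hsete j] at this
    · rintro h k ⟨j, rfl⟩
      rw [hsete j]
      exact h j
  rw [hLHS] at key
  rw [key, Finset.prod_image (fun a _ b _ h => einj h)]
  refine Finset.prod_congr rfl fun j _ => ?_
  rw [hsete j, ← (hident (e j)).map_eq, Measure.map_apply (hmeas (e j)) (ht j)]

omit [IsProbabilityMeasure μ] in
lemma indep_blocks (hmeas : ∀ i, Measurable (X i))
    (hindep : iIndepFun X μ) (n i m : ℕ) :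
    IndepFun (fun ω (j : Fin i) => X (n + 1 + (j : ℕ)) ω)
      (fun ω (j : Fin m) => X (n + i + 1 + (j : ℕ)) ω) μ := by
  have h := hindep.indepFun_finset (Finset.Icc (n+1) (n+i)) (Finset.Icc (n+i+1) (n+i+m))
    (by
      rw [Finset.disjoint_left]
      intro a ha hb
      rw [Finset.mem_Icc] at ha hb
      omega) hmeas
  have hg1 : Measurable (fun (v : (Finset.Icc (n+1) (n+i) : Finset ℕ) → ℝ) (j : Fin i) =>
      v ⟨n + 1 + (j : ℕ), by simp [Finset.mem_Icc]; omega⟩) :=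
    measurable_pi_lambda _ fun j => measurable_pi_apply _
  have hg2 : Measurable (fun (v : (Finset.Icc (n+i+1) (n+i+m) : Finset ℕ) → ℝ) (j : Fin m) =>
      v ⟨n + i + 1 + (j : ℕ), by simp [Finset.mem_Icc]; omega⟩) :=
    measurable_pi_lambda _ fun j => measurable_pi_apply _
  exact h.comp hg1 hg2

end AMAux

open AMAux in
/-- Transition probabilities of the argmin chain from a state `0 < i ≤ N`:
the chain moves to `N` with probability `1 - p̃_{N+1-i}/p̃_{N-i}`, to `i-1` with probability
`p̃_{N+1-i}/p̃_{N-i}`, and to no other state. -/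
theorem argminChain_transition_from_pos
    {Ω : Type*} [MeasurableSpace Ω] (μ : MeasureTheory.Measure Ω) [IsProbabilityMeasure μ]
    (X : ℕ → Ω → ℝ) (hmeas : ∀ i, Measurable (X i))
    (hindep : iIndepFun X μ)
    (hident : ∀ i, IdentDistrib (X i) (X 1) μ μ)
    (N : ℕ) (hN : 1 ≤ N) (n i : ℕ) (hi0 : 0 < i) (hiN : i ≤ N)
    (hpos : 0 < μ {ω | argminChain X N n ω = i}) :
    ((μ[|{ω | argminChain X N n ω = i}]) {ω | argminChain X N (n + 1) ω = N}).toReal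
        = 1 - stayPos μ X (N + 1 - i) / stayPos μ X (N - i)
    ∧ ((μ[|{ω | argminChain X N n ω = i}]) {ω | argminChain X N (n + 1) ω = i - 1}).toReal
        = stayPos μ X (N + 1 - i) / stayPos μ X (N - i)
    ∧ ∀ j : ℕ, j ≠ i - 1 → j ≠ N →
        ((μ[|{ω | argminChain X N n ω = i}]) {ω | argminChain X N (n + 1) ω = j}).toReal = 0 := by
  set m := N + 1 - i with hm
  set Φ1 : Ω → (Fin i → ℝ) := fun ω j => X (n + 1 + (j : ℕ)) ω with hΦ1
  set Φ2 : Ω → (Fin m → ℝ) := fun ω j => X (n + i + 1 + (j : ℕ)) ω with hΦ2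
  set Φ0 : Ω → (Fin m → ℝ) := fun ω j => X (0 + 1 + (j : ℕ)) ω with hΦ0
  have hΦ1m : Measurable Φ1 := measurable_pi_lambda _ fun j => hmeas _
  have hΦ2m : Measurable Φ2 := measurable_pi_lambda _ fun j => hmeas _
  have hΦ0m : Measurable Φ0 := measurable_pi_lambda _ fun j => hmeas _
  set EB : Set Ω := Φ1 ⁻¹' minSet i with hEB
  set EC : ℕ → Set Ω := fun b => Φ2 ⁻¹' posSet m b with hEC
  -- pointwise characterizations
  have hEBc : ∀ ω, ω ∈ EB ↔ ∀ k ≤ i, walkSum X (n + i) ω ≤ walkSum X (n + k) ω := by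
    intro ω
    exact mem_minSet_iff X n i ω
  have hECc : ∀ b, b ≤ m → ∀ ω : Ω,
      (ω ∈ EC b ↔ ∀ k, i < k → k ≤ i + b → walkSum X (n + i) ω < walkSum X (n + k) ω) := by
    intro b hb ω
    rw [hEC]
    simp only [Set.mem_preimage]
    rw [mem_posSet_iff X (n + i) m b hb ω]
    constructor
    · intro h k hk1 hk2
      have := h (k - i) (by omega) (by omega)
      rwa [show n + i + (k - i) = n + k by omega] at this
    · intro h k hk1 hk2
      have := h (i + k) (by omega) (by omega)
      rwa [show n + (i + k) = n + i + k by omega] at this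
  -- event identities
  have hE : {ω | argminChain X N n ω = i} = EB ∩ EC (N - i) := by
    ext ω
    rw [Set.mem_setOf_eq, argmin_eq_iff X N n i hiN ω, Set.mem_inter_iff,
      hEBc ω, hECc (N - i) (by omega) ω]
    constructor
    · rintro ⟨h1, h2⟩
      exact ⟨fun k hk => h1 k (le_trans hk hiN), fun k hk1 hk2 => h2 k hk1 (by omega)⟩
    · rintro ⟨h1, h2⟩
      refine ⟨fun k hk => ?_, fun k hk1 hk2 => h2 k hk1 (by omega)⟩
      rcases le_or_gt k i with h | h
      · exact h1 k h
      · exact le_of_lt (h2 k h (by omega))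
  have hA1 : {ω | argminChain X N n ω = i} ∩ {ω | argminChain X N (n + 1) ω = i - 1}
      = EB ∩ EC m := by
    ext ω
    simp only [Set.mem_inter_iff, Set.mem_setOf_eq]
    constructor
    · rintro ⟨h1, h2⟩
      have hgt : walkSum X (n + i) ω < walkSum X (n + N + 1) ω := by
        by_contra hcon
        push_neg at hcon
        have := step_to_N hiN h1 hcon
        omega
      have hω : ω ∈ EB ∩ EC (N - i) := by rw [← hE]; exact h1
      refine ⟨hω.1, (hECc m le_rfl ω).2 ?_⟩
      intro k hk1 hk2
      rcases eq_or_lt_of_le hk2 with rfl | hlt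
      · rw [show n + (i + m) = n + N + 1 by omega]
        exact hgt
      · exact ((hECc (N - i) (by omega) ω).1 hω.2) k hk1 (by omega)
    · rintro ⟨h1, h2⟩
      have hωE : argminChain X N n ω = i := by
        have hmem : ω ∈ EB ∩ EC (N - i) := ⟨h1, posSet_mono m (by omega) h2⟩
        rw [← hE] at hmem
        exact hmem
      have hgt : walkSum X (n + i) ω < walkSum X (n + N + 1) ω := by
        have := ((hECc m le_rfl ω).1 h2) (N + 1) (by omega) (by omega)
        rwa [show n + (N + 1) = n + N + 1 by omega] at this
      exact ⟨hωE, step_to_pred hi0 hiN hωE hgt⟩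
  have hA2 : {ω | argminChain X N n ω = i} ∩ {ω | argminChain X N (n + 1) ω = N}
      = (EB ∩ EC (N - i)) \ (EB ∩ EC m) := by
    ext ω
    simp only [Set.mem_inter_iff, Set.mem_setOf_eq, Set.mem_diff]
    constructor
    · rintro ⟨h1, h2⟩
      have hmem : ω ∈ EB ∩ EC (N - i) := by rw [← hE]; exact h1
      refine ⟨hmem, fun hcon => ?_⟩
      have hmem2 : ω ∈ {ω | argminChain X N n ω = i} ∩ {ω | argminChain X N (n + 1) ω = i - 1} := by
        rw [hA1]; exact hcon
      have h2' : argminChain X N (n + 1) ω = i - 1 := hmem2.2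
      omega
    · rintro ⟨h1, h2⟩
      have hωE : argminChain X N n ω = i := by
        have hmem : ω ∈ EB ∩ EC (N - i) := ⟨h1.1, h1.2⟩
        rw [← hE] at hmem
        exact hmem
      have hle : walkSum X (n + N + 1) ω ≤ walkSum X (n + i) ω := by
        by_contra hcon
        push_neg at hcon
        refine h2 ⟨h1.1, (hECc m le_rfl ω).2 fun k hk1 hk2 => ?_⟩
        rcases eq_or_lt_of_le hk2 with rfl | hlt
        · rwa [show n + (i + m) = n + N + 1 by omega]
        · exact ((hECc (N - i) (by omega) ω).1 h1.2) k hk1 (by omega)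
      exact ⟨hωE, step_to_N hiN hωE hle⟩
  have hA3 : ∀ j : ℕ, j ≠ i - 1 → j ≠ N →
      {ω | argminChain X N n ω = i} ∩ {ω | argminChain X N (n + 1) ω = j} = ∅ := by
    intro j hj1 hj2
    ext ω
    simp only [Set.mem_inter_iff, Set.mem_setOf_eq, Set.mem_empty_iff_false, iff_false,
      not_and]
    intro h1 h2
    rcases le_or_gt (walkSum X (n + N + 1) ω) (walkSum X (n + i) ω) with h | h
    · have := step_to_N hiN h1 h
      omega
    · have := step_to_pred hi0 hiN h1 h
      omega
  -- measures
  have hmul : ∀ b, μ (EB ∩ EC b) = μ EB * μ (EC b) := fun b =>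
    (indep_blocks μ X hmeas hindep n i m).measure_inter_preimage_eq_mul
      (minSet i) (posSet m b) (measurableSet_minSet i) (measurableSet_posSet m b)
  have hlaw : ∀ b, μ (EC b) = μ (Φ0 ⁻¹' posSet m b) := by
    intro b
    rw [hEC, ← Measure.map_apply hΦ2m (measurableSet_posSet m b),
      ← Measure.map_apply hΦ0m (measurableSet_posSet m b)]
    have h2 := map_block μ X hmeas hindep hident (n + i) m
    have h0 := map_block μ X hmeas hindep hident 0 m
    rw [hΦ2, hΦ0, h2, h0]
  have hstay : ∀ b, b ≤ m →
      μ (Φ0 ⁻¹' posSet m b) = μ {ω | ∀ k ∈ Finset.Icc 1 b, 0 < walkSum X k ω} := by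
    intro b hb
    congr 1
    ext ω
    rw [Set.mem_preimage, hΦ0, mem_posSet_iff X 0 m b hb ω]
    have h0 : walkSum X 0 ω = 0 := by simp [walkSum]
    constructor
    · intro h k hk
      rw [Finset.mem_Icc] at hk
      have := h k (by omega) hk.2
      rwa [h0, show 0 + k = k by omega] at this
    · intro h k hk1 hk2
      rw [h0, show 0 + k = k by omega]
      exact h k (Finset.mem_Icc.mpr ⟨hk1, hk2⟩)
  -- numeric values
  have hstayC : stayPos μ X (N - i) = (μ (EC (N - i))).toReal := by
    rw [stayPos, hlaw, hstay (N - i) (by omega)]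
  have hstayC' : stayPos μ X (N + 1 - i) = (μ (EC m)).toReal := by
    rw [stayPos, hlaw, hstay m le_rfl, hm]
  have hEmeas : MeasurableSet {ω | argminChain X N n ω = i} := by
    rw [hE]
    exact (hΦ1m (measurableSet_minSet i)).inter (hΦ2m (measurableSet_posSet m (N - i)))
  have hcc' : μ (EC m) ≤ μ (EC (N - i)) := by
    rw [hEC]
    exact measure_mono (Set.preimage_mono (posSet_mono m (by omega)))
  have hEμ : μ {ω | argminChain X N n ω = i} = μ EB * μ (EC (N - i)) := by
    rw [hE, hmul]
  -- positivity / finiteness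
  have haz : μ EB ≠ 0 := by
    intro h
    rw [hEμ, h, zero_mul] at hpos
    exact lt_irrefl _ hpos
  have hcz : μ (EC (N - i)) ≠ 0 := by
    intro h
    rw [hEμ, h, mul_zero] at hpos
    exact lt_irrefl _ hpos
  have hat : μ EB ≠ ⊤ := measure_ne_top μ _
  have hct : μ (EC (N - i)) ≠ ⊤ := measure_ne_top μ _
  have hc't : μ (EC m) ≠ ⊤ := measure_ne_top μ _
  have haR : 0 < (μ EB).toReal := ENNReal.toReal_pos haz hat
  have hcR : 0 < (μ (EC (N - i))).toReal := ENNReal.toReal_pos hcz hct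
  -- the three conditional probabilities
  refine ⟨?_, ?_, ?_⟩
  · rw [ProbabilityTheory.cond_apply hEmeas, hA2]
    rw [measure_diff (Set.inter_subset_inter_right EB
        (Set.preimage_mono (posSet_mono m (by omega))))
      (((hΦ1m (measurableSet_minSet i)).inter (hΦ2m (measurableSet_posSet m m))).nullMeasurableSet)
      (by rw [hmul]; exact ENNReal.mul_ne_top hat hc't)]
    rw [hmul, hmul, hEμ]
    rw [ENNReal.toReal_mul, ENNReal.toReal_inv, ENNReal.toReal_sub_of_le
      (mul_le_mul_right hcc' _) (ENNReal.mul_ne_top hat hct)]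
    rw [ENNReal.toReal_mul, ENNReal.toReal_mul, hstayC, hstayC']
    field_simp
  · rw [ProbabilityTheory.cond_apply hEmeas, hA1, hmul, hEμ]
    rw [ENNReal.toReal_mul, ENNReal.toReal_inv, ENNReal.toReal_mul, ENNReal.toReal_mul,
      hstayC, hstayC']
    field_simp
  · intro j hj1 hj2
    rw [ProbabilityTheory.cond_apply hEmeas, hA3 j hj1 hj2, measure_empty, mul_zero]
    simp
end

section
/- Let θ be a real number and N ≥ 1, and set p_n := (θ)_{n↑}/n! for n ≥ 0. Then Σ_{j=0}^{N−1} p_j p_{N−j} − Σ_{j=0}^{N−1} p_{j+1} p_{N−j} = [ (N + 2θ − 1)(θ)_{N↑} + (1 − 2θ)(2θ)_{N↑} ] / (N+1)!. -/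
open MeasureTheory ProbabilityTheory Finset
open scoped Classical ProbabilityTheory

lemma poch_zero (θ : ℝ) : poch θ 0 = 1 := by simp [poch]

lemma poch_succ (θ : ℝ) (n : ℕ) : poch θ (n + 1) = poch θ n * (θ + n) := by
  simp [poch, Finset.prod_range_succ]

lemma vand (θ : ℝ) (N : ℕ) :
    ∑ j ∈ Finset.range (N + 1), (N.choose j : ℝ) * poch θ j * poch θ (N - j)
      = poch (2 * θ) N := by
  induction N with
  | zero => simp [poch]
  | succ N ih =>
    rw [Finset.sum_range_succ']
    simp only [Nat.succ_sub_succ, Nat.sub_zero, Nat.choose_zero_right, Nat.cast_one, one_mul,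
      poch_zero, mul_one]
    have hsplit : ∑ j ∈ Finset.range (N + 1),
        ((N + 1).choose (j + 1) : ℝ) * poch θ (j + 1) * poch θ (N - j)
        = (∑ j ∈ Finset.range (N + 1), (N.choose j : ℝ) * poch θ (j + 1) * poch θ (N - j))
          + ∑ j ∈ Finset.range (N + 1), (N.choose (j + 1) : ℝ) * poch θ (j + 1) * poch θ (N - j) := by
      rw [← Finset.sum_add_distrib]
      refine Finset.sum_congr rfl fun j _ => ?_
      rw [Nat.choose_succ_succ]
      push_cast
      ring
    have hB : (∑ j ∈ Finset.range (N + 1), (N.choose (j + 1) : ℝ) * poch θ (j + 1) * poch θ (N - j))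
        + poch θ (N + 1)
        = ∑ j ∈ Finset.range (N + 1), (N.choose j : ℝ) * poch θ j * poch θ (N + 1 - j) := by
      have e1 := Finset.sum_range_succ'
        (fun j => (N.choose j : ℝ) * poch θ j * poch θ (N + 1 - j)) (N + 1)
      have e2 := Finset.sum_range_succ
        (fun j => (N.choose j : ℝ) * poch θ j * poch θ (N + 1 - j)) (N + 1)
      simp only [Nat.succ_sub_succ, Nat.sub_zero, Nat.choose_zero_right, Nat.cast_one, one_mul,
        poch_zero, Nat.choose_succ_self, Nat.cast_zero, zero_mul, add_zero] at e1 e2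
      rw [e2] at e1
      linarith [e1]
    rw [hsplit, add_assoc, hB]
    have hterm : ∀ j ∈ Finset.range (N + 1),
        (N.choose j : ℝ) * poch θ (j + 1) * poch θ (N - j)
          + (N.choose j : ℝ) * poch θ j * poch θ (N + 1 - j)
        = (2 * θ + N) * ((N.choose j : ℝ) * poch θ j * poch θ (N - j)) := by
      intro j hj
      simp only [Finset.mem_range] at hj
      have h1 : N + 1 - j = (N - j) + 1 := by omega
      have h2 : ((N - j : ℕ) : ℝ) = (N : ℝ) - j := by
        push_cast [Nat.cast_sub (by omega : j ≤ N)]; ring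
      rw [h1, poch_succ, poch_succ, h2]
      ring
    rw [← Finset.sum_add_distrib, Finset.sum_congr rfl hterm, ← Finset.mul_sum, ih, poch_succ]
    ring

/-- The algebraic identity behind Lemma 2.3: with `p_n = (θ)_{n↑}/n!`,
`Σ_{j=0}^{N-1} p_j p_{N-j} - Σ_{j=0}^{N-1} p_{j+1} p_{N-j}
  = [(N + 2θ - 1)(θ)_{N↑} + (1 - 2θ)(2θ)_{N↑}] / (N+1)!`. -/
theorem pochhammer_sum_identity (θ : ℝ) (N : ℕ) (hN : 1 ≤ N) :
    (∑ j ∈ Finset.range N,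
        poch θ j / Nat.factorial j * (poch θ (N - j) / Nat.factorial (N - j)))
      - ∑ j ∈ Finset.range N,
        poch θ (j + 1) / Nat.factorial (j + 1) * (poch θ (N - j) / Nat.factorial (N - j))
      = (((N : ℝ) + 2 * θ - 1) * poch θ N + (1 - 2 * θ) * poch (2 * θ) N)
          / Nat.factorial (N + 1) := by
  have hfac : ∀ n : ℕ, (n.factorial : ℝ) ≠ 0 := fun n =>
    Nat.cast_ne_zero.mpr n.factorial_ne_zero
  have hterm1 : ∀ j ∈ Finset.range N,
      poch θ j / Nat.factorial j * (poch θ (N - j) / Nat.factorial (N - j))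
        = (N.choose j : ℝ) * poch θ j * poch θ (N - j) / Nat.factorial N := by
    intro j hj
    simp only [Finset.mem_range] at hj
    have h := Nat.choose_mul_factorial_mul_factorial (le_of_lt hj)
    have h' : (N.choose j : ℝ) * (Nat.factorial j) * (Nat.factorial (N - j))
        = Nat.factorial N := by exact_mod_cast h
    field_simp
    linear_combination (-(poch θ j * poch θ (N - j))) * h'
  have hterm2 : ∀ j ∈ Finset.range N,
      poch θ (j + 1) / Nat.factorial (j + 1) * (poch θ (N - j) / Nat.factorial (N - j))
        = ((N + 1).choose (j + 1) : ℝ) * poch θ (j + 1) * poch θ (N - j)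
            / Nat.factorial (N + 1) := by
    intro j hj
    simp only [Finset.mem_range] at hj
    have h := Nat.choose_mul_factorial_mul_factorial
      (Nat.succ_le_succ (le_of_lt hj) : j + 1 ≤ N + 1)
    rw [Nat.succ_sub_succ] at h
    have h' : (((N + 1).choose (j + 1) : ℝ)) * (Nat.factorial (j + 1)) * (Nat.factorial (N - j))
        = Nat.factorial (N + 1) := by exact_mod_cast h
    field_simp
    linear_combination (-(poch θ (j + 1) * poch θ (N - j))) * h'
  have hv1 : ∑ j ∈ Finset.range N, (N.choose j : ℝ) * poch θ j * poch θ (N - j)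
      = poch (2 * θ) N - poch θ N := by
    have h := vand θ N
    rw [Finset.sum_range_succ] at h
    simp only [Nat.choose_self, Nat.cast_one, one_mul, Nat.sub_self, poch_zero, mul_one] at h
    linarith
  have hv2 : ∑ j ∈ Finset.range N, ((N + 1).choose (j + 1) : ℝ) * poch θ (j + 1) * poch θ (N - j)
      = poch (2 * θ) (N + 1) - 2 * poch θ (N + 1) := by
    have h := vand θ (N + 1)
    rw [Finset.sum_range_succ'] at h
    simp only [Nat.succ_sub_succ, Nat.sub_zero, Nat.choose_zero_right, Nat.cast_one, one_mul,
      poch_zero, mul_one] at h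
    rw [Finset.sum_range_succ] at h
    simp only [Nat.choose_self, Nat.cast_one, one_mul, Nat.sub_self, poch_zero, mul_one] at h
    linarith
  rw [Finset.sum_congr rfl hterm1, Finset.sum_congr rfl hterm2, ← Finset.sum_div,
    ← Finset.sum_div, hv1, hv2, poch_succ θ N, poch_succ (2 * θ) N]
  have hN1 : ((N + 1).factorial : ℝ) = (N + 1) * N.factorial := by
    rw [Nat.factorial_succ]; push_cast; ring
  rw [hN1]
  have hNe : (N : ℝ) + 1 ≠ 0 := by positivity
  field_simp
  ring
end

section
/- (Feller) Let (S_n) be the simple symmetric random walk, i.e. the X_i are i.i.d. with ℙ(X_i = 1) = ℙ(X_i = −1) = 1/2. Then for every n ≥ 1: ℙ(S_1 > 0, …, S_{2n} > 0) = ℙ(S_1 > 0, …, S_{2n+1} > 0) = (1/2)_{n↑} / (2 · n!), and ℙ(S_1 ≥ 0, …, S_{2n−1} ≥ 0) = ℙ(S_1 ≥ 0, …, S_{2n} ≥ 0) = (1/2)_{n↑} / n!. -/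
open MeasureTheory ProbabilityTheory Finset
open scoped Classical ProbabilityTheory

namespace SSRW

def wstep (b : Bool) : ℤ := if b then 1 else -1

@[simp] lemma wstep_true : wstep true = 1 := rfl
@[simp] lemma wstep_false : wstep false = -1 := rfl

def gsum (w : ℕ → Bool) (k : ℕ) : ℤ := ∑ i ∈ Finset.range k, wstep (w i)

def consN (b : Bool) (w : ℕ → Bool) : ℕ → Bool := fun n => if n = 0 then b else w (n - 1)

def extF {m : ℕ} (v : Fin m → Bool) : ℕ → Bool := fun n => if h : n < m then v ⟨n, h⟩ else false

lemma gsum_zero (w : ℕ → Bool) : gsum w 0 = 0 := by simp [gsum]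

lemma gsum_consN (b : Bool) (w : ℕ → Bool) (k : ℕ) :
    gsum (consN b w) (k + 1) = wstep b + gsum w k := by
  unfold gsum
  rw [Finset.sum_range_succ']
  simp [consN, add_comm]

lemma extF_cons {m : ℕ} (b : Bool) (w : Fin m → Bool) :
    extF (Fin.cons b w : Fin (m+1) → Bool) = consN b (extF w) := by
  funext n
  cases n with
  | zero => simp [extF, consN]
  | succ k =>
    simp only [consN, if_neg (Nat.succ_ne_zero k), Nat.add_sub_cancel]
    by_cases h : k < m
    · rw [extF, extF, dif_pos (show k + 1 < m + 1 by omega), dif_pos h]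
      have : (⟨k + 1, show k + 1 < m + 1 by omega⟩ : Fin (m+1)) = Fin.succ ⟨k, h⟩ := rfl
      rw [this, Fin.cons_succ]
    · rw [extF, extF, dif_neg (show ¬ (k + 1 < m + 1) by omega), dif_neg h]

/-- `Ok m a j w`: the walk started at height `a` with steps `w` stays `≥ 0` for the
first `m` steps and is at height `j` at time `m`. -/
def Ok (m a j : ℕ) (w : ℕ → Bool) : Prop :=
  (∀ k ≤ m, 0 ≤ (a : ℤ) + gsum w k) ∧ (a : ℤ) + gsum w m = j

noncomputable def cnt (m a j : ℕ) : ℕ :=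
  ((Finset.univ : Finset (Fin m → Bool)).filter (fun v => Ok m a j (extF v))).card

lemma cnt_zero (a j : ℕ) : cnt 0 a j = if a = j then 1 else 0 := by
  unfold cnt Ok
  split_ifs with h
  · rw [Finset.card_eq_one]
    refine ⟨(Fin.elim0 : Fin 0 → Bool), ?_⟩
    ext v
    simp only [Finset.mem_filter, Finset.mem_univ, true_and, Finset.mem_singleton]
    constructor
    · intro _; ext i; exact absurd i.2 (Nat.not_lt_zero _)
    · intro hv
      subst hv
      constructor
      · intro k hk
        rw [Nat.le_zero] at hk
        subst hk
        rw [gsum_zero]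
        positivity
      · rw [gsum_zero, h]; ring
  · rw [Finset.card_eq_zero]
    ext v
    simp only [Finset.mem_filter, Finset.mem_univ, true_and, Finset.notMem_empty, iff_false]
    rintro ⟨-, hend⟩
    rw [gsum_zero] at hend
    exact h (by exact_mod_cast hend)

lemma ok_cons_true (m a j : ℕ) (w : ℕ → Bool) :
    Ok (m+1) a j (consN true w) ↔ Ok m (a+1) j w := by
  unfold Ok
  constructor
  · rintro ⟨hnn, hend⟩
    refine ⟨fun k hk => ?_, ?_⟩
    · have := hnn (k+1) (by omega)
      rw [gsum_consN, wstep_true] at this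
      push_cast
      linarith
    · rw [gsum_consN, wstep_true] at hend
      push_cast
      linarith
  · rintro ⟨hnn, hend⟩
    refine ⟨fun k hk => ?_, ?_⟩
    · cases k with
      | zero => rw [gsum_zero]; positivity
      | succ k' =>
        rw [gsum_consN, wstep_true]
        have := hnn k' (by omega)
        push_cast at this ⊢
        linarith
    · rw [gsum_consN, wstep_true]
      push_cast at hend ⊢
      linarith

lemma ok_cons_false (m a j : ℕ) (ha : 1 ≤ a) (w : ℕ → Bool) :
    Ok (m+1) a j (consN false w) ↔ Ok m (a-1) j w := by
  unfold Ok
  have hc : ((a - 1 : ℕ) : ℤ) = (a : ℤ) - 1 := by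
    have : (1:ℕ) ≤ a := ha
    push_cast [this]
    ring
  constructor
  · rintro ⟨hnn, hend⟩
    refine ⟨fun k hk => ?_, ?_⟩
    · have := hnn (k+1) (by omega)
      rw [gsum_consN, wstep_false] at this
      rw [hc]; linarith
    · rw [gsum_consN, wstep_false] at hend
      rw [hc]; linarith
  · rintro ⟨hnn, hend⟩
    refine ⟨fun k hk => ?_, ?_⟩
    · cases k with
      | zero => rw [gsum_zero]; positivity
      | succ k' =>
        rw [gsum_consN, wstep_false]
        have := hnn k' (by omega)
        rw [hc] at this
        linarith
    · rw [gsum_consN, wstep_false]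
      rw [hc] at hend
      linarith

lemma ok_cons_false_zero (m j : ℕ) (w : ℕ → Bool) :
    ¬ Ok (m+1) 0 j (consN false w) := by
  rintro ⟨hnn, -⟩
  have := hnn 1 (by omega)
  rw [show (1:ℕ) = 0 + 1 from rfl, gsum_consN, gsum_zero, wstep_false] at this
  norm_num at this

/-- split the count of length-`m+1` walks by the first step -/
lemma cnt_succ (m a j : ℕ) :
    cnt (m+1) a j = cnt m (a+1) j + (if 1 ≤ a then cnt m (a-1) j else 0) := by
  classical
  unfold cnt
  have hsplit :
      ((Finset.univ : Finset (Fin (m+1) → Bool)).filter (fun v => Ok (m+1) a j (extF v))).card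
        = ((Finset.univ : Finset (Fin (m+1) → Bool)).filter
            (fun v => Ok (m+1) a j (extF v) ∧ v 0 = true)).card
          + ((Finset.univ : Finset (Fin (m+1) → Bool)).filter
            (fun v => Ok (m+1) a j (extF v) ∧ v 0 = false)).card := by
    rw [← Finset.card_union_of_disjoint]
    · congr 1
      ext v
      simp only [Finset.mem_filter, Finset.mem_union, Finset.mem_univ, true_and]
      cases hv : v 0 <;> tauto
    · rw [Finset.disjoint_filter]
      rintro v - ⟨-, h1⟩ ⟨-, h2⟩
      simp [h1] at h2
  rw [hsplit]
  congr 1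
  · -- first step up
    refine Finset.card_bij' (fun v _ => Fin.tail v) (fun w _ => Fin.cons true w)
      ?_ ?_ ?_ ?_
    · intro v hv
      simp only [Finset.mem_filter, Finset.mem_univ, true_and] at hv ⊢
      obtain ⟨hok, h0⟩ := hv
      have hv' : v = Fin.cons true (Fin.tail v) := by
        rw [← h0]; exact (Fin.cons_self_tail v).symm
      rw [hv', extF_cons, ok_cons_true] at hok
      exact hok
    · intro w hw
      simp only [Finset.mem_filter, Finset.mem_univ, true_and] at hw ⊢
      refine ⟨?_, by simp⟩
      rw [extF_cons, ok_cons_true]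
      exact hw
    · intro v hv
      simp only [Finset.mem_filter, Finset.mem_univ, true_and] at hv
      have h := Fin.cons_self_tail v
      rw [hv.2] at h
      exact h
    · intro w _
      simp
  · -- first step down
    by_cases ha : 1 ≤ a
    · rw [if_pos ha]
      refine Finset.card_bij' (fun v _ => Fin.tail v) (fun w _ => Fin.cons false w)
        ?_ ?_ ?_ ?_
      · intro v hv
        simp only [Finset.mem_filter, Finset.mem_univ, true_and] at hv ⊢
        obtain ⟨hok, h0⟩ := hv
        have hv' : v = Fin.cons false (Fin.tail v) := by
          rw [← h0]; exact (Fin.cons_self_tail v).symm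
        rw [hv', extF_cons, ok_cons_false m a j ha] at hok
        exact hok
      · intro w hw
        simp only [Finset.mem_filter, Finset.mem_univ, true_and] at hw ⊢
        refine ⟨?_, by simp⟩
        rw [extF_cons, ok_cons_false m a j ha]
        exact hw
      · intro v hv
        simp only [Finset.mem_filter, Finset.mem_univ, true_and] at hv
        have h := Fin.cons_self_tail v
        rw [hv.2] at h
        exact h
      · intro w _
        simp
    · rw [if_neg ha]
      have ha0 : a = 0 := Nat.eq_zero_of_not_pos ha
      subst ha0
      rw [Finset.card_eq_zero, Finset.filter_eq_empty_iff]
      intro v _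
      rintro ⟨hok, h0⟩
      have hv' : v = Fin.cons false (Fin.tail v) := by
        rw [← h0]; exact (Fin.cons_self_tail v).symm
      rw [hv', extF_cons] at hok
      exact ok_cons_false_zero m j _ hok

/-- closed form (reflection principle): number of nonneg walks of length `m` from `a` to `j` -/
def dd (m a j : ℕ) : ℤ :=
  if a ≤ m + j ∧ (m + j + a) % 2 = 0 then
    (Nat.choose m ((m + j - a) / 2) : ℤ) - Nat.choose m ((m + j + a) / 2 + 1)
  else 0

lemma dd_zero (a j : ℕ) : dd 0 a j = if a = j then 1 else 0 := by
  unfold dd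
  by_cases h : a = j
  · subst h
    rw [if_pos ⟨by omega, by omega⟩, if_pos rfl]
    have h1 : (0 + a - a) / 2 = 0 := by omega
    have h2 : Nat.choose 0 ((0 + a + a) / 2 + 1) = 0 := Nat.choose_eq_zero_of_lt (by omega)
    rw [h1, h2, Nat.choose_zero_right]
    simp
  · rw [if_neg h]
    by_cases hc : a ≤ 0 + j ∧ (0 + j + a) % 2 = 0
    · rw [if_pos hc]
      have e1 : Nat.choose 0 ((0 + j - a) / 2) = 0 := Nat.choose_eq_zero_of_lt (by omega)
      have e2 : Nat.choose 0 ((0 + j + a) / 2 + 1) = 0 := Nat.choose_eq_zero_of_lt (by omega)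
      rw [e1, e2]
      simp
    · rw [if_neg hc]

lemma dd_succ (m a j : ℕ) :
    dd (m+1) a j = dd m (a+1) j + (if 1 ≤ a then dd m (a-1) j else 0) := by
  unfold dd
  by_cases hpar : (m + 1 + j + a) % 2 = 0
  · -- parity holds
    rcases Nat.eq_zero_or_pos a with ha0 | ha
    · -- a = 0
      rw [if_neg (by omega : ¬ 1 ≤ a), if_pos ⟨by omega, by omega⟩,
        if_pos ⟨by omega, by omega⟩]
      have hmj : 1 ≤ m + j := by omega
      have e1 : (m + 1 + j - a) / 2 = (m + j - 1) / 2 + 1 := by omega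
      have e2 : (m + 1 + j + a) / 2 + 1 = (m + j - 1) / 2 + 2 := by omega
      have e3 : (m + j - (a + 1)) / 2 = (m + j - 1) / 2 := by omega
      have e4 : (m + j + (a + 1)) / 2 + 1 = (m + j - 1) / 2 + 2 := by omega
      rw [e1, e2, e3, e4, Nat.choose_succ_succ m ((m + j - 1) / 2),
        Nat.choose_succ_succ m ((m + j - 1) / 2 + 1)]
      push_cast
      ring
    · have ha1 : 1 ≤ a := ha
      rw [if_pos ha1]
      by_cases hb : a + 1 ≤ m + j
      · -- interior case
        rw [if_pos ⟨by omega, by omega⟩, if_pos ⟨by omega, by omega⟩,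
          if_pos ⟨by omega, by omega⟩]
        obtain ⟨s, hs⟩ : ∃ s, (m + j - (a + 1)) / 2 = s := ⟨_, rfl⟩
        obtain ⟨t, ht⟩ : ∃ t, (m + j + (a - 1)) / 2 = t := ⟨_, rfl⟩
        have e1 : (m + 1 + j - a) / 2 = s + 1 := by omega
        have e2 : (m + 1 + j + a) / 2 + 1 = t + 2 := by omega
        have e3 : (m + j + (a + 1)) / 2 + 1 = t + 2 := by omega
        have e4 : (m + j - (a - 1)) / 2 = s + 1 := by omega
        have e5 : (m + j + (a - 1)) / 2 + 1 = t + 1 := by omega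
        rw [e1, e2, e3, e4, e5, hs, Nat.choose_succ_succ m s, Nat.choose_succ_succ m (t+1)]
        push_cast
        ring
      · by_cases hc : a ≤ m + 1 + j
        · -- a = m + j + 1
          have haeq : a = m + j + 1 := by omega
          rw [if_pos ⟨by omega, by omega⟩, if_neg (by omega), if_pos ⟨by omega, by omega⟩]
          have e1 : (m + 1 + j - a) / 2 = 0 := by omega
          have e2 : Nat.choose (m+1) ((m + 1 + j + a) / 2 + 1) = 0 :=
            Nat.choose_eq_zero_of_lt (by omega)
          have e3 : (m + j - (a - 1)) / 2 = 0 := by omega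
          have e4 : Nat.choose m ((m + j + (a - 1)) / 2 + 1) = 0 :=
            Nat.choose_eq_zero_of_lt (by omega)
          rw [e1, e2, e3, e4, Nat.choose_zero_right, Nat.choose_zero_right]
          simp
        · -- a ≥ m + j + 3
          rw [if_neg (by omega), if_neg (by omega), if_neg (by omega)]
          simp
  · -- parity fails everywhere
    rw [if_neg (by omega)]
    rcases Nat.eq_zero_or_pos a with ha0 | ha
    · subst ha0
      rw [if_neg (by omega : ¬ (1:ℕ) ≤ 0), if_neg (by omega)]
      simp
    · have ha1 : 1 ≤ a := ha
      rw [if_pos ha1, if_neg (by omega), if_neg (by omega)]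
      simp



lemma cnt_eq_dd : ∀ m a j, (cnt m a j : ℤ) = dd m a j := by
  intro m
  induction m with
  | zero =>
    intro a j
    rw [cnt_zero, dd_zero]
    split_ifs <;> simp
  | succ m ih =>
    intro a j
    rw [cnt_succ, dd_succ, ← ih, ← ih]
    push_cast [apply_ite (fun x : ℕ => (x : ℤ))]
    split_ifs <;> simp [ih]

lemma gsum_le (w : ℕ → Bool) (k : ℕ) : gsum w k ≤ k := by
  induction k with
  | zero => simp [gsum]
  | succ k ih =>
    unfold gsum at *
    rw [Finset.sum_range_succ]
    have : wstep (w k) ≤ 1 := by cases w k <;> simp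
    push_cast
    linarith

/-- total number of sign vectors of length `m` whose walk stays `≥ 0` -/
noncomputable def tot (m : ℕ) : ℕ :=
  ((Finset.univ : Finset (Fin m → Bool)).filter (fun v => ∀ k ≤ m, 0 ≤ gsum (extF v) k)).card

lemma tot_eq_sum (m : ℕ) : tot m = ∑ j ∈ Finset.range (m+1), cnt m 0 j := by
  unfold tot
  rw [Finset.card_eq_sum_card_fiberwise
    (f := fun v : Fin m → Bool => (gsum (extF v) m).toNat) (t := Finset.range (m+1))]
  · apply Finset.sum_congr rfl
    intro j _
    unfold cnt
    rw [Finset.filter_filter]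
    congr 1
    ext v
    simp only [Finset.mem_filter, Finset.mem_univ, true_and]
    unfold Ok
    constructor
    · rintro ⟨hnn, hj⟩
      refine ⟨fun k hk => by simpa using hnn k hk, ?_⟩
      have h0 : 0 ≤ gsum (extF v) m := hnn m le_rfl
      rw [← hj, Int.toNat_of_nonneg h0]
      ring
    · rintro ⟨hnn, hj⟩
      have hnn' : ∀ k ≤ m, 0 ≤ gsum (extF v) k := fun k hk => by simpa using hnn k hk
      refine ⟨hnn', ?_⟩
      have : (gsum (extF v) m) = j := by
        have h0 : 0 ≤ gsum (extF v) m := hnn' m le_rfl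
        simpa using hj
      rw [this]
      simp [Int.toNat_natCast]
  · intro v hv
    simp only [Finset.mem_coe, Finset.mem_range]
    rw [Nat.lt_succ_iff, Int.toNat_le]
    exact gsum_le _ _

lemma sum_dd (m : ℕ) :
    ∑ j ∈ Finset.range (m+1), dd m 0 j = (Nat.choose m (m - m / 2) : ℤ) := by
  have h1 : ∑ j ∈ Finset.range (m+1), dd m 0 j
      = ∑ j ∈ (Finset.range (m+1)).filter (fun j => (m + j) % 2 = 0), dd m 0 j := by
    rw [Finset.sum_filter_of_ne]
    intro j _ hne
    by_contra hp
    apply hne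
    unfold dd
    rw [if_neg (by omega)]
  rw [h1]
  have h2 : ∑ j ∈ (Finset.range (m+1)).filter (fun j => (m + j) % 2 = 0), dd m 0 j
      = ∑ i ∈ Finset.range (m / 2 + 1),
          ((Nat.choose m (m + 1 - (i+1)) : ℤ) - Nat.choose m (m + 1 - i)) := by
    apply Finset.sum_nbij' (fun j => (m - j) / 2) (fun i => m - 2 * i)
    · intro j hj
      simp only [Finset.mem_filter, Finset.mem_range] at hj ⊢
      omega
    · intro i hi
      simp only [Finset.mem_filter, Finset.mem_range] at hi ⊢
      omega
    · intro j hj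
      simp only [Finset.mem_filter, Finset.mem_range] at hj
      omega
    · intro i hi
      simp only [Finset.mem_range] at hi
      omega
    · intro j hj
      simp only [Finset.mem_filter, Finset.mem_range] at hj
      unfold dd
      rw [if_pos ⟨by omega, by omega⟩]
      have e1 : (m + j - 0) / 2 = m + 1 - ((m - j) / 2 + 1) := by omega
      have e2 : (m + j + 0) / 2 + 1 = m + 1 - (m - j) / 2 := by omega
      rw [e1, e2]
  rw [h2, Finset.sum_range_sub (fun i => (Nat.choose m (m + 1 - i) : ℤ))]
  have e1 : m + 1 - (m / 2 + 1) = m - m / 2 := by omega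
  have e2 : Nat.choose m (m + 1 - 0) = 0 := Nat.choose_eq_zero_of_lt (by omega)
  rw [e1, e2]
  simp


def PosOk (m : ℕ) (w : ℕ → Bool) : Prop := ∀ k, 1 ≤ k → k ≤ m → 0 < gsum w k

lemma posok_cons_true (m : ℕ) (w : ℕ → Bool) :
    PosOk (m+1) (consN true w) ↔ ∀ k ≤ m, 0 ≤ gsum w k := by
  constructor
  · intro h k hk
    have := h (k+1) (by omega) (by omega)
    rw [gsum_consN, wstep_true] at this
    linarith
  · intro h k hk1 hkm
    cases k with
    | zero => omega
    | succ k' =>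
      rw [gsum_consN, wstep_true]
      have := h k' (by omega)
      linarith

lemma posok_cons_false (m : ℕ) (w : ℕ → Bool) : ¬ PosOk (m+1) (consN false w) := by
  intro h
  have := h 1 le_rfl (by omega)
  rw [show (1:ℕ) = 0+1 from rfl, gsum_consN, gsum_zero, wstep_false] at this
  norm_num at this

noncomputable def ptot (m : ℕ) : ℕ :=
  ((Finset.univ : Finset (Fin m → Bool)).filter (fun v => PosOk m (extF v))).card

lemma ptot_succ (m : ℕ) : ptot (m+1) = tot m := by
  classical
  unfold ptot tot
  have hsplit :
      ((Finset.univ : Finset (Fin (m+1) → Bool)).filter (fun v => PosOk (m+1) (extF v))).card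
        = ((Finset.univ : Finset (Fin (m+1) → Bool)).filter
            (fun v => PosOk (m+1) (extF v) ∧ v 0 = true)).card
          + ((Finset.univ : Finset (Fin (m+1) → Bool)).filter
            (fun v => PosOk (m+1) (extF v) ∧ v 0 = false)).card := by
    rw [← Finset.card_union_of_disjoint]
    · congr 1
      ext v
      simp only [Finset.mem_filter, Finset.mem_union, Finset.mem_univ, true_and]
      cases hv : v 0 <;> tauto
    · rw [Finset.disjoint_filter]
      rintro v - ⟨-, h1⟩ ⟨-, h2⟩
      simp [h1] at h2
  rw [hsplit]
  have hz : ((Finset.univ : Finset (Fin (m+1) → Bool)).filter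
      (fun v => PosOk (m+1) (extF v) ∧ v 0 = false)).card = 0 := by
    rw [Finset.card_eq_zero, Finset.filter_eq_empty_iff]
    intro v _
    rintro ⟨hok, h0⟩
    have hv' : v = Fin.cons false (Fin.tail v) := by
      rw [← h0]; exact (Fin.cons_self_tail v).symm
    rw [hv', extF_cons] at hok
    exact posok_cons_false m _ hok
  rw [hz, add_zero]
  refine Finset.card_bij' (fun v _ => Fin.tail v) (fun w _ => Fin.cons true w)
    ?_ ?_ ?_ ?_
  · intro v hv
    simp only [Finset.mem_filter, Finset.mem_univ, true_and] at hv ⊢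
    obtain ⟨hok, h0⟩ := hv
    have hv' : v = Fin.cons true (Fin.tail v) := by
      rw [← h0]; exact (Fin.cons_self_tail v).symm
    rw [hv', extF_cons, posok_cons_true] at hok
    exact hok
  · intro w hw
    simp only [Finset.mem_filter, Finset.mem_univ, true_and] at hw ⊢
    refine ⟨?_, by simp⟩
    rw [extF_cons, posok_cons_true]
    exact hw
  · intro v hv
    simp only [Finset.mem_filter, Finset.mem_univ, true_and] at hv
    have h := Fin.cons_self_tail v
    rw [hv.2] at h
    exact h
  · intro w _
    simp

lemma tot_val (m : ℕ) : (tot m : ℤ) = (Nat.choose m (m - m / 2) : ℤ) := by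
  rw [tot_eq_sum, ← sum_dd m]
  push_cast
  exact Finset.sum_congr rfl (fun j _ => cnt_eq_dd m 0 j)

lemma tot_val_nat (m : ℕ) : tot m = Nat.choose m (m - m / 2) := by
  exact_mod_cast tot_val m

def rstep (b : Bool) : ℝ := if b then 1 else -1

lemma rstep_inj {a b : Bool} (h : rstep a = rstep b) : a = b := by
  cases a <;> cases b <;> first | rfl | (exfalso; norm_num [rstep] at h)

lemma rstep_eq_cast (b : Bool) : rstep b = ((wstep b : ℤ) : ℝ) := by
  cases b <;> simp [rstep, wstep]

variable {Ω : Type*} [MeasurableSpace Ω] (μ : MeasureTheory.Measure Ω) [IsProbabilityMeasure μ]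
  (X : ℕ → Ω → ℝ)

/-- the atom of a sign pattern -/
def atom (m : ℕ) (v : Fin m → Bool) : Set Ω :=
  ⋂ i ∈ (Finset.range m).image (· + 1), X i ⁻¹' {rstep (extF v (i - 1))}

lemma mem_atom_iff (m : ℕ) (v : Fin m → Bool) (ω : Ω) :
    ω ∈ atom X m v ↔ ∀ i < m, X (i + 1) ω = rstep (extF v i) := by
  unfold atom
  simp only [Set.mem_iInter, Finset.mem_image, Finset.mem_range, Set.mem_preimage,
    Set.mem_singleton_iff]
  constructor
  · intro h i hi
    have := h (i + 1) ⟨i, hi, rfl⟩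
    simpa using this
  · rintro h i ⟨j, hj, rfl⟩
    simpa using h j hj

lemma atom_measurable (hmeas : ∀ i, Measurable (X i)) (m : ℕ) (v : Fin m → Bool) :
    MeasurableSet (atom X m v) := by
  apply Set.Finite.measurableSet_biInter (Finset.finite_toSet _)
  intro i _
  exact (hmeas i) (measurableSet_singleton _)

lemma atom_meas (hindep : iIndepFun X μ)
    (hstep : ∀ i, μ {ω | X i ω = 1} = 1 / 2 ∧ μ {ω | X i ω = -1} = 1 / 2)
    (m : ℕ) (v : Fin m → Bool) :
    μ (atom X m v) = (1 / 2 : ENNReal) ^ m := by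
  have key : μ (atom X m v)
      = ∏ i ∈ (Finset.range m).image (· + 1), μ (X i ⁻¹' {rstep (extF v (i - 1))}) :=
    hindep.measure_inter_preimage_eq_mul _ (fun i _ => measurableSet_singleton _)
  have hih : ∀ i, μ (X i ⁻¹' {rstep (extF v (i - 1))}) = 1 / 2 := by
    intro i
    have h1 : X i ⁻¹' {(1:ℝ)} = {ω | X i ω = 1} := rfl
    have h2 : X i ⁻¹' {(-1:ℝ)} = {ω | X i ω = -1} := rfl
    cases hb : extF v (i-1) <;> simp only [rstep, hb, if_true, if_false, Bool.false_eq_true]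
    · rw [h2, (hstep i).2]
    · rw [h1, (hstep i).1]
  rw [key, Finset.prod_congr rfl (fun i _ => hih i), Finset.prod_const,
    Finset.card_image_of_injective _ (fun a b h => by omega), Finset.card_range]

lemma atom_disjoint (m : ℕ) :
    Set.PairwiseDisjoint (Set.univ : Set (Fin m → Bool)) (atom X m) := by
  intro v _ v' _ hvv'
  rw [Function.onFun, Set.disjoint_left]
  intro ω hv hv'
  apply hvv'
  funext i
  rw [mem_atom_iff] at hv hv'
  have h1 := hv i.1 i.2
  have h2 := hv' i.1 i.2
  have he : extF v i.1 = extF v' i.1 := rstep_inj (h1 ▸ h2)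
  have : v ⟨i.1, i.2⟩ = v' ⟨i.1, i.2⟩ := by
    simpa [extF, dif_pos i.2] using he
  simpa using this

/-- the good set where all steps are `±1` -/
def goodSet (m : ℕ) : Set Ω := {ω | ∀ i < m, X (i+1) ω = 1 ∨ X (i+1) ω = -1}

lemma goodSet_ae (hmeas : ∀ i, Measurable (X i))
    (hstep : ∀ i, μ {ω | X i ω = 1} = 1 / 2 ∧ μ {ω | X i ω = -1} = 1 / 2)
    (m : ℕ) : μ (goodSet X m)ᶜ = 0 := by
  have hsub : (goodSet X m)ᶜ ⊆ ⋃ i ∈ Finset.range m, ({ω | X (i+1) ω = 1 ∨ X (i+1) ω = -1})ᶜ := by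
    intro ω hω
    simp only [goodSet, Set.mem_compl_iff, Set.mem_setOf_eq, not_forall] at hω
    obtain ⟨i, hi, hne⟩ := hω
    simp only [Set.mem_iUnion, Finset.mem_range]
    exact ⟨i, hi, hne⟩
  refine measure_mono_null hsub (le_antisymm ?_ zero_le)
  calc μ _ ≤ ∑ i ∈ Finset.range m, μ ({ω | X (i+1) ω = 1 ∨ X (i+1) ω = -1})ᶜ :=
        measure_biUnion_finset_le _ _
    _ = 0 := by
        apply Finset.sum_eq_zero
        intro i _
        have hone : μ ({ω | X (i+1) ω = 1} ∪ {ω | X (i+1) ω = -1}) = 1 := by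
          rw [measure_union ?hd
            (show MeasurableSet {ω | X (i+1) ω = -1} from
              (hmeas (i+1)) (measurableSet_singleton (-1:ℝ)))]
          · rw [(hstep (i+1)).1, (hstep (i+1)).2]
            exact ENNReal.add_halves 1
          case hd =>
            rw [Set.disjoint_left]
            intro ω h1 h2
            simp only [Set.mem_setOf_eq] at h1 h2
            rw [h1] at h2
            norm_num at h2
        have : {ω | X (i+1) ω = 1 ∨ X (i+1) ω = -1}
            = {ω | X (i+1) ω = 1} ∪ {ω | X (i+1) ω = -1} := rfl
        rw [this]
        have hm : MeasurableSet ({ω | X (i+1) ω = 1} ∪ {ω | X (i+1) ω = -1}) :=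
          ((hmeas (i+1)) (measurableSet_singleton (1:ℝ))).union
            ((hmeas (i+1)) (measurableSet_singleton (-1:ℝ)))
        rw [measure_compl hm (by simp)]
        rw [hone]
        simp

lemma mem_atom_of_good (m : ℕ) (ω : Ω) (hω : ω ∈ goodSet X m) :
    ω ∈ atom X m (fun i => decide (X (i.1+1) ω = 1)) := by
  rw [mem_atom_iff]
  intro i hi
  have hx := hω i hi
  have : extF (fun i : Fin m => decide (X (i.1+1) ω = 1)) i
      = decide (X (i+1) ω = 1) := by simp [extF, dif_pos hi]
  rw [this]
  rcases hx with h | h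
  · simp [h, rstep]
  · have hne : ¬ (X (i+1) ω = 1) := by rw [h]; norm_num
    simp [h, hne, rstep]

lemma walkSum_on_atom (m : ℕ) (v : Fin m → Bool) (ω : Ω) (hω : ω ∈ atom X m v)
    (k : ℕ) (hk : k ≤ m) : walkSum X k ω = ((gsum (extF v) k : ℤ) : ℝ) := by
  rw [mem_atom_iff] at hω
  unfold walkSum gsum
  push_cast
  apply Finset.sum_congr rfl
  intro i hi
  rw [Finset.mem_range] at hi
  rw [hω i (by omega), rstep_eq_cast]

/-- master lemma: the probability of an event determined by signs is the count over 2^m -/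
lemma meas_eq_count (hmeas : ∀ i, Measurable (X i))
    (hindep : iIndepFun X μ)
    (hstep : ∀ i, μ {ω | X i ω = 1} = 1 / 2 ∧ μ {ω | X i ω = -1} = 1 / 2)
    (m : ℕ) (Q : (Fin m → Bool) → Prop) (E : Set Ω)
    (hEQ : ∀ v ω, ω ∈ atom X m v → (ω ∈ E ↔ Q v)) :
    μ E = ((Finset.univ.filter Q).card : ENNReal) * (1 / 2 : ENNReal) ^ m := by
  set U := ⋃ v ∈ Finset.univ.filter Q, atom X m v with hU
  have hUmeas : μ U = ((Finset.univ.filter Q).card : ENNReal) * (1 / 2 : ENNReal) ^ m := by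
    rw [hU, measure_biUnion_finset]
    · rw [Finset.sum_congr rfl (fun v _ => atom_meas μ X hindep hstep m v)]
      rw [Finset.sum_const, nsmul_eq_mul]
    · intro v hv v' hv' hne
      exact atom_disjoint X m (Set.mem_univ v) (Set.mem_univ v') hne
    · intro v _
      exact atom_measurable X hmeas m v
  have hUE : U ⊆ E := by
    intro ω hω
    simp only [hU, Set.mem_iUnion] at hω
    obtain ⟨v, hv, hω⟩ := hω
    rw [Finset.mem_filter] at hv
    exact (hEQ v ω hω).mpr hv.2
  have hEU : E ∩ goodSet X m ⊆ U := by
    rintro ω ⟨hE, hG⟩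
    have hatom := mem_atom_of_good X m ω hG
    have hQ : Q (fun i => decide (X (i.1+1) ω = 1)) := (hEQ _ ω hatom).mp hE
    simp only [hU, Set.mem_iUnion]
    exact ⟨_, by simp [Finset.mem_filter, hQ], hatom⟩
  have h1 : μ E ≤ μ U := by
    have hsub : E ⊆ (E ∩ goodSet X m) ∪ (goodSet X m)ᶜ := by
      intro ω hω
      by_cases hg : ω ∈ goodSet X m
      · exact Or.inl ⟨hω, hg⟩
      · exact Or.inr hg
    calc μ E ≤ μ ((E ∩ goodSet X m) ∪ (goodSet X m)ᶜ) := measure_mono hsub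
      _ ≤ μ (E ∩ goodSet X m) + μ (goodSet X m)ᶜ := measure_union_le _ _
      _ ≤ μ U + 0 :=
          add_le_add (measure_mono hEU) (le_of_eq (goodSet_ae μ X hmeas hstep m))
      _ = μ U := by rw [add_zero]
  have h2 : μ U ≤ μ E := measure_mono hUE
  rw [← hUmeas]
  exact le_antisymm h1 h2


lemma centralBinom_poch (n : ℕ) :
    (4:ℝ)^n * (∏ i ∈ Finset.range n, ((1:ℝ)/2 + i))
      = (Nat.centralBinom n : ℝ) * (Nat.factorial n : ℝ) := by
  induction n with
  | zero => simp [Nat.centralBinom]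
  | succ n ih =>
    have key : ((n:ℝ)+1) * (Nat.centralBinom (n+1) : ℝ)
        = 2*(2*(n:ℝ)+1)*(Nat.centralBinom n : ℝ) := by
      exact_mod_cast congrArg (fun x : ℕ => (x:ℝ)) (Nat.succ_mul_centralBinom_succ n)
    rw [Finset.prod_range_succ]
    calc (4:ℝ)^(n+1) * ((∏ i ∈ Finset.range n, ((1:ℝ)/2 + i)) * ((1:ℝ)/2 + n))
        = (4 * ((1:ℝ)/2 + n)) * ((4:ℝ)^n * ∏ i ∈ Finset.range n, ((1:ℝ)/2 + i)) := by ring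
      _ = (4 * ((1:ℝ)/2 + n)) * ((Nat.centralBinom n : ℝ) * (Nat.factorial n : ℝ)) := by rw [ih]
      _ = (2*(2*(n:ℝ)+1)*(Nat.centralBinom n : ℝ)) * (Nat.factorial n : ℝ) := by ring
      _ = (((n:ℝ)+1) * (Nat.centralBinom (n+1) : ℝ)) * (Nat.factorial n : ℝ) := by rw [key]
      _ = (Nat.centralBinom (n+1) : ℝ) * (Nat.factorial (n+1) : ℝ) := by
          rw [Nat.factorial_succ]
          push_cast
          ring

lemma choose_double (k : ℕ) :
    Nat.centralBinom (k+1) = 2 * Nat.choose (2*k+1) (k+1) := by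
  have h1 : Nat.centralBinom (k+1) = Nat.choose (2*k+2) (k+1) := by
    unfold Nat.centralBinom
    rfl
  have h2 : Nat.choose (2*k+2) (k+1) = Nat.choose (2*k+1) k + Nat.choose (2*k+1) (k+1) :=
    Nat.choose_succ_succ (2*k+1) k
  have h3 : Nat.choose (2*k+1) k = Nat.choose (2*k+1) (k+1) := by
    have := Nat.choose_symm (show k+1 ≤ 2*k+1 by omega)
    rw [show 2*k+1 - (k+1) = k by omega] at this
    exact this
  omega

end SSRW

/-- (Feller) For the simple symmetric random walk, for every `n ≥ 1`:
`p̃_{2n} = p̃_{2n+1} = (1/2)_{n↑}/(2 n!)` and `p_{2n-1} = p_{2n} = (1/2)_{n↑}/n!`. -/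
theorem ssrw_stay_probabilities
    {Ω : Type*} [MeasurableSpace Ω] (μ : MeasureTheory.Measure Ω) [IsProbabilityMeasure μ]
    (X : ℕ → Ω → ℝ) (hmeas : ∀ i, Measurable (X i))
    (hindep : iIndepFun X μ)
    (hident : ∀ i, IdentDistrib (X i) (X 1) μ μ)
    (hstep : ∀ i, μ {ω | X i ω = 1} = 1 / 2 ∧ μ {ω | X i ω = -1} = 1 / 2) :
    ∀ n, 1 ≤ n →
      stayPos μ X (2 * n) = poch (1 / 2) n / (2 * Nat.factorial n)
      ∧ stayPos μ X (2 * n + 1) = poch (1 / 2) n / (2 * Nat.factorial n)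
      ∧ stayNonneg μ X (2 * n - 1) = poch (1 / 2) n / Nat.factorial n
      ∧ stayNonneg μ X (2 * n) = poch (1 / 2) n / Nat.factorial n := by
  intro n hn
  obtain ⟨k, rfl⟩ : ∃ k, n = k + 1 := ⟨n - 1, by omega⟩
  clear hn hident
  -- probabilities as counts
  have hNN : ∀ m : ℕ, stayNonneg μ X m = (SSRW.tot m : ℝ) * ((1:ℝ)/2)^m := by
    intro m
    unfold stayNonneg
    have hEQ : ∀ (v : Fin m → Bool), ∀ ω ∈ SSRW.atom X m v,
        (ω ∈ {ω | ∀ k ∈ Finset.Icc 1 m, 0 ≤ walkSum X k ω}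
          ↔ (∀ k ≤ m, 0 ≤ SSRW.gsum (SSRW.extF v) k)) := by
      intro v ω hω
      simp only [Set.mem_setOf_eq, Finset.mem_Icc]
      constructor
      · intro h k hk
        rcases Nat.eq_zero_or_pos k with h0 | h1
        · subst h0; simp [SSRW.gsum_zero]
        · have hw := h k ⟨h1, hk⟩
          rw [SSRW.walkSum_on_atom X m v ω hω k hk] at hw
          exact_mod_cast hw
      · intro h k hk
        rw [SSRW.walkSum_on_atom X m v ω hω k hk.2]
        exact_mod_cast h k hk.2
    have hmc := SSRW.meas_eq_count μ X hmeas hindep hstep m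
      (fun v => ∀ k ≤ m, 0 ≤ SSRW.gsum (SSRW.extF v) k)
      {ω | ∀ k ∈ Finset.Icc 1 m, 0 ≤ walkSum X k ω} hEQ
    rw [hmc, ENNReal.toReal_mul, ENNReal.toReal_pow, ENNReal.toReal_natCast]
    have h2 : ((1:ENNReal)/2).toReal = (1:ℝ)/2 := by
      rw [ENNReal.toReal_div]
      norm_num
    rw [h2]
    all_goals first
      | rfl
      | (show _ = _; congr)
  have hPP : ∀ m : ℕ, stayPos μ X m = (SSRW.ptot m : ℝ) * ((1:ℝ)/2)^m := by
    intro m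
    unfold stayPos
    have hEQ : ∀ (v : Fin m → Bool), ∀ ω ∈ SSRW.atom X m v,
        (ω ∈ {ω | ∀ k ∈ Finset.Icc 1 m, 0 < walkSum X k ω}
          ↔ SSRW.PosOk m (SSRW.extF v)) := by
      intro v ω hω
      simp only [Set.mem_setOf_eq, Finset.mem_Icc]
      constructor
      · intro h k hk1 hk2
        have hw := h k ⟨hk1, hk2⟩
        rw [SSRW.walkSum_on_atom X m v ω hω k hk2] at hw
        exact_mod_cast hw
      · intro h k hk
        rw [SSRW.walkSum_on_atom X m v ω hω k hk.2]
        exact_mod_cast h k hk.1 hk.2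
    have hmc := SSRW.meas_eq_count μ X hmeas hindep hstep m
      (fun v => SSRW.PosOk m (SSRW.extF v))
      {ω | ∀ k ∈ Finset.Icc 1 m, 0 < walkSum X k ω} hEQ
    rw [hmc, ENNReal.toReal_mul, ENNReal.toReal_pow, ENNReal.toReal_natCast]
    have h2 : ((1:ENNReal)/2).toReal = (1:ℝ)/2 := by
      rw [ENNReal.toReal_div]
      norm_num
    rw [h2]
    all_goals first
      | rfl
      | (show _ = _; congr)
  -- count values
  have htot1 : SSRW.tot (2*k+1) = Nat.choose (2*k+1) (k+1) := by
    rw [SSRW.tot_val_nat]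
    congr 1
    omega
  have htot2 : SSRW.tot (2*k+2) = Nat.centralBinom (k+1) := by
    rw [SSRW.tot_val_nat, show 2*k+2 - (2*k+2)/2 = k+1 by omega]
    unfold Nat.centralBinom
    rfl
  have hp1 : SSRW.ptot (2*k+2) = SSRW.tot (2*k+1) := SSRW.ptot_succ (2*k+1)
  have hp2 : SSRW.ptot (2*k+3) = SSRW.tot (2*k+2) := SSRW.ptot_succ (2*k+2)
  -- real abbreviations
  set B : ℝ := (Nat.centralBinom (k+1) : ℝ) with hB
  set A : ℝ := (Nat.choose (2*k+1) (k+1) : ℝ) with hA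
  set F : ℝ := (Nat.factorial (k+1) : ℝ) with hF
  set P : ℝ := poch (1/2) (k+1) with hPdef
  have haux : (4:ℝ)^(k+1) * P = B * F := SSRW.centralBinom_poch (k+1)
  have hBA : B = 2 * A := by
    rw [hB, hA]
    exact_mod_cast congrArg (fun x : ℕ => (x:ℝ)) (SSRW.choose_double k)
  have hFpos : (0:ℝ) < F := by
    rw [hF]
    exact_mod_cast Nat.factorial_pos (k+1)
  have h4pos : (0:ℝ) < (4:ℝ)^(k+1) := by positivity
  have hPval : P = 2 * A * F / (4:ℝ)^(k+1) := by
    rw [hBA] at haux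
    field_simp
    linarith
  have hFne : F ≠ 0 := ne_of_gt hFpos
  have h4ne : (4:ℝ)^(k+1) ≠ 0 := ne_of_gt h4pos
  have hq : ((1:ℝ)/2)^2 = (4:ℝ)⁻¹ := by norm_num
  have hhalf2 : ((1:ℝ)/2)^(2*k+2) = ((4:ℝ)^(k+1))⁻¹ := by
    rw [show 2*k+2 = 2*(k+1) by ring, pow_mul, hq, inv_pow]
  have hhalf3 : ((1:ℝ)/2)^(2*k+3) = (((4:ℝ)^(k+1)) * 2)⁻¹ := by
    rw [show 2*k+3 = 2*(k+1)+1 by ring, pow_succ, pow_mul, hq, inv_pow, mul_inv]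
    norm_num
  have hhalf1 : ((1:ℝ)/2)^(2*k+1) = 2 * ((4:ℝ)^(k+1))⁻¹ := by
    have hs : ((1:ℝ)/2)^(2*k+2) = ((1:ℝ)/2)^(2*k+1) * ((1:ℝ)/2) := pow_succ _ _
    rw [hhalf2] at hs
    field_simp at hs ⊢
    linarith
  have e1 : 2*(k+1) = 2*k+2 := by ring
  have e2 : 2*(k+1)+1 = 2*k+3 := by ring
  have e3 : 2*(k+1)-1 = 2*k+1 := by omega
  refine ⟨?_, ?_, ?_, ?_⟩
  · rw [e1, hPP (2*k+2), hp1, htot1, ← hA, hhalf2, hPval]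
    field_simp
  · rw [e2, hPP (2*k+3), hp2, htot2, ← hB, hhalf3, hPval, hBA]
    field_simp
  · rw [e3, hNN (2*k+1), htot1, ← hA, hhalf1, hPval]
    field_simp
  · rw [e1, hNN (2*k+2), htot2, ← hB, hhalf2, hPval, hBA]
    field_simp
end

section
/- Let (S_n) be the simple symmetric random walk, i.e. the X_i are i.i.d. with ℙ(X_i = 1) = ℙ(X_i = −1) = 1/2. Then for every N ≥ 1 and n ≥ 0: (a) for 0 ≤ j < N, ℙ(A_N(n+1) = j | A_N(n) = 0) = 0 if j is odd, and ℙ(A_N(n+1) = j | A_N(n) = 0) = C(j, j/2) · C(2⌊N/2⌋ − j, ⌊N/2⌋ − j/2) / ( (j+2) · C(2⌊N/2⌋, ⌊N/2⌋) ) if j is even; and (b) ℙ(A_N(n+1) = N | A_N(n) = 0) = 1/(N+1) if N is odd, and = 2/(N+2) if N is even. Here C(a,b) denotes the binomial coefficient and ⌊x⌋ the integer part of x. -/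
open MeasureTheory ProbabilityTheory Finset
open scoped Classical ProbabilityTheory
open scoped ENNReal

namespace SSRWAux

def sgn (b : Bool) : ℤ := if b then 1 else -1

lemma sgn_le_one (b : Bool) : sgn b ≤ 1 := by cases b <;> simp [sgn]
lemma neg_one_le_sgn (b : Bool) : -1 ≤ sgn b := by cases b <;> simp [sgn]

noncomputable def psum {m : ℕ} (s : Fin m → Bool) (i : ℕ) : ℤ :=
  ∑ t : Fin m, if (t : ℕ) < i then sgn (s t) else 0

lemma psum_zero {m : ℕ} (s : Fin m → Bool) : psum s 0 = 0 := by simp [psum]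

lemma psum_succ {m : ℕ} (s : Fin m → Bool) {i : ℕ} (h : i < m) :
    psum s (i + 1) = psum s i + sgn (s ⟨i, h⟩) := by
  unfold psum
  have : ∀ t : Fin m, (if (t : ℕ) < i + 1 then sgn (s t) else 0)
      = (if (t : ℕ) < i then sgn (s t) else 0) + (if t = ⟨i, h⟩ then sgn (s t) else 0) := by
    intro t
    rcases lt_trichotomy (t : ℕ) i with ht | ht | ht
    · rw [if_pos (by omega), if_pos ht, if_neg (by intro he; subst he; simp at ht)]
      ring
    · rw [if_pos (by omega), if_neg (by omega), if_pos (by apply Fin.ext; simpa using ht)]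
      ring
    · rw [if_neg (by omega), if_neg (by omega), if_neg (by intro he; subst he; simp at ht)]
      ring
  rw [Finset.sum_congr rfl (fun t _ => this t), Finset.sum_add_distrib]
  congr 1
  rw [Finset.sum_ite_eq' Finset.univ (⟨i, h⟩ : Fin m)]
  simp

lemma psum_stable {m : ℕ} (s : Fin m → Bool) {i : ℕ} (h : m ≤ i) : psum s i = psum s m := by
  unfold psum
  apply Finset.sum_congr rfl
  intro t _
  rw [if_pos (lt_of_lt_of_le t.isLt h), if_pos t.isLt]

lemma neg_le_psum {m : ℕ} (s : Fin m → Bool) (i : ℕ) : -(i : ℤ) ≤ psum s i := by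
  induction i with
  | zero => simp [psum_zero]
  | succ i ih =>
    rcases lt_or_ge i m with h | h
    · rw [psum_succ s h]
      have := neg_one_le_sgn (s ⟨i, h⟩)
      push_cast; omega
    · rw [psum_stable s (by omega), ← psum_stable s h]
      push_cast; omega

lemma psum_le {m : ℕ} (s : Fin m → Bool) (i : ℕ) : psum s i ≤ (i : ℤ) := by
  induction i with
  | zero => simp [psum_zero]
  | succ i ih =>
    rcases lt_or_ge i m with h | h
    · rw [psum_succ s h]
      have := sgn_le_one (s ⟨i, h⟩)
      push_cast; omega
    · rw [psum_stable s (by omega), ← psum_stable s h]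
      push_cast; omega

lemma psum_parity {m : ℕ} (s : Fin m → Bool) : ∀ i, i ≤ m → Even (psum s i + i) := by
  intro i
  induction i with
  | zero => intro _; simp [psum_zero]
  | succ i ih =>
    intro h
    have hi : i < m := by omega
    rw [psum_succ s hi]
    have := ih (by omega)
    obtain ⟨u, hu⟩ := this
    rcases (s ⟨i, hi⟩) with _ | _ <;> simp [sgn] at * <;>
      [exact ⟨u, by push_cast; omega⟩; exact ⟨u + 1, by push_cast; omega⟩]

lemma psum_cons {m : ℕ} (c : Bool) (s : Fin m → Bool) (i : ℕ) :
    psum (Fin.cons c s) (i + 1) = sgn c + psum s i := by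
  unfold psum
  rw [Fin.sum_univ_succ]
  simp only [Fin.cons_zero, Fin.cons_succ, Fin.val_zero, Fin.val_succ]
  rw [if_pos (by omega)]
  congr 1
  apply Finset.sum_congr rfl
  intro t _
  congr 1
  simp [Nat.succ_lt_succ_iff]

lemma psum_cons_eq {m : ℕ} (c : Bool) (s : Fin m → Bool) :
    psum (Fin.cons c s) = fun i => if i = 0 then 0 else sgn c + psum s (i - 1) := by
  funext i
  cases i with
  | zero => simp [psum_zero]
  | succ i => rw [psum_cons]; simp

lemma psum_append_left {p q : ℕ} (x : Fin p → Bool) (y : Fin q → Bool) {i : ℕ} (h : i ≤ p) :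
    psum (Fin.append x y) i = psum x i := by
  unfold psum
  rw [Fin.sum_univ_add]
  have h2 : ∀ t : Fin q, (if ((Fin.natAdd p t : Fin (p+q)) : ℕ) < i
      then sgn (Fin.append x y (Fin.natAdd p t)) else 0) = 0 := by
    intro t
    rw [if_neg]
    simp only [Fin.coe_natAdd]
    omega
  rw [Finset.sum_congr rfl (fun t _ => h2 t), Finset.sum_const_zero, add_zero]
  apply Finset.sum_congr rfl
  intro t _
  rw [Fin.append_left]
  rfl

lemma psum_full {m : ℕ} (s : Fin m → Bool) : psum s m = ∑ t : Fin m, sgn (s t) := by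
  unfold psum
  apply Finset.sum_congr rfl
  intro t _
  rw [if_pos t.isLt]

lemma psum_append_right {p q : ℕ} (x : Fin p → Bool) (y : Fin q → Bool) (i : ℕ) :
    psum (Fin.append x y) (p + i) = psum x p + psum y i := by
  unfold psum
  rw [Fin.sum_univ_add]
  congr 1
  · apply Finset.sum_congr rfl
    intro t _
    rw [Fin.append_left, if_pos (by simp only [Fin.coe_castAdd]; omega), if_pos t.isLt]
  · apply Finset.sum_congr rfl
    intro t _
    rw [Fin.append_right]
    congr 1
    simp only [Fin.coe_natAdd, eq_iff_iff]
    omega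


noncomputable def pcount (m : ℕ) (Φ : (ℕ → ℤ) → Prop) : ℕ :=
  (Finset.univ.filter fun s : Fin m → Bool => Φ (psum s)).card

lemma pcount_congr {m : ℕ} {Φ Ψ : (ℕ → ℤ) → Prop}
    (h : ∀ s : Fin m → Bool, Φ (psum s) ↔ Ψ (psum s)) : pcount m Φ = pcount m Ψ := by
  unfold pcount
  congr 1
  apply Finset.filter_congr
  intro s _
  simpa using h s

lemma pcount_cast {m m' : ℕ} (h : m = m') (Φ : (ℕ → ℤ) → Prop) :
    pcount m Φ = pcount m' Φ := by subst h; rfl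

lemma pcount_eq_zero {m : ℕ} {Φ : (ℕ → ℤ) → Prop}
    (h : ∀ s : Fin m → Bool, ¬ Φ (psum s)) : pcount m Φ = 0 := by
  unfold pcount
  rw [Finset.card_eq_zero, Finset.filter_eq_empty_iff]
  intro s _
  exact h s

lemma pcount_zero (Φ : (ℕ → ℤ) → Prop) :
    pcount 0 Φ = if Φ (fun _ => 0) then 1 else 0 := by
  have hps : ∀ s : Fin 0 → Bool, psum s = fun _ => (0 : ℤ) := by
    intro s; funext i; unfold psum; simp
  by_cases h : Φ (fun _ => 0)
  · rw [if_pos h]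
    unfold pcount
    rw [Finset.filter_true_of_mem (fun s _ => by rw [hps s]; exact h)]
    simp
  · rw [if_neg h]
    exact pcount_eq_zero (fun s => by rw [hps s]; exact h)

lemma pcount_cons (m : ℕ) (Φ : (ℕ → ℤ) → Prop) :
    pcount (m + 1) Φ
      = pcount m (fun g => Φ (fun i => if i = 0 then 0 else sgn true + g (i - 1)))
      + pcount m (fun g => Φ (fun i => if i = 0 then 0 else sgn false + g (i - 1))) := by
  unfold pcount
  rw [← Finset.card_filter_add_card_filter_not
    (p := fun s : Fin (m+1) → Bool => s 0 = true), Finset.filter_filter, Finset.filter_filter]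
  congr 1
  · apply Finset.card_nbij' (i := fun s => Fin.tail s) (j := fun t => Fin.cons true t)
    · intro s hs
      simp only [Finset.mem_coe, Finset.mem_filter, Finset.mem_univ, true_and] at hs ⊢
      obtain ⟨h1, h2⟩ := hs
      have : s = Fin.cons true (Fin.tail s) := by
        rw [← h2]; exact (Fin.cons_self_tail s).symm
      rw [this, psum_cons_eq] at h1
      exact h1
    · intro t ht
      simp only [Finset.mem_coe, Finset.mem_filter, Finset.mem_univ, true_and] at ht ⊢
      constructor
      · rw [psum_cons_eq]; exact ht
      · simp
    · intro s hs
      simp only [Finset.mem_coe, Finset.mem_filter, Finset.mem_univ, true_and] at hs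
      rw [← hs.2]
      exact Fin.cons_self_tail s
    · intro t _
      simp
  · apply Finset.card_nbij' (i := fun s => Fin.tail s) (j := fun t => Fin.cons false t)
    · intro s hs
      simp only [Finset.mem_coe, Finset.mem_filter, Finset.mem_univ, true_and, Bool.not_eq_true] at hs ⊢
      obtain ⟨h1, h2⟩ := hs
      have : s = Fin.cons false (Fin.tail s) := by
        rw [← h2]; exact (Fin.cons_self_tail s).symm
      rw [this, psum_cons_eq] at h1
      exact h1
    · intro t ht
      simp only [Finset.mem_coe, Finset.mem_filter, Finset.mem_univ, true_and, Bool.not_eq_true] at ht ⊢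
      constructor
      · rw [psum_cons_eq]; exact ht
      · simp
    · intro s hs
      simp only [Finset.mem_coe, Finset.mem_filter, Finset.mem_univ, true_and, Bool.not_eq_true] at hs
      rw [← hs.2]
      exact Fin.cons_self_tail s
    · intro t _
      simp

lemma pcount_append (p q : ℕ) (Φ : (ℕ → ℤ) → Prop) (Q R : (ℕ → ℤ) → Prop)
    (h : ∀ (x : Fin p → Bool) (y : Fin q → Bool),
      Φ (psum (Fin.append x y)) ↔ Q (psum x) ∧ R (psum y)) :
    pcount (p + q) Φ = pcount p Q * pcount q R := by
  unfold pcount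
  rw [← Finset.card_product]
  apply Finset.card_nbij'
    (i := fun s => (fun t => s (Fin.castAdd q t), fun t => s (Fin.natAdd p t)))
    (j := fun xy => Fin.append xy.1 xy.2)
  · intro s hs
    simp only [Finset.mem_coe, Finset.mem_filter, Finset.mem_univ, true_and, Finset.mem_product] at hs ⊢
    have hrec : Fin.append (fun t => s (Fin.castAdd q t)) (fun t => s (Fin.natAdd p t)) = s := by
      funext i
      refine Fin.addCases ?_ ?_ i <;> intro t <;> simp [Fin.append_left, Fin.append_right]
    rw [← hrec] at hs
    exact (h _ _).1 hs
  · intro xy hxy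
    simp only [Finset.mem_coe, Finset.mem_filter, Finset.mem_univ, true_and, Finset.mem_product] at hxy ⊢
    exact (h _ _).2 hxy
  · intro s _
    funext i
    refine Fin.addCases ?_ ?_ i <;> intro t <;> simp [Fin.append_left, Fin.append_right]
  · intro xy _
    ext t
    · simp [Fin.append_left]
    · simp [Fin.append_right]

lemma pcount_or {m : ℕ} {Φ A B : (ℕ → ℤ) → Prop}
    (h : ∀ s : Fin m → Bool, Φ (psum s) ↔ (A (psum s) ∨ B (psum s)))
    (hd : ∀ s : Fin m → Bool, ¬ (A (psum s) ∧ B (psum s))) :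
    pcount m Φ = pcount m A + pcount m B := by
  unfold pcount
  rw [show (Finset.univ.filter fun s : Fin m → Bool => Φ (psum s))
      = (Finset.univ.filter fun s : Fin m → Bool => A (psum s))
        ∪ (Finset.univ.filter fun s : Fin m → Bool => B (psum s)) from ?_]
  · apply Finset.card_union_of_disjoint
    rw [Finset.disjoint_filter]
    intro s _ hA hB
    exact hd s ⟨hA, hB⟩
  · ext s
    simp only [Finset.mem_filter, Finset.mem_univ, true_and, Finset.mem_union]
    exact h s

lemma pcount_fiber {m : ℕ} (Φ : (ℕ → ℤ) → Prop) (h0 : ∀ s : Fin m → Bool, Φ (psum s) → 0 ≤ psum s m) :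
    pcount m Φ = ∑ b ∈ Finset.range (m + 1), pcount m (fun g => Φ g ∧ g m = (b : ℤ)) := by
  unfold pcount
  rw [Finset.card_eq_sum_card_fiberwise
    (f := fun s : Fin m → Bool => (psum s m).toNat) (t := Finset.range (m + 1))]
  · apply Finset.sum_congr rfl
    intro b hb
    congr 1
    rw [Finset.filter_filter]
    ext s
    simp only [Finset.mem_filter, Finset.mem_univ, true_and]
    simp only [Finset.mem_range] at hb
    constructor
    · rintro ⟨h1, h2⟩
      refine ⟨h1, ?_⟩
      have := h0 s h1
      omega
    · rintro ⟨h1, h2⟩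
      exact ⟨h1, by omega⟩
  · intro s hs
    simp only [Finset.mem_coe, Finset.mem_filter, Finset.mem_univ, true_and] at hs
    have h1 := h0 s hs
    have h2 := psum_le s m
    simp only [Finset.mem_coe, Finset.mem_range]
    omega


lemma sgn_true : sgn true = 1 := rfl
lemma sgn_false : sgn false = -1 := rfl

/-- number of nonnegative paths of length `m`, from `a`, ending at `b`. -/
noncomputable def cnt (m a b : ℕ) : ℕ :=
  pcount m (fun g => (∀ i ≤ m, 0 ≤ (a : ℤ) + g i) ∧ (a : ℤ) + g m = (b : ℤ))

lemma cnt_succ (m a b : ℕ) :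
    cnt (m + 1) a b = cnt m (a + 1) b + (if a = 0 then 0 else cnt m (a - 1) b) := by
  unfold cnt
  rw [pcount_cons]
  congr 1
  · apply pcount_congr
    intro s
    simp only [sgn_true]
    constructor
    · rintro ⟨h1, h2⟩
      refine ⟨fun i hi => ?_, ?_⟩
      · have := h1 (i + 1) (by omega)
        simp only [if_neg (Nat.succ_ne_zero i), Nat.add_sub_cancel] at this
        push_cast
        push_cast at this
        linarith
      · have := h2
        simp only [if_neg (Nat.succ_ne_zero m), Nat.add_sub_cancel] at this
        push_cast
        push_cast at this
        linarith
    · rintro ⟨h1, h2⟩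
      refine ⟨fun i hi => ?_, ?_⟩
      · rcases i with _ | i
        · simp only [if_pos rfl]
          push_cast
          omega
        · simp only [if_neg (Nat.succ_ne_zero i), Nat.add_sub_cancel]
          have := h1 i (by omega)
          push_cast at this ⊢
          linarith
      · simp only [if_neg (Nat.succ_ne_zero m), Nat.add_sub_cancel]
        push_cast at h2 ⊢
        linarith
  · by_cases ha : a = 0
    · subst ha
      rw [if_pos rfl]
      apply pcount_eq_zero
      intro s hs
      have := hs.1 1 (by omega)
      simp only [sgn_false, if_neg (one_ne_zero), Nat.sub_self, psum_zero] at this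
      omega
    · rw [if_neg ha]
      apply pcount_congr
      intro s
      simp only [sgn_false]
      have hc : ((a - 1 : ℕ) : ℤ) = (a : ℤ) - 1 := by
        have : 1 ≤ a := Nat.one_le_iff_ne_zero.mpr ha
        push_cast [this]
        ring
      constructor
      · rintro ⟨h1, h2⟩
        refine ⟨fun i hi => ?_, ?_⟩
        · have := h1 (i + 1) (by omega)
          simp only [if_neg (Nat.succ_ne_zero i), Nat.add_sub_cancel] at this
          rw [hc]
          linarith
        · have := h2
          simp only [if_neg (Nat.succ_ne_zero m), Nat.add_sub_cancel] at this
          rw [hc]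
          linarith
      · rintro ⟨h1, h2⟩
        rw [hc] at h1 h2
        refine ⟨fun i hi => ?_, ?_⟩
        · rcases i with _ | i
          · simp only [if_pos rfl]
            push_cast
            omega
          · simp only [if_neg (Nat.succ_ne_zero i), Nat.add_sub_cancel]
            have := h1 i (by omega)
            linarith
        · simp only [if_neg (Nat.succ_ne_zero m), Nat.add_sub_cancel]
          linarith

lemma cnt_unreachable {m a b : ℕ} (h : m + b < a) : cnt m a b = 0 := by
  apply pcount_eq_zero
  intro s hs
  have h1 := hs.2
  have h2 := neg_le_psum s m
  omega

lemma cnt_parity {m a b : ℕ} (h : (m + a + b) % 2 = 1) : cnt m a b = 0 := by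
  apply pcount_eq_zero
  intro s hs
  have h1 := hs.2
  obtain ⟨u, hu⟩ := psum_parity s m le_rfl
  omega

lemma cnt_closed : ∀ m a b k : ℕ, m + b = a + 2 * k →
    (cnt m a b : ℤ) = (m.choose k : ℤ) - (m.choose (k + a + 1) : ℤ) := by
  intro m
  induction m with
  | zero =>
    intro a b k h
    unfold cnt
    rw [pcount_zero]
    rcases Nat.eq_zero_or_pos k with hk | hk
    · subst hk
      have hab : a = b := by omega
      rw [if_pos ⟨fun i _ => by simp, by simp [hab]⟩]
      rw [Nat.choose_zero_right, Nat.choose_eq_zero_of_lt (by omega)]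
      simp
    · rw [if_neg (by rintro ⟨-, h2⟩; simp at h2; omega)]
      rw [Nat.choose_eq_zero_of_lt (by omega), Nat.choose_eq_zero_of_lt (by omega)]
      simp
  | succ m ih =>
    intro a b k h
    rw [cnt_succ]
    rcases Nat.eq_zero_or_pos a with ha | ha
    · subst ha
      rw [if_pos rfl, add_zero]
      -- k ≥ 1 since m+1+b = 2k
      have hk : 1 ≤ k := by omega
      have h' : m + b = 1 + 2 * (k - 1) := by omega
      rw [ih 1 b (k - 1) h']
      obtain ⟨k', rfl⟩ : ∃ k', k = k' + 1 := ⟨k - 1, by omega⟩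
      simp only [Nat.add_sub_cancel]
      rw [Nat.choose_succ_succ m k', Nat.choose_succ_succ m (k' + 1)]
      push_cast
      ring
    · rw [if_neg (by omega)]
      obtain ⟨a', rfl⟩ : ∃ a', a = a' + 1 := ⟨a - 1, by omega⟩
      simp only [Nat.add_sub_cancel]
      rcases Nat.eq_zero_or_pos k with hk | hk
      · subst hk
        -- unreachable true branch
        rw [cnt_unreachable (show m + b < a' + 1 + 1 by omega), zero_add]
        rw [ih a' b 0 (by omega)]
        rw [Nat.choose_eq_zero_of_lt (show m < 0 + a' + 1 by omega),
          Nat.choose_eq_zero_of_lt (show m + 1 < 0 + (a' + 1) + 1 by omega)]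
        simp
      · obtain ⟨k', rfl⟩ : ∃ k', k = k' + 1 := ⟨k - 1, by omega⟩
        push_cast
        rw [show a' + 1 + 1 = a' + 2 from rfl, ih (a' + 2) b k' (by omega), ih a' b (k' + 1) (by omega)]
        rw [show k' + (a' + 2) + 1 = k' + a' + 3 by omega,
          show k' + 1 + a' + 1 = k' + a' + 2 by omega,
          show k' + 1 + (a' + 1) + 1 = k' + a' + 2 + 1 by omega,
          Nat.choose_succ_succ m (k' + a' + 2), Nat.choose_succ_succ m k',
          show k' + a' + 2 + 1 = k' + a' + 3 by omega]
        push_cast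
        ring

/-- number of nonnegative paths of length `m` (any endpoint). -/
noncomputable def Rc (m : ℕ) : ℕ := pcount m (fun g => ∀ i ≤ m, 0 ≤ g i)

lemma Rc_eq_sum (m : ℕ) : Rc m = ∑ b ∈ Finset.range (m + 1), cnt m 0 b := by
  unfold Rc cnt
  rw [pcount_fiber _ (fun s hs => hs m le_rfl)]
  apply Finset.sum_congr rfl
  intro b _
  apply pcount_congr
  intro s
  constructor
  · rintro ⟨h1, h2⟩
    exact ⟨fun i hi => by simpa using h1 i hi, by simpa using h2⟩
  · rintro ⟨h1, h2⟩
    exact ⟨fun i hi => by simpa using h1 i hi, by simpa using h2⟩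

lemma Rc_closed (m : ℕ) : (Rc m : ℤ) = (m.choose ((m + 1) / 2) : ℤ) := by
  rw [Rc_eq_sum]
  push_cast
  have himg : Finset.image (fun u => m - 2 * u) (Finset.range (m / 2 + 1)) ⊆ Finset.range (m + 1) := by
    intro b hb
    simp only [Finset.mem_image, Finset.mem_range] at hb ⊢
    omega
  rw [← Finset.sum_subset himg]
  · rw [Finset.sum_image (by intro u hu v hv huv; simp only [Finset.mem_coe, Finset.mem_range] at hu hv; beta_reduce at huv; omega)]
    have hterm : ∀ u ∈ Finset.range (m / 2 + 1),
        (cnt m 0 (m - 2 * u) : ℤ) = (m.choose (m + 1 - (u + 1)) : ℤ) - (m.choose (m + 1 - u) : ℤ) := by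
      intro u hu
      simp only [Finset.mem_range] at hu
      rw [cnt_closed m 0 (m - 2 * u) (m - u) (by omega),
        show m - u + 0 + 1 = m + 1 - u by omega, show m - u = m + 1 - (u + 1) by omega]
    rw [Finset.sum_congr rfl hterm,
      Finset.sum_range_sub (f := fun u => ((m.choose (m + 1 - u) : ℤ))) (n := m / 2 + 1)]
    rw [show m + 1 - (m / 2 + 1) = (m + 1) / 2 by omega, Nat.sub_zero,
      Nat.choose_eq_zero_of_lt (Nat.lt_succ_self m)]
    simp
  · intro b hb hnb
    simp only [Finset.mem_range] at hb
    simp only [Finset.mem_image, Finset.mem_range] at hnb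
    push_neg at hnb
    rw [cnt_parity ?_]
    · simp
    · rcases Nat.even_or_odd (m + b) with he | ho
      · exfalso
        obtain ⟨c, hc⟩ := he
        exact hnb ((m - b) / 2) (by omega) (by omega)
      · obtain ⟨c, hc⟩ := ho
        omega


lemma cnt_pred (m b : ℕ) :
    cnt m 0 b = pcount m (fun g => (∀ i ≤ m, 0 ≤ g i) ∧ g m = (b : ℤ)) := by
  unfold cnt
  apply pcount_congr
  intro s
  norm_num

/-- number of strictly positive paths of length `q`. -/
noncomputable def SP (q : ℕ) : ℕ := pcount q (fun g => ∀ i, 1 ≤ i → i ≤ q → 1 ≤ g i)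

lemma SP_succ (m : ℕ) : SP (m + 1) = Rc m := by
  unfold SP Rc
  rw [pcount_cons]
  beta_reduce
  have h2 : pcount m (fun g => ∀ i, 1 ≤ i → i ≤ m + 1 →
      1 ≤ (fun i => if i = 0 then 0 else sgn false + g (i - 1)) i) = 0 := by
    apply pcount_eq_zero
    intro s hs
    have := hs 1 le_rfl (by omega)
    simp only [sgn_false, if_neg one_ne_zero, Nat.sub_self, psum_zero] at this
    omega
  rw [h2, add_zero]
  clear h2
  apply pcount_congr
  intro s
  constructor
  · intro h i hi
    have := h (i + 1) (by omega) (by omega)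
    simp only [sgn_true, if_neg (Nat.succ_ne_zero i), Nat.add_sub_cancel] at this
    omega
  · intro h i h1 h2
    obtain ⟨i', rfl⟩ : ∃ i', i = i' + 1 := ⟨i - 1, by omega⟩
    simp only [sgn_true, if_neg (Nat.succ_ne_zero i'), Nat.add_sub_cancel]
    have := h i' (by omega)
    omega

lemma pcount_one (Φ : (ℕ → ℤ) → Prop) :
    pcount 1 Φ = (if Φ (fun i => if i = 0 then 0 else 1) then 1 else 0)
      + (if Φ (fun i => if i = 0 then 0 else -1) then 1 else 0) := by
  rw [pcount_cons 0 Φ]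
  simp only [pcount_zero, sgn_true, sgn_false, add_zero]

lemma pcount_one_true : pcount 1 (fun _ => True) = 2 := by
  rw [pcount_one]; norm_num

lemma pcount_one_neg : pcount 1 (fun g => g 1 = -1) = 1 := by
  rw [pcount_one]; norm_num

def Phi0 (N : ℕ) : (ℕ → ℤ) → Prop := fun g => ∀ i, 1 ≤ i → i ≤ N → 1 ≤ g i
def Phij (N j : ℕ) : (ℕ → ℤ) → Prop :=
  fun g => Phi0 N g ∧ g (j + 1) = 1 ∧ ∀ i, j + 2 ≤ i → i ≤ N + 1 → 2 ≤ g i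
def PhiN (N : ℕ) : (ℕ → ℤ) → Prop := fun g => Phi0 N g ∧ g (N + 1) ≤ 1

lemma count_E0 (N : ℕ) (hN : 1 ≤ N) : pcount (N + 1) (Phi0 N) = 2 * Rc (N - 1) := by
  rw [pcount_append N 1 (Phi0 N) (fun g => ∀ i, 1 ≤ i → i ≤ N → 1 ≤ g i) (fun _ => True)
    (by
      intro x y
      simp only [and_true]
      unfold Phi0
      constructor
      · intro h i h1 h2
        have := h i h1 h2
        rwa [psum_append_left x y h2] at this
      · intro h i h1 h2
        rw [psum_append_left x y h2]
        exact h i h1 h2)]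
  rw [pcount_one_true]
  obtain ⟨m, rfl⟩ : ∃ m, N = m + 1 := ⟨N - 1, by omega⟩
  have : pcount (m + 1) (fun g => ∀ i, 1 ≤ i → i ≤ m + 1 → 1 ≤ g i) = SP (m + 1) := rfl
  rw [this, SP_succ]
  simp [Nat.add_sub_cancel, mul_comm]

lemma pos_part_count (m : ℕ) (b : ℕ) :
    pcount (m + 1) (fun g => (∀ i, 1 ≤ i → i ≤ m + 1 → 1 ≤ g i) ∧ g (m + 1) = (b : ℤ) + 1)
      = cnt m 0 b := by
  rw [pcount_cons, cnt_pred]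
  have h2 : pcount m (fun g =>
      (∀ i, 1 ≤ i → i ≤ m + 1 →
        1 ≤ (fun i => if i = 0 then 0 else sgn false + g (i - 1)) i)
      ∧ (fun i => if i = 0 then 0 else sgn false + g (i - 1)) (m + 1) = (b : ℤ) + 1) = 0 := by
    apply pcount_eq_zero
    intro s hs
    have := hs.1 1 le_rfl (by omega)
    simp only [sgn_false, if_neg one_ne_zero, Nat.sub_self, psum_zero] at this
    omega
  rw [h2, add_zero]
  clear h2
  apply pcount_congr
  intro s
  simp only [sgn_true, if_neg (Nat.succ_ne_zero m), Nat.add_sub_cancel]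
  constructor
  · rintro ⟨h1, h2⟩
    refine ⟨fun i hi => ?_, by omega⟩
    have := h1 (i + 1) (by omega) (by omega)
    simp only [if_neg (Nat.succ_ne_zero i), Nat.add_sub_cancel] at this
    omega
  · rintro ⟨h1, h2⟩
    refine ⟨fun i hi1 hi2 => ?_, by omega⟩
    obtain ⟨i', rfl⟩ : ∃ i', i = i' + 1 := ⟨i - 1, by omega⟩
    simp only [if_neg (Nat.succ_ne_zero i'), Nat.add_sub_cancel]
    have := h1 i' (by omega)
    omega

lemma count_Ej (N j : ℕ) (hj : j < N) :
    pcount (N + 1) (Phij N j) = cnt j 0 0 * Rc (N - j - 1) := by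
  rw [pcount_cast (show N + 1 = (j + 1) + (N - j) by omega)]
  rw [pcount_append (j + 1) (N - j) _
    (fun g => (∀ i, 1 ≤ i → i ≤ j + 1 → 1 ≤ g i) ∧ g (j + 1) = ((0 : ℕ) : ℤ) + 1)
    (fun g => ∀ i, 1 ≤ i → i ≤ N - j → 1 ≤ g i)
    ?_]
  · rw [pos_part_count j 0]
    congr 1
    obtain ⟨m, hm⟩ : ∃ m, N - j = m + 1 := ⟨N - j - 1, by omega⟩
    rw [hm]
    have : pcount (m + 1) (fun g => ∀ i, 1 ≤ i → i ≤ m + 1 → 1 ≤ g i) = SP (m + 1) := rfl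
    rw [this, SP_succ]
    norm_num
  · intro x y
    unfold Phij Phi0
    constructor
    · rintro ⟨h1, h2, h3⟩
      rw [psum_append_left x y (le_refl (j + 1))] at h2
      refine ⟨⟨fun i hi1 hi2 => ?_, by push_cast; omega⟩, fun i hi1 hi2 => ?_⟩
      · have := h1 i hi1 (by omega)
        rwa [psum_append_left x y hi2] at this
      · have := h3 (j + 1 + i) (by omega) (by omega)
        rw [psum_append_right x y i] at this
        omega
    · rintro ⟨⟨h1, h2⟩, h3⟩
      have h2' : psum x (j + 1) = 1 := by push_cast at h2; omega
      refine ⟨fun i hi1 hi2 => ?_, ?_, fun i hi1 hi2 => ?_⟩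
      · rcases le_or_gt i (j + 1) with hc | hc
        · rw [psum_append_left x y hc]
          exact h1 i hi1 hc
        · obtain ⟨i', rfl⟩ : ∃ i', i = (j + 1) + i' := ⟨i - (j + 1), by omega⟩
          rw [psum_append_right x y i']
          have := h3 i' (by omega) (by omega)
          omega
      · rw [psum_append_left x y (le_refl (j + 1))]
        exact h2'
      · obtain ⟨i', rfl⟩ : ∃ i', i = (j + 1) + i' := ⟨i - (j + 1), by omega⟩
        rw [psum_append_right x y i']
        have := h3 i' (by omega) (by omega)
        omega

lemma count_EN (N : ℕ) (hN : 1 ≤ N) :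
    pcount (N + 1) (PhiN N) = cnt (N - 1) 0 0 + cnt (N - 1) 0 1 := by
  obtain ⟨M, rfl⟩ : ∃ M, N = M + 1 := ⟨N - 1, by omega⟩
  simp only [Nat.add_sub_cancel]
  rw [pcount_or
    (A := fun g => (Phi0 (M + 1) g ∧ g (M + 1) = 1) ∧ g (M + 1 + 1) = 0 - 1 + 1)
    (B := fun g => (Phi0 (M + 1) g ∧ g (M + 1) = 2) ∧ g (M + 1 + 1) = 1 - 1 + 1)
    ?_ ?_]
  · congr 1
    · rw [pcount_append (M + 1) 1 _
        (fun g => (∀ i, 1 ≤ i → i ≤ M + 1 → 1 ≤ g i) ∧ g (M + 1) = ((0 : ℕ) : ℤ) + 1)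
        (fun g => g 1 = -1) ?_]
      · rw [pos_part_count M 0, pcount_one_neg, mul_one]
      · intro x y
        unfold Phi0
        have e1 : psum (Fin.append x y) (M + 1 + 1) = psum x (M + 1) + psum y 1 :=
          psum_append_right x y 1
        constructor
        · rintro ⟨⟨h1, h2⟩, h3⟩
          rw [psum_append_left x y (le_refl (M + 1))] at h2
          refine ⟨⟨fun i hi1 hi2 => ?_, by push_cast; omega⟩, by omega⟩
          · have := h1 i hi1 hi2
            rwa [psum_append_left x y hi2] at this
        · rintro ⟨⟨h1, h2⟩, h3⟩
          refine ⟨⟨fun i hi1 hi2 => ?_, ?_⟩, ?_⟩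
          · rw [psum_append_left x y hi2]
            exact h1 i hi1 hi2
          · rw [psum_append_left x y (le_refl (M + 1))]
            push_cast at h2
            omega
          · rw [e1]
            push_cast at h2
            omega
    · rw [pcount_append (M + 1) 1 _
        (fun g => (∀ i, 1 ≤ i → i ≤ M + 1 → 1 ≤ g i) ∧ g (M + 1) = ((1 : ℕ) : ℤ) + 1)
        (fun g => g 1 = -1) ?_]
      · rw [pos_part_count M 1, pcount_one_neg, mul_one]
      · intro x y
        unfold Phi0
        have e1 : psum (Fin.append x y) (M + 1 + 1) = psum x (M + 1) + psum y 1 :=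
          psum_append_right x y 1
        constructor
        · rintro ⟨⟨h1, h2⟩, h3⟩
          rw [psum_append_left x y (le_refl (M + 1))] at h2
          refine ⟨⟨fun i hi1 hi2 => ?_, by push_cast; omega⟩, by omega⟩
          · have := h1 i hi1 hi2
            rwa [psum_append_left x y hi2] at this
        · rintro ⟨⟨h1, h2⟩, h3⟩
          refine ⟨⟨fun i hi1 hi2 => ?_, ?_⟩, ?_⟩
          · rw [psum_append_left x y hi2]
            exact h1 i hi1 hi2
          · rw [psum_append_left x y (le_refl (M + 1))]
            push_cast at h2
            omega
          · rw [e1]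
            push_cast at h2
            omega
  · intro s
    unfold PhiN Phi0
    have hstep : psum s (M + 1 + 1) = psum s (M + 1) + sgn (s ⟨M + 1, by omega⟩) :=
      psum_succ s (by omega)
    have hd : sgn (s ⟨M + 1, by omega⟩) = 1 ∨ sgn (s ⟨M + 1, by omega⟩) = -1 := by
      rcases s ⟨M + 1, by omega⟩ <;> simp [sgn_true, sgn_false]
    constructor
    · rintro ⟨h0, h1⟩
      have h2 : 1 ≤ psum s (M + 1) := h0 (M + 1) (by omega) le_rfl
      by_cases hc : psum s (M + 1) = 1
      · left
        exact ⟨⟨h0, hc⟩, by omega⟩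
      · right
        refine ⟨⟨h0, by omega⟩, by omega⟩
    · rintro (⟨⟨h0, h1⟩, h2⟩ | ⟨⟨h0, h1⟩, h2⟩) <;> exact ⟨h0, by omega⟩
  · rintro s ⟨⟨_, h2⟩, ⟨_, h2'⟩⟩
    omega


noncomputable def minSet (f : ℕ → ℤ) (N : ℕ) : Finset ℕ :=
  (Finset.range (N + 1)).filter (fun i => ∀ k ∈ Finset.range (N + 1), f i ≤ f k)

noncomputable def lastArgmin (f : ℕ → ℤ) (N : ℕ) : ℕ := (minSet f N).sup id

lemma mem_minSet {f : ℕ → ℤ} {N i : ℕ} :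
    i ∈ minSet f N ↔ (i ≤ N ∧ ∀ k, k ≤ N → f i ≤ f k) := by
  simp only [minSet, Finset.mem_filter, Finset.mem_range]
  constructor
  · rintro ⟨h1, h2⟩
    exact ⟨by omega, fun k hk => h2 k (by omega)⟩
  · rintro ⟨h1, h2⟩
    exact ⟨by omega, fun k hk => h2 k (by omega)⟩

lemma sup_id_mem (F : Finset ℕ) (h : F.Nonempty) : F.sup id ∈ F := by
  have := Finset.max'_mem F h
  rwa [Finset.max'_eq_sup', Finset.sup'_eq_sup] at this

lemma lastArgmin_filter_nonempty (f : ℕ → ℤ) (N : ℕ) : (minSet f N).Nonempty := by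
  obtain ⟨i, hi, hmin⟩ := Finset.exists_min_image (Finset.range (N + 1)) f ⟨0, by simp⟩
  refine ⟨i, mem_minSet.2 ⟨?_, fun k hk => hmin k ?_⟩⟩
  · simp only [Finset.mem_range] at hi; omega
  · simp only [Finset.mem_range]; omega

lemma le_lastArgmin {f : ℕ → ℤ} {N i : ℕ} (h : i ∈ minSet f N) : i ≤ lastArgmin f N := by
  have := Finset.le_sup (f := id) h
  exact this

lemma lastArgmin_le (f : ℕ → ℤ) (N : ℕ) : lastArgmin f N ≤ N := by
  apply Finset.sup_le
  intro b hb
  have := (mem_minSet.1 hb).1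
  simpa using this

lemma lastArgmin_mem (f : ℕ → ℤ) (N : ℕ) : lastArgmin f N ∈ minSet f N :=
  sup_id_mem _ (lastArgmin_filter_nonempty f N)

lemma lastArgmin_eq_zero_iff (f : ℕ → ℤ) (N : ℕ) :
    lastArgmin f N = 0 ↔ ∀ i, 1 ≤ i → i ≤ N → f 0 < f i := by
  constructor
  · intro h i h1 h2
    have hmem := lastArgmin_mem f N
    rw [h] at hmem
    obtain ⟨-, hmin⟩ := mem_minSet.1 hmem
    have hle : f 0 ≤ f i := hmin i h2
    rcases lt_or_ge (f 0) (f i) with hc | hc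
    · exact hc
    · exfalso
      have hfi : f i = f 0 := le_antisymm hc hle
      have hm2 : i ∈ minSet f N := by
        refine mem_minSet.2 ⟨h2, fun k hk => ?_⟩
        rw [hfi]
        exact hmin k hk
      have := le_lastArgmin hm2
      omega
  · intro h
    apply Nat.le_antisymm _ (Nat.zero_le _)
    apply Finset.sup_le
    intro i hi
    obtain ⟨hir, hmin⟩ := mem_minSet.1 hi
    simp only [id_eq]
    by_contra hc
    have h1 : 1 ≤ i := by omega
    have := hmin 0 (by omega)
    have := h i h1 hir
    omega

lemma lastArgmin_eq_last_iff (Q : ℕ → ℤ) (N : ℕ) (hQ0 : Q 0 = 1)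
    (hpos : ∀ k, k + 1 ≤ N → 1 ≤ Q k) :
    lastArgmin Q N = N ↔ Q N ≤ 1 := by
  constructor
  · intro h
    have hmem := lastArgmin_mem Q N
    rw [h] at hmem
    obtain ⟨-, hmin⟩ := mem_minSet.1 hmem
    have := hmin 0 (by omega)
    omega
  · intro h
    have hmem : N ∈ minSet Q N := by
      refine mem_minSet.2 ⟨le_refl N, fun k hk => ?_⟩
      rcases Nat.lt_or_ge k N with hc | hc
      · have := hpos k (by omega)
        omega
      · have : k = N := by omega
        subst this
        exact le_refl _
    have h1 := le_lastArgmin hmem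
    have h2 := lastArgmin_le Q N
    omega

lemma lastArgmin_eq_mid_iff (Q : ℕ → ℤ) (N : ℕ) (hQ0 : Q 0 = 1)
    (hpos : ∀ k, k + 1 ≤ N → 1 ≤ Q k) {j : ℕ} (hj : j < N) :
    lastArgmin Q N = j ↔ (Q j = 1 ∧ ∀ k, j + 1 ≤ k → k ≤ N → 2 ≤ Q k) := by
  constructor
  · intro h
    have hmem := lastArgmin_mem Q N
    rw [h] at hmem
    obtain ⟨-, hmin⟩ := mem_minSet.1 hmem
    have hj1 : Q j ≤ 1 := by
      have := hmin 0 (by omega)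
      omega
    have hj2 : 1 ≤ Q j := hpos j (by omega)
    have hQN : 1 ≤ Q N := by
      have := hmin N (le_refl N)
      omega
    refine ⟨by omega, fun k hk1 hk2 => ?_⟩
    by_contra hc
    push_neg at hc
    have hkmem : k ∈ minSet Q N := by
      refine mem_minSet.2 ⟨hk2, fun k' hk' => ?_⟩
      rcases Nat.lt_or_ge k' N with hc' | hc'
      · have := hpos k' (by omega)
        omega
      · have : k' = N := by omega
        subst this
        omega
    have := le_lastArgmin hkmem
    omega
  · rintro ⟨h1, h2⟩
    have hmem : j ∈ minSet Q N := by
      refine mem_minSet.2 ⟨by omega, fun k hk => ?_⟩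
      rcases Nat.lt_or_ge k (j + 1) with hc | hc
      · rcases Nat.eq_zero_or_pos k with rfl | hk0
        · omega
        · have := hpos k (by omega)
          omega
      · have := h2 k (by omega) (by omega)
        omega
    have hge := le_lastArgmin hmem
    apply Nat.le_antisymm _ hge
    apply Finset.sup_le
    intro i hi
    obtain ⟨hir, hmin⟩ := mem_minSet.1 hi
    simp only [id_eq]
    by_contra hc
    push_neg at hc
    have := h2 i (by omega) (by omega)
    have := hmin j (by omega)
    omega

noncomputable def g0 (N : ℕ) (s : Fin (N + 1) → Bool) : ℕ := lastArgmin (fun i => psum s i) N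
noncomputable def g1 (N : ℕ) (s : Fin (N + 1) → Bool) : ℕ :=
  lastArgmin (fun i => psum s (i + 1)) N

lemma g0_iff (N : ℕ) (s : Fin (N + 1) → Bool) : g0 N s = 0 ↔ Phi0 N (psum s) := by
  unfold g0 Phi0
  rw [lastArgmin_eq_zero_iff]
  constructor
  · intro h i h1 h2
    have := h i h1 h2
    rw [psum_zero] at this
    omega
  · intro h i h1 h2
    have := h i h1 h2
    rw [psum_zero]
    omega

lemma g1_iff_mid (N : ℕ) (s : Fin (N + 1) → Bool) (hN : 1 ≤ N) (hpos : Phi0 N (psum s))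
    {j : ℕ} (hj : j < N) :
    g1 N s = j ↔ (psum s (j + 1) = 1 ∧ ∀ i, j + 2 ≤ i → i ≤ N + 1 → 2 ≤ psum s i) := by
  unfold g1
  rw [lastArgmin_eq_mid_iff (fun i => psum s (i + 1)) N ?_ ?_ hj]
  · constructor
    · rintro ⟨h1, h2⟩
      refine ⟨h1, fun i hi1 hi2 => ?_⟩
      obtain ⟨k, rfl⟩ : ∃ k, i = k + 1 := ⟨i - 1, by omega⟩
      exact h2 k (by omega) (by omega)
    · rintro ⟨h1, h2⟩
      exact ⟨h1, fun k hk1 hk2 => h2 (k + 1) (by omega) (by omega)⟩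
  · have ha := hpos 1 le_rfl hN
    have hb := psum_le s 1
    simp only [Nat.zero_add]
    omega
  · intro k hk
    exact hpos (k + 1) (by omega) hk

lemma g1_iff_last (N : ℕ) (s : Fin (N + 1) → Bool) (hN : 1 ≤ N) (hpos : Phi0 N (psum s)) :
    g1 N s = N ↔ psum s (N + 1) ≤ 1 := by
  unfold g1
  rw [lastArgmin_eq_last_iff (fun i => psum s (i + 1)) N ?_ ?_]
  · have ha := hpos 1 le_rfl hN
    have hb := psum_le s 1
    simp only [Nat.zero_add]
    omega
  · intro k hk
    exact hpos (k + 1) (by omega) hk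

lemma joint_mid (N : ℕ) (s : Fin (N + 1) → Bool) (hN : 1 ≤ N) {j : ℕ} (hj : j < N) :
    (g0 N s = 0 ∧ g1 N s = j) ↔ Phij N j (psum s) := by
  unfold Phij
  constructor
  · rintro ⟨h0, h1⟩
    have hp := (g0_iff N s).1 h0
    exact ⟨hp, (g1_iff_mid N s hN hp hj).1 h1⟩
  · rintro ⟨hp, h1, h2⟩
    exact ⟨(g0_iff N s).2 hp, (g1_iff_mid N s hN hp hj).2 ⟨h1, h2⟩⟩

lemma joint_last (N : ℕ) (s : Fin (N + 1) → Bool) (hN : 1 ≤ N) :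
    (g0 N s = 0 ∧ g1 N s = N) ↔ PhiN N (psum s) := by
  unfold PhiN
  constructor
  · rintro ⟨h0, h1⟩
    have hp := (g0_iff N s).1 h0
    exact ⟨hp, (g1_iff_last N s hN hp).1 h1⟩
  · rintro ⟨hp, h1⟩
    exact ⟨(g0_iff N s).2 hp, (g1_iff_last N s hN hp).2 h1⟩


section Measure

variable {Ω : Type*} [MeasurableSpace Ω] (μ : MeasureTheory.Measure Ω) [IsProbabilityMeasure μ]
  (X : ℕ → Ω → ℝ)

def val (b : Bool) : ℝ := if b then 1 else -1

def Atom (X : ℕ → Ω → ℝ) (N n : ℕ) (s : Fin (N + 1) → Bool) : Set Ω :=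
  {ω | ∀ t : Fin (N + 1), X (n + 1 + (t : ℕ)) ω = val (s t)}

lemma measurable_walkSum (hmeas : ∀ i, Measurable (X i)) (m : ℕ) :
    Measurable (walkSum X m) := by
  unfold walkSum
  exact Finset.measurable_sum _ (fun i _ => hmeas (i + 1))

lemma atom_eq_iInter (N n : ℕ) (s : Fin (N + 1) → Bool) :
    Atom X N n s = ⋂ t : Fin (N + 1), (X (n + 1 + (t : ℕ))) ⁻¹' {val (s t)} := by
  ext ω
  simp [Atom, Set.mem_iInter]

lemma atom_measurable (hmeas : ∀ i, Measurable (X i)) (N n : ℕ) (s : Fin (N + 1) → Bool) :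
    MeasurableSet (Atom X N n s) := by
  rw [atom_eq_iInter]
  exact MeasurableSet.iInter (fun t => (hmeas _) (measurableSet_singleton _))

lemma meas_eq_half (hstep : ∀ i, μ {ω | X i ω = 1} = 1 / 2 ∧ μ {ω | X i ω = -1} = 1 / 2)
    (i : ℕ) (c : Bool) : μ ((X i) ⁻¹' {val c}) = 2⁻¹ := by
  have h1 : (X i) ⁻¹' {val c} = {ω | X i ω = val c} := by
    ext ω; simp
  rw [h1]
  cases c
  · rw [show val false = -1 from rfl]
    rw [(hstep i).2]
    norm_num
  · rw [show val true = 1 from rfl]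
    rw [(hstep i).1]
    norm_num

lemma atom_meas (hindep : iIndepFun X μ)
    (hstep : ∀ i, μ {ω | X i ω = 1} = 1 / 2 ∧ μ {ω | X i ω = -1} = 1 / 2)
    (N n : ℕ) (s : Fin (N + 1) → Bool) :
    μ (Atom X N n s) = (2⁻¹ : ℝ≥0∞) ^ (N + 1) := by
  classical
  set s' : ℕ → Bool := fun u => if h : u < N + 1 then s ⟨u, h⟩ else false with hs'
  set S : Finset ℕ := (Finset.range (N + 1)).image (fun t => n + 1 + t) with hS
  set w : ℕ → Set Ω := fun i => (X i) ⁻¹' {val (s' (i - (n + 1)))} with hw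
  have hAeq : Atom X N n s = ⋂ i ∈ S, w i := by
    ext ω
    simp only [Atom, Set.mem_setOf_eq, Set.mem_iInter, hS, Finset.mem_image,
      Finset.mem_range, hw, Set.mem_preimage, Set.mem_singleton_iff]
    constructor
    · rintro h i ⟨t, ht, rfl⟩
      have he : n + 1 + t - (n + 1) = t := by omega
      rw [he, hs']
      simp only [dif_pos ht]
      exact h ⟨t, ht⟩
    · intro h t
      have := h (n + 1 + (t : ℕ)) ⟨t, t.isLt, rfl⟩
      rw [show n + 1 + (t : ℕ) - (n + 1) = (t : ℕ) by omega, hs'] at this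
      simpa only [dif_pos t.isLt] using this
  rw [hAeq]
  rw [ProbabilityTheory.iIndep.meas_biInter hindep.iIndep
    (fun i _ => ⟨{val (s' (i - (n + 1)))}, measurableSet_singleton _, rfl⟩)]
  have hterm : ∀ i ∈ S, μ (w i) = 2⁻¹ := fun i _ => meas_eq_half μ X hstep i _
  rw [Finset.prod_congr rfl hterm, Finset.prod_const]
  congr 1
  rw [hS, Finset.card_image_of_injective _ (fun a b hab => by omega), Finset.card_range]

lemma atoms_disjoint (N n : ℕ) {s s' : Fin (N + 1) → Bool} (h : s ≠ s') :
    Disjoint (Atom X N n s) (Atom X N n s') := by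
  rw [Set.disjoint_left]
  intro ω h1 h2
  obtain ⟨t, ht⟩ := Function.ne_iff.1 h
  have e : val (s t) = val (s' t) := by rw [← h1 t]; exact h2 t
  rcases hc : s t <;> rcases hc' : s' t <;> rw [hc, hc'] at e ht <;>
    first
      | exact absurd rfl ht
      | norm_num [val] at e

lemma cover_ae (hmeas : ∀ i, Measurable (X i))
    (hindep : iIndepFun X μ)
    (hstep : ∀ i, μ {ω | X i ω = 1} = 1 / 2 ∧ μ {ω | X i ω = -1} = 1 / 2)
    (N n : ℕ) : μ (⋃ s : Fin (N + 1) → Bool, Atom X N n s)ᶜ = 0 := by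
  have hU : MeasurableSet (⋃ s : Fin (N + 1) → Bool, Atom X N n s) :=
    MeasurableSet.iUnion (fun s => atom_measurable X hmeas N n s)
  have h1 : μ (⋃ s : Fin (N + 1) → Bool, Atom X N n s) = 1 := by
    rw [measure_iUnion (fun s s' hss' => atoms_disjoint X N n hss')
      (fun s => atom_measurable X hmeas N n s)]
    rw [tsum_fintype]
    have : ∀ s : Fin (N + 1) → Bool, μ (Atom X N n s) = (2⁻¹ : ℝ≥0∞) ^ (N + 1) :=
      fun s => atom_meas μ X hindep hstep N n s
    rw [Finset.sum_congr rfl (fun s _ => this s), Finset.sum_const, nsmul_eq_mul]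
    rw [Finset.card_univ, Fintype.card_fun, Fintype.card_bool, Fintype.card_fin]
    rw [Nat.cast_pow, Nat.cast_ofNat, ← mul_pow,
      ENNReal.mul_inv_cancel (by norm_num) (by norm_num), one_pow]
  rw [measure_compl hU (measure_ne_top μ _), h1]
  simp

lemma meas_eq_card (hmeas : ∀ i, Measurable (X i))
    (hindep : iIndepFun X μ)
    (hstep : ∀ i, μ {ω | X i ω = 1} = 1 / 2 ∧ μ {ω | X i ω = -1} = 1 / 2)
    (N n : ℕ) (A : Set Ω) (P : (Fin (N + 1) → Bool) → Prop)
    (hdet : ∀ s : Fin (N + 1) → Bool, ∀ ω ∈ Atom X N n s, (ω ∈ A ↔ P s)) :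
    μ A = ((Finset.univ.filter P).card : ℝ≥0∞) * (2⁻¹ : ℝ≥0∞) ^ (N + 1) := by
  classical
  set U := ⋃ s : Fin (N + 1) → Bool, Atom X N n s with hUdef
  have hU : MeasurableSet U := MeasurableSet.iUnion (fun s => atom_measurable X hmeas N n s)
  have h2 := measure_inter_add_diff (μ := μ) A hU
  have h3 : μ (A \ U) = 0 :=
    measure_mono_null (fun ω hω => hω.2) (cover_ae μ X hmeas hindep hstep N n)
  have h4 : A ∩ U = ⋃ s : Fin (N + 1) → Bool, (if P s then Atom X N n s else ∅) := by
    ext ω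
    simp only [Set.mem_inter_iff, hUdef, Set.mem_iUnion]
    constructor
    · rintro ⟨hA, s, hs⟩
      refine ⟨s, ?_⟩
      rw [if_pos ((hdet s ω hs).1 hA)]
      exact hs
    · rintro ⟨s, hs⟩
      by_cases hp : P s
      · rw [if_pos hp] at hs
        exact ⟨(hdet s ω hs).2 hp, s, hs⟩
      · rw [if_neg hp] at hs
        exact absurd hs (Set.notMem_empty ω)
  have h5 : μ (A ∩ U) = ((Finset.univ.filter P).card : ℝ≥0∞) * (2⁻¹ : ℝ≥0∞) ^ (N + 1) := by
    rw [h4, measure_iUnion ?_ ?_]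
    · rw [tsum_fintype]
      have hval : ∀ s : Fin (N + 1) → Bool,
          μ (if P s then Atom X N n s else ∅)
            = if P s then (2⁻¹ : ℝ≥0∞) ^ (N + 1) else 0 := by
        intro s
        by_cases hp : P s
        · rw [if_pos hp, if_pos hp, atom_meas μ X hindep hstep N n s]
        · rw [if_neg hp, if_neg hp, measure_empty]
      rw [Finset.sum_congr rfl (fun s _ => hval s), ← Finset.sum_filter, Finset.sum_const,
        nsmul_eq_mul]
    · intro s s' hss'
      have hd := atoms_disjoint X N n hss' (Ω := Ω)
      exact Disjoint.mono (by beta_reduce; split <;> simp) (by beta_reduce; split <;> simp) hd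
    · intro s
      by_cases hp : P s
      · rw [if_pos hp]; exact atom_measurable X hmeas N n s
      · rw [if_neg hp]; exact MeasurableSet.empty
  have : μ A = μ (A ∩ U) := by
    rw [← h2, h3, add_zero]
  rw [this, h5]

end Measure

section Measure2

variable {Ω : Type*} [MeasurableSpace Ω] (X : ℕ → Ω → ℝ)

lemma val_eq_sgn (b : Bool) : val b = ((sgn b : ℤ) : ℝ) := by
  cases b <;> simp [val, sgn]

lemma atom_walk {N n : ℕ} {s : Fin (N + 1) → Bool} {ω : Ω} (hω : ω ∈ Atom X N n s) :
    ∀ i, i ≤ N + 1 → walkSum X (n + i) ω = walkSum X n ω + ((psum s i : ℤ) : ℝ) := by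
  intro i
  induction i with
  | zero => intro _; rw [psum_zero]; simp
  | succ i ih =>
    intro hi
    have hilt : i < N + 1 := by omega
    have h1 : walkSum X (n + (i + 1)) ω = walkSum X (n + i) ω + X (n + i + 1) ω := by
      unfold walkSum
      rw [show n + (i + 1) = (n + i) + 1 by ring, Finset.sum_range_succ]
    have h2 : X (n + i + 1) ω = ((sgn (s ⟨i, hilt⟩) : ℤ) : ℝ) := by
      have h3 := hω ⟨i, hilt⟩
      rw [show ((⟨i, hilt⟩ : Fin (N + 1)) : ℕ) = i from rfl] at h3
      rw [show n + i + 1 = n + 1 + i by ring, h3, val_eq_sgn]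
    rw [h1, ih (by omega), h2, psum_succ s hilt]
    push_cast
    ring

lemma atom_argmin0 {N n : ℕ} {s : Fin (N + 1) → Bool} {ω : Ω} (hω : ω ∈ Atom X N n s) :
    argminChain X N n ω = g0 N s := by
  unfold argminChain g0 lastArgmin
  congr 1
  ext i
  simp only [Finset.mem_filter, Finset.mem_range, minSet]
  constructor
  · rintro ⟨h1, h2⟩
    refine ⟨h1, fun k hk => ?_⟩
    have h3 := h2 k hk
    rw [atom_walk X hω i (by omega), atom_walk X hω k (by omega)] at h3
    exact_mod_cast le_of_add_le_add_left h3
  · rintro ⟨h1, h2⟩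
    refine ⟨h1, fun k hk => ?_⟩
    have h3 := h2 k hk
    rw [atom_walk X hω i (by omega), atom_walk X hω k (by omega)]
    have h4 : ((psum s i : ℤ) : ℝ) ≤ ((psum s k : ℤ) : ℝ) := by exact_mod_cast h3
    linarith

lemma atom_argmin1 {N n : ℕ} {s : Fin (N + 1) → Bool} {ω : Ω} (hω : ω ∈ Atom X N n s) :
    argminChain X N (n + 1) ω = g1 N s := by
  unfold argminChain g1 lastArgmin
  congr 1
  ext i
  simp only [Finset.mem_filter, Finset.mem_range, minSet]
  constructor
  · rintro ⟨h1, h2⟩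
    refine ⟨h1, fun k hk => ?_⟩
    have h3 := h2 k hk
    rw [show n + 1 + i = n + (i + 1) by ring, show n + 1 + k = n + (k + 1) by ring,
      atom_walk X hω (i + 1) (by omega), atom_walk X hω (k + 1) (by omega)] at h3
    exact_mod_cast le_of_add_le_add_left h3
  · rintro ⟨h1, h2⟩
    refine ⟨h1, fun k hk => ?_⟩
    have h3 := h2 k hk
    rw [show n + 1 + i = n + (i + 1) by ring, show n + 1 + k = n + (k + 1) by ring,
      atom_walk X hω (i + 1) (by omega), atom_walk X hω (k + 1) (by omega)]
    have h4 : ((psum s (i + 1) : ℤ) : ℝ) ≤ ((psum s (k + 1) : ℤ) : ℝ) := by exact_mod_cast h3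
    linarith

lemma argmin_eq_zero_iff_real (f : ℕ → ℝ) (N : ℕ) :
    ((Finset.range (N + 1)).filter
        (fun i => ∀ k ∈ Finset.range (N + 1), f i ≤ f k)).sup id = 0
      ↔ ∀ i, 1 ≤ i → i ≤ N → ∃ k, k ≤ N ∧ f k < f i := by
  constructor
  · intro h i h1 h2
    by_contra hc
    push_neg at hc
    have hmem : i ∈ (Finset.range (N + 1)).filter
        (fun i => ∀ k ∈ Finset.range (N + 1), f i ≤ f k) := by
      simp only [Finset.mem_filter, Finset.mem_range]
      exact ⟨by omega, fun k hk => not_lt.1 (by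
        intro hlt
        exact absurd hlt (not_lt.2 (hc k (by omega))))⟩
    have := Finset.le_sup (f := id) hmem
    simp only [id_eq] at this
    omega
  · intro h
    apply Nat.le_antisymm _ (Nat.zero_le _)
    apply Finset.sup_le
    intro i hi
    simp only [Finset.mem_filter, Finset.mem_range] at hi
    obtain ⟨hiN, hmin⟩ := hi
    simp only [id_eq]
    by_contra hc
    obtain ⟨k, hk1, hk2⟩ := h i (by omega) (by omega)
    have := hmin k (by omega)
    exact absurd this (not_le.2 hk2)

lemma E_measurable (hmeas : ∀ i, Measurable (X i)) (N n : ℕ) :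
    MeasurableSet {ω | argminChain X N n ω = 0} := by
  have hE : {ω | argminChain X N n ω = 0}
      = ⋂ i ∈ Finset.Icc 1 N, ⋃ k ∈ Finset.range (N + 1),
          {ω | walkSum X (n + k) ω < walkSum X (n + i) ω} := by
    ext ω
    simp only [Set.mem_setOf_eq, Set.mem_iInter, Set.mem_iUnion, Finset.mem_Icc,
      Finset.mem_range]
    rw [show argminChain X N n ω = ((Finset.range (N + 1)).filter
      (fun i => ∀ k ∈ Finset.range (N + 1),
        walkSum X (n + i) ω ≤ walkSum X (n + k) ω)).sup id from rfl]
    rw [argmin_eq_zero_iff_real]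
    constructor
    · rintro h i ⟨hi1, hi2⟩
      obtain ⟨k, hk1, hk2⟩ := h i hi1 hi2
      exact ⟨k, by omega, hk2⟩
    · intro h i h1 h2
      obtain ⟨k, hk1, hk2⟩ := h i ⟨h1, h2⟩
      exact ⟨k, by omega, hk2⟩
  rw [hE]
  apply Finset.measurableSet_biInter
  intro i _
  apply Finset.measurableSet_biUnion
  intro k _
  exact measurableSet_lt (measurable_walkSum X hmeas (n + k)) (measurable_walkSum X hmeas (n + i))


end Measure2

lemma toReal_ratio (M c1 c2 : ℕ) (hc1 : c1 ≠ 0) :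
    (((c1 : ℝ≥0∞) * (2⁻¹ : ℝ≥0∞) ^ M)⁻¹ * ((c2 : ℝ≥0∞) * (2⁻¹ : ℝ≥0∞) ^ M)).toReal
      = (c2 : ℝ) / (c1 : ℝ) := by
  rw [ENNReal.toReal_mul, ENNReal.toReal_inv, ENNReal.toReal_mul, ENNReal.toReal_mul,
    ENNReal.toReal_pow, ENNReal.toReal_inv, ENNReal.toReal_ofNat,
    ENNReal.toReal_natCast, ENNReal.toReal_natCast]
  have hp : ((2 : ℝ)⁻¹) ^ M ≠ 0 := by positivity
  have hc : (c1 : ℝ) ≠ 0 := Nat.cast_ne_zero.2 hc1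
  field_simp

lemma choose_double (b : ℕ) :
    Nat.choose (2 * (b + 1)) (b + 1) = 2 * Nat.choose (2 * (b + 1) - 1) (b + 1) := by
  have h2 : 2 * (b + 1) - 1 = 2 * b + 1 := by omega
  rw [h2, show 2 * (b + 1) = (2 * b + 1) + 1 by omega, Nat.choose_succ_succ (2 * b + 1) b]
  have h3 := Nat.choose_symm (n := 2 * b + 1) (k := b + 1) (by omega)
  rw [show 2 * b + 1 - (b + 1) = b by omega] at h3
  simp only [Nat.succ_eq_add_one]
  omega

lemma final_mid_core (h : ℕ) (x y z D w W : ℝ)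
    (hxy : y * ((h : ℝ) + 1) = x * (h : ℝ))
    (hzw : z * W = w * D)
    (hD : 0 < D) (hW : 0 < W) :
    (x - y) * z / (2 * D) = x * w / ((2 * (h : ℝ) + 2) * W) := by
  rw [div_eq_div_iff (by positivity) (by positivity)]
  linear_combination (-(2 * z * W)) * hxy + (2 * x) * hzw

lemma final_last_odd (m : ℕ) (x y : ℝ)
    (hxy : y * ((m : ℝ) + 1) = x * (m : ℝ)) (hx : 0 < x) :
    (x - y) / (2 * x) = 1 / (2 * (m : ℝ) + 2) := by
  rw [div_eq_div_iff (by positivity) (by positivity)]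
  linear_combination (-2) * hxy

lemma final_last_even (m : ℕ) (x y : ℝ)
    (hxy : y * ((m : ℝ) + 1) = x * ((m : ℝ) - 1)) (hx : 0 < x) :
    (x - y) / (2 * x) = 2 / (2 * (m : ℝ) + 2) := by
  rw [div_eq_div_iff (by positivity) (by positivity)]
  linear_combination (-2) * hxy


lemma choose_double' (a : ℕ) (ha : 1 ≤ a) :
    Nat.choose (2 * a) a = 2 * Nat.choose (2 * a - 1) a := by
  obtain ⟨b, rfl⟩ : ∃ b, a = b + 1 := ⟨a - 1, by omega⟩
  exact choose_double b


end SSRWAux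

open SSRWAux

/-- For the simple symmetric random walk, transition probabilities of the argmin chain from
the state `0`: to `j < N` the probability vanishes for odd `j` and equals
`C(j,j/2) C(2⌊N/2⌋-j, ⌊N/2⌋-j/2) / ((j+2) C(2⌊N/2⌋, ⌊N/2⌋))` for even `j`; to `N` it equals
`1/(N+1)` for odd `N` and `2/(N+2)` for even `N`. -/
theorem ssrw_argminChain_transition_from_zero
    {Ω : Type*} [MeasurableSpace Ω] (μ : MeasureTheory.Measure Ω) [IsProbabilityMeasure μ]
    (X : ℕ → Ω → ℝ) (hmeas : ∀ i, Measurable (X i))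
    (hindep : iIndepFun X μ)
    (hident : ∀ i, IdentDistrib (X i) (X 1) μ μ)
    (hstep : ∀ i, μ {ω | X i ω = 1} = 1 / 2 ∧ μ {ω | X i ω = -1} = 1 / 2)
    (N : ℕ) (hN : 1 ≤ N) (n : ℕ) :
    (∀ j : ℕ, j < N → Odd j →
      ((μ[|{ω | argminChain X N n ω = 0}]) {ω | argminChain X N (n + 1) ω = j}).toReal = 0)
    ∧ (∀ j : ℕ, j < N → Even j →
      ((μ[|{ω | argminChain X N n ω = 0}]) {ω | argminChain X N (n + 1) ω = j}).toReal
        = (Nat.choose j (j / 2) : ℝ) * (Nat.choose (2 * (N / 2) - j) (N / 2 - j / 2) : ℝ)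
            / (((j : ℝ) + 2) * (Nat.choose (2 * (N / 2)) (N / 2) : ℝ)))
    ∧ (Odd N →
      ((μ[|{ω | argminChain X N n ω = 0}]) {ω | argminChain X N (n + 1) ω = N}).toReal
        = 1 / ((N : ℝ) + 1))
    ∧ (Even N →
      ((μ[|{ω | argminChain X N n ω = 0}]) {ω | argminChain X N (n + 1) ω = N}).toReal
        = 2 / ((N : ℝ) + 2)) := by
  have hEmeas := E_measurable X hmeas N n
  have hμE : μ {ω | argminChain X N n ω = 0}
      = (pcount (N + 1) (Phi0 N) : ℝ≥0∞) * (2⁻¹ : ℝ≥0∞) ^ (N + 1) := by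
    exact meas_eq_card μ X hmeas hindep hstep N n _ (fun s => Phi0 N (psum s))
      (fun s ω hω => by
        simp only [Set.mem_setOf_eq]
        rw [atom_argmin0 X hω, g0_iff])
  have hμEFmid : ∀ j : ℕ, j < N →
      μ ({ω | argminChain X N n ω = 0} ∩ {ω | argminChain X N (n + 1) ω = j})
        = (pcount (N + 1) (Phij N j) : ℝ≥0∞) * (2⁻¹ : ℝ≥0∞) ^ (N + 1) := by
    intro j hj
    exact meas_eq_card μ X hmeas hindep hstep N n _ (fun s => Phij N j (psum s))
      (fun s ω hω => by
        simp only [Set.mem_inter_iff, Set.mem_setOf_eq]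
        rw [atom_argmin0 X hω, atom_argmin1 X hω]
        exact joint_mid N s hN hj)
  have hμEFlast : μ ({ω | argminChain X N n ω = 0} ∩ {ω | argminChain X N (n + 1) ω = N})
        = (pcount (N + 1) (PhiN N) : ℝ≥0∞) * (2⁻¹ : ℝ≥0∞) ^ (N + 1) := by
    exact meas_eq_card μ X hmeas hindep hstep N n _ (fun s => PhiN N (psum s))
      (fun s ω hω => by
        simp only [Set.mem_inter_iff, Set.mem_setOf_eq]
        rw [atom_argmin0 X hω, atom_argmin1 X hω]
        exact joint_last N s hN)
  have hRc : Rc (N - 1) = Nat.choose (N - 1) (N / 2) := by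
    have h := Rc_closed (N - 1)
    rw [show N - 1 + 1 = N by omega] at h
    exact_mod_cast h
  have hc1 : pcount (N + 1) (Phi0 N) = 2 * Nat.choose (N - 1) (N / 2) := by
    rw [count_E0 N hN, hRc]
  have hDpos : 0 < Nat.choose (N - 1) (N / 2) := Nat.choose_pos (by omega)
  have hc1ne : pcount (N + 1) (Phi0 N) ≠ 0 := by
    rw [hc1]; omega
  refine ⟨?_, ?_, ?_, ?_⟩
  · -- odd j < N : zero
    intro j hj hodd
    rw [cond_apply hEmeas, hμEFmid j hj, count_Ej N j hj,
      cnt_parity (show (j + 0 + 0) % 2 = 1 by obtain ⟨t, rfl⟩ := hodd; omega)]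
    simp
  · -- even j < N
    intro j hj heven
    rw [cond_apply hEmeas, hμEFmid j hj, hμE, toReal_ratio (N + 1) _ _ hc1ne,
      count_Ej N j hj, hc1]
    obtain ⟨h, rfl⟩ : ∃ h, j = 2 * h := by obtain ⟨t, ht⟩ := heven; exact ⟨t, by omega⟩
    have hxE : ((cnt (2 * h) 0 0 : ℕ) : ℝ)
        = (Nat.choose (2 * h) h : ℝ) - (Nat.choose (2 * h) (h + 1) : ℝ) := by
      have hc := cnt_closed (2 * h) 0 0 h (by omega)
      rw [show h + 0 + 1 = h + 1 by omega] at hc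
      exact_mod_cast hc
    have hxy : (Nat.choose (2 * h) (h + 1) : ℝ) * ((h : ℝ) + 1)
        = (Nat.choose (2 * h) h : ℝ) * (h : ℝ) := by
      have hc := Nat.choose_succ_right_eq (2 * h) h
      rw [show 2 * h - h = h by omega] at hc
      exact_mod_cast hc
    have hzE : ((Rc (N - 2 * h - 1) : ℕ) : ℝ)
        = (Nat.choose (N - 2 * h - 1) ((N - 2 * h) / 2) : ℝ) := by
      have hc := Rc_closed (N - 2 * h - 1)
      rw [show N - 2 * h - 1 + 1 = N - 2 * h by omega] at hc
      exact_mod_cast hc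
    push_cast
    rw [hxE, hzE, show (2 * h : ℕ) / 2 = h by omega]
    rcases Nat.even_or_odd N with hNe | hNo
    · obtain ⟨m, rfl⟩ : ∃ m, N = 2 * m := by obtain ⟨t, ht⟩ := hNe; exact ⟨t, by omega⟩
      have hmh : 1 ≤ m - h := by omega
      rw [show (2 * m) / 2 = m by omega] at *
      rw [show 2 * m - 2 * h - 1 = 2 * (m - h) - 1 by omega,
        show (2 * m - 2 * h) / 2 = m - h by omega,
        show 2 * m - 2 * h = 2 * (m - h) by omega]
      have hW : (Nat.choose (2 * m) m : ℝ) = 2 * (Nat.choose (2 * m - 1) m : ℝ) := by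
        exact_mod_cast choose_double' m (by omega)
      have hw : (Nat.choose (2 * (m - h)) (m - h) : ℝ)
          = 2 * (Nat.choose (2 * (m - h) - 1) (m - h) : ℝ) := by
        exact_mod_cast choose_double' (m - h) hmh
      have hD : (0 : ℝ) < (Nat.choose (2 * m - 1) m : ℝ) := by
        exact_mod_cast Nat.choose_pos (by omega)
      have hW0 : (0 : ℝ) < (Nat.choose (2 * m) m : ℝ) := by
        exact_mod_cast Nat.choose_pos (by omega)
      rw [div_eq_div_iff (by positivity) (by positivity), hW, hw]
      linear_combination (-(4 * (Nat.choose (2 * (m - h) - 1) (m - h) : ℝ)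
        * (Nat.choose (2 * m - 1) m : ℝ))) * hxy
    · obtain ⟨m, rfl⟩ : ∃ m, N = 2 * m + 1 := by obtain ⟨t, ht⟩ := hNo; exact ⟨t, by omega⟩
      rw [show (2 * m + 1) / 2 = m by omega, show 2 * m + 1 - 1 = 2 * m by omega] at *
      rw [show 2 * m + 1 - 2 * h - 1 = 2 * m - 2 * h by omega,
        show (2 * m + 1 - 2 * h) / 2 = m - h by omega]
      have hD : (0 : ℝ) < (Nat.choose (2 * m) m : ℝ) := by
        exact_mod_cast Nat.choose_pos (by omega)
      rw [div_eq_div_iff (by positivity) (by positivity)]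
      linear_combination ((Nat.choose (2 * m - 2 * h) (m - h) : ℝ)
        * (Nat.choose (2 * m) m : ℝ) * (-2)) * hxy
  · -- N odd
    intro hNodd
    rw [cond_apply hEmeas, hμEFlast, hμE, toReal_ratio (N + 1) _ _ hc1ne,
      count_EN N hN, hc1]
    obtain ⟨m, rfl⟩ : ∃ m, N = 2 * m + 1 := by obtain ⟨t, ht⟩ := hNodd; exact ⟨t, by omega⟩
    rw [show 2 * m + 1 - 1 = 2 * m by omega, show (2 * m + 1) / 2 = m by omega] at *
    rw [cnt_parity (show (2 * m + 0 + 1) % 2 = 1 by omega), Nat.add_zero]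
    have hxE : ((cnt (2 * m) 0 0 : ℕ) : ℝ)
        = (Nat.choose (2 * m) m : ℝ) - (Nat.choose (2 * m) (m + 1) : ℝ) := by
      have hc := cnt_closed (2 * m) 0 0 m (by omega)
      rw [show m + 0 + 1 = m + 1 by omega] at hc
      exact_mod_cast hc
    have hxy : (Nat.choose (2 * m) (m + 1) : ℝ) * ((m : ℝ) + 1)
        = (Nat.choose (2 * m) m : ℝ) * (m : ℝ) := by
      have hc := Nat.choose_succ_right_eq (2 * m) m
      rw [show 2 * m - m = m by omega] at hc
      exact_mod_cast hc
    have hD : (0 : ℝ) < (Nat.choose (2 * m) m : ℝ) := by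
      exact_mod_cast Nat.choose_pos (by omega)
    push_cast
    rw [hxE]
    rw [div_eq_div_iff (by positivity) (by positivity)]
    linear_combination (-2) * hxy
  · -- N even
    intro hNev
    rw [cond_apply hEmeas, hμEFlast, hμE, toReal_ratio (N + 1) _ _ hc1ne,
      count_EN N hN, hc1]
    obtain ⟨m, rfl⟩ : ∃ m, N = 2 * m := by obtain ⟨t, ht⟩ := hNev; exact ⟨t, by omega⟩
    have hm1 : 1 ≤ m := by omega
    rw [show (2 * m) / 2 = m by omega] at *
    rw [cnt_parity (show (2 * m - 1 + 0 + 0) % 2 = 1 by omega), Nat.zero_add]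
    have hxE : ((cnt (2 * m - 1) 0 1 : ℕ) : ℝ)
        = (Nat.choose (2 * m - 1) m : ℝ) - (Nat.choose (2 * m - 1) (m + 1) : ℝ) := by
      have hc := cnt_closed (2 * m - 1) 0 1 m (by omega)
      rw [show m + 0 + 1 = m + 1 by omega] at hc
      exact_mod_cast hc
    have hxy : (Nat.choose (2 * m - 1) (m + 1) : ℝ) * ((m : ℝ) + 1)
        = (Nat.choose (2 * m - 1) m : ℝ) * ((m : ℝ) - 1) := by
      have hc := Nat.choose_succ_right_eq (2 * m - 1) m
      rw [show 2 * m - 1 - m = m - 1 by omega] at hc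
      have : ((m - 1 : ℕ) : ℝ) = (m : ℝ) - 1 := by
        push_cast [hm1]
        ring
      calc (Nat.choose (2 * m - 1) (m + 1) : ℝ) * ((m : ℝ) + 1)
          = ((Nat.choose (2 * m - 1) (m + 1) * (m + 1) : ℕ) : ℝ) := by push_cast; ring
        _ = ((Nat.choose (2 * m - 1) m * (m - 1) : ℕ) : ℝ) := by rw [hc]
        _ = (Nat.choose (2 * m - 1) m : ℝ) * ((m : ℝ) - 1) := by
            rw [Nat.cast_mul, this]
    have hD : (0 : ℝ) < (Nat.choose (2 * m - 1) m : ℝ) := by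
      exact_mod_cast Nat.choose_pos (by omega)
    push_cast
    rw [hxE]
    rw [div_eq_div_iff (by positivity) (by positivity)]
    linear_combination (-2) * hxy
end

section
/- Define sequences of real numbers by p_0 := 1, p_{2n−1} = p_{2n} := (1/2)_{n↑}/n! for n ≥ 1, and p̃_0 := 1, p̃_{2n} = p̃_{2n+1} := (1/2)_{n↑}/(2 · n!) for n ≥ 1 (so p̃_1 = 1/2). Then for every N ≥ 1, Σ_{j=0}^{N−1} p_j p̃_{N−j} − Σ_{j=0}^{N−1} p_{j+1} p̃_{N−j} = (N/(N+1)) p̃_N if N is odd, and = (N/(N+2)) p̃_N if N is even. -/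
open MeasureTheory ProbabilityTheory Finset
open scoped Classical ProbabilityTheory

noncomputable def qq (n : ℕ) : ℝ := poch (1/2) n / n.factorial

lemma qq_eq (n : ℕ) : qq n = poch (1/2) n / n.factorial := rfl

lemma qq_zero : qq 0 = 1 := by simp [qq, poch]

lemma qq_succ (n : ℕ) : qq (n + 1) = qq n * ((n : ℝ) + 1/2) / ((n : ℝ) + 1) := by
  have hfac : (Nat.factorial n : ℝ) ≠ 0 := Nat.cast_ne_zero.mpr n.factorial_ne_zero
  have h1 : ((n : ℝ) + 1) ≠ 0 := by positivity
  simp only [qq, poch, Finset.prod_range_succ, Nat.factorial_succ]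
  push_cast
  field_simp
  ring

lemma qq_weighted (n : ℕ) :
    2 * ∑ m ∈ range (n+1), (m:ℝ) * (qq m * qq (n-m))
      = n * ∑ m ∈ range (n+1), qq m * qq (n-m) := by
  have hrefl : ∑ m ∈ range (n+1), (m:ℝ) * (qq m * qq (n-m))
      = ∑ m ∈ range (n+1), ((n:ℝ) - m) * (qq m * qq (n-m)) := by
    rw [← Finset.sum_range_reflect (fun m => (m:ℝ) * (qq m * qq (n-m))) (n+1)]
    apply Finset.sum_congr rfl
    intro m hm
    have hm' : m ≤ n := by simpa [Nat.lt_succ_iff] using hm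
    have h1 : n + 1 - 1 - m = n - m := by omega
    have h2 : n - (n - m) = m := by omega
    simp only [h1, h2]
    have : ((n - m : ℕ) : ℝ) = (n : ℝ) - m := by
      push_cast [Nat.cast_sub hm']; ring
    rw [this]; ring
  calc 2 * ∑ m ∈ range (n+1), (m:ℝ) * (qq m * qq (n-m))
      = (∑ m ∈ range (n+1), (m:ℝ) * (qq m * qq (n-m)))
        + ∑ m ∈ range (n+1), ((n:ℝ) - m) * (qq m * qq (n-m)) := by rw [← hrefl]; ring
    _ = ∑ m ∈ range (n+1), (n:ℝ) * (qq m * qq (n-m)) := by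
        rw [← Finset.sum_add_distrib]; apply Finset.sum_congr rfl; intros; ring
    _ = n * ∑ m ∈ range (n+1), qq m * qq (n-m) := by rw [Finset.mul_sum]

lemma qq_conv (K : ℕ) : ∑ m ∈ range (K+1), qq m * qq (K - m) = 1 := by
  induction K with
  | zero => simp [qq_zero]
  | succ K ih =>
    have h2 : ∑ m ∈ range (K+2), (m:ℝ) * (qq m * qq (K+1-m))
        = ∑ m ∈ range (K+1), ((m:ℝ)+1) * (qq (m+1) * qq (K-m)) := by
      rw [Finset.sum_range_succ' (fun m => (m:ℝ) * (qq m * qq (K+1-m))) (K+1)]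
      simp only [Nat.cast_zero, zero_mul, add_zero]
      apply Finset.sum_congr rfl
      intro m hm
      have h : K + 1 - (m+1) = K - m := by omega
      rw [h]; push_cast; ring
    have h3 : ∀ m : ℕ, ((m:ℝ)+1) * (qq (m+1) * qq (K-m))
        = ((m:ℝ) + 1/2) * (qq m * qq (K-m)) := by
      intro m
      have hm1 : ((m:ℝ)+1) ≠ 0 := by positivity
      rw [qq_succ m]; field_simp
    have h4 : ∑ m ∈ range (K+1), ((m:ℝ)+1) * (qq (m+1) * qq (K-m))
        = (∑ m ∈ range (K+1), (m:ℝ) * (qq m * qq (K-m)))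
          + (1/2) * ∑ m ∈ range (K+1), qq m * qq (K-m) := by
      rw [Finset.mul_sum, ← Finset.sum_add_distrib]
      apply Finset.sum_congr rfl
      intro m hm
      rw [h3 m]; ring
    have hw1 := qq_weighted (K+1)
    have hw2 := qq_weighted K
    have hne : ((K:ℝ)+1) ≠ 0 := by positivity
    have key : ((K:ℝ)+1) * ∑ m ∈ range (K+2), qq m * qq (K+1-m)
        = ((K:ℝ)+1) * 1 := by
      push_cast at hw1
      rw [← hw1, h2, h4, ih]
      rw [ih] at hw2  -- careful: hw2 mentions the sum; ih rewrites it to 1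
      linarith [hw2]
    have := mul_left_cancel₀ hne key
    simpa using this

lemma qq_conv' (K : ℕ) :
    ∑ m ∈ range (K+1), (qq m - qq (m+1)) * qq (K - m) = qq (K+1) := by
  have h1 : ∑ m ∈ range (K+1), (qq m - qq (m+1)) * qq (K-m)
      = (∑ m ∈ range (K+1), qq m * qq (K-m))
        - ∑ m ∈ range (K+1), qq (m+1) * qq (K-m) := by
    rw [← Finset.sum_sub_distrib]; apply Finset.sum_congr rfl; intros; ring
  have h2 : ∑ m ∈ range (K+1), qq (m+1) * qq (K-m) = 1 - qq (K+1) := by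
    have h := qq_conv (K+1)
    rw [Finset.sum_range_succ' (fun m => qq m * qq (K+1-m)) (K+1)] at h
    have hc : ∀ m : ℕ, K + 1 - (m+1) = K - m := fun m => by omega
    simp only [hc, Nat.sub_zero, qq_zero, one_mul] at h
    linarith
  rw [h1, h2, qq_conv]; ring

lemma sum_range_even_odd (F : ℕ → ℝ) (K : ℕ) :
    ∑ j ∈ range (2*K), F j = ∑ m ∈ range K, F (2*m) + ∑ m ∈ range K, F (2*m+1) := by
  induction K with
  | zero => simp
  | succ K ih =>
    have h : 2 * (K+1) = 2*K + 1 + 1 := by ring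
    rw [h, Finset.sum_range_succ, Finset.sum_range_succ, ih,
      Finset.sum_range_succ, Finset.sum_range_succ]
    ring

lemma sum_range_odd (F : ℕ → ℝ) (K : ℕ) :
    ∑ j ∈ range (2*K+1), F j = ∑ m ∈ range (K+1), F (2*m) + ∑ m ∈ range K, F (2*m+1) := by
  rw [Finset.sum_range_succ, sum_range_even_odd, Finset.sum_range_succ]
  ring

/-- The algebraic identity behind Lemma 2.4: with `p_0 = 1`, `p_{2n-1} = p_{2n} = (1/2)_{n↑}/n!`
and `p̃_0 = 1`, `p̃_1 = 1/2`, `p̃_{2n} = p̃_{2n+1} = (1/2)_{n↑}/(2 n!)`, for every `N ≥ 1`,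
`Σ_{j=0}^{N-1} p_j p̃_{N-j} - Σ_{j=0}^{N-1} p_{j+1} p̃_{N-j}` equals `(N/(N+1)) p̃_N` for odd
`N` and `(N/(N+2)) p̃_N` for even `N`. -/
theorem ssrw_sum_identity (p ptil : ℕ → ℝ)
    (hp0 : p 0 = 1)
    (hp : ∀ n : ℕ, 1 ≤ n →
      p (2 * n - 1) = poch (1 / 2) n / Nat.factorial n
      ∧ p (2 * n) = poch (1 / 2) n / Nat.factorial n)
    (hptil0 : ptil 0 = 1) (hptil1 : ptil 1 = 1 / 2)
    (hptil : ∀ n : ℕ, 1 ≤ n →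
      ptil (2 * n) = poch (1 / 2) n / (2 * Nat.factorial n)
      ∧ ptil (2 * n + 1) = poch (1 / 2) n / (2 * Nat.factorial n))
    (N : ℕ) (hN : 1 ≤ N) :
    (∑ j ∈ Finset.range N, p j * ptil (N - j)) - ∑ j ∈ Finset.range N, p (j + 1) * ptil (N - j)
      = if Odd N then (N : ℝ) / ((N : ℝ) + 1) * ptil N
        else (N : ℝ) / ((N : ℝ) + 2) * ptil N := by
  have hpq : ∀ m : ℕ, p (2*m) = qq m := by
    intro m
    rcases Nat.eq_zero_or_pos m with h|h
    · subst h; simpa [qq_zero] using hp0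
    · rw [(hp m h).2, qq_eq]
  have hpq' : ∀ m : ℕ, p (2*m+1) = qq (m+1) := by
    intro m
    have h := (hp (m+1) (by omega)).1
    have h2 : 2*(m+1) - 1 = 2*m+1 := by omega
    rw [h2] at h
    rw [h, qq_eq]
  have hptq : ∀ k : ℕ, ptil (2*k+1) = qq k / 2 := by
    intro k
    rcases Nat.eq_zero_or_pos k with h|h
    · subst h; rw [show 2*0+1 = 1 from rfl, hptil1, qq_zero]
    · rw [(hptil k h).2, qq_eq]; ring
  have hptq2 : ∀ k : ℕ, 1 ≤ k → ptil (2*k) = qq k / 2 := by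
    intro k h
    rw [(hptil k h).1, qq_eq]; ring
  have hsplit : (∑ j ∈ Finset.range N, p j * ptil (N-j))
      - ∑ j ∈ Finset.range N, p (j+1) * ptil (N-j)
      = ∑ j ∈ Finset.range N, (p j - p (j+1)) * ptil (N - j) := by
    rw [← Finset.sum_sub_distrib]; apply Finset.sum_congr rfl; intros; ring
  rw [hsplit]
  rcases Nat.even_or_odd N with ⟨K, hK⟩ | ⟨K, hK⟩
  · -- even case
    have hK' : N = 2*K := by omega
    subst hK'
    have hKpos : 1 ≤ K := by omega
    rw [if_neg (Nat.not_odd_iff_even.mpr (even_two_mul K))]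
    rw [sum_range_even_odd (fun j => (p j - p (j+1)) * ptil (2*K - j)) K]
    have hodd : ∑ m ∈ range K, (p (2*m+1) - p (2*m+1+1)) * ptil (2*K - (2*m+1)) = 0 := by
      apply Finset.sum_eq_zero; intro m hm
      have e2 : p (2*m+1+1) = qq (m+1) := by
        have h := hpq (m+1); rw [show 2*(m+1) = 2*m+1+1 by ring] at h; exact h
      rw [hpq' m, e2]; ring
    have hsum : ∑ m ∈ range K, (p (2*m) - p (2*m+1)) * ptil (2*K - 2*m)
        = (∑ m ∈ range K, (qq m - qq (m+1)) * qq (K - m)) / 2 := by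
      rw [Finset.sum_div]
      apply Finset.sum_congr rfl; intro m hm
      have hmK : m < K := Finset.mem_range.mp hm
      have h1 : 2*K - 2*m = 2*(K-m) := by omega
      rw [hpq m, hpq' m, h1, hptq2 (K-m) (by omega)]
      ring
    have hA : ∑ m ∈ range K, (qq m - qq (m+1)) * qq (K - m) = 2 * qq (K+1) - qq K := by
      have h := qq_conv' K
      rw [Finset.sum_range_succ] at h
      simp only [Nat.sub_self, qq_zero, mul_one] at h
      linarith
    rw [hodd, hsum, hA, hptq2 K hKpos, qq_succ K]
    have hne : ((K:ℝ)+1) ≠ 0 := by positivity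
    push_cast
    field_simp
    ring
  · -- odd case
    subst hK
    rw [if_pos ⟨K, by omega⟩]
    rw [sum_range_odd (fun j => (p j - p (j+1)) * ptil (2*K+1 - j)) K]
    have hodd : ∑ m ∈ range K, (p (2*m+1) - p (2*m+1+1)) * ptil (2*K+1 - (2*m+1)) = 0 := by
      apply Finset.sum_eq_zero; intro m hm
      have e2 : p (2*m+1+1) = qq (m+1) := by
        have h := hpq (m+1); rw [show 2*(m+1) = 2*m+1+1 by ring] at h; exact h
      rw [hpq' m, e2]; ring
    have hsum : ∑ m ∈ range (K+1), (p (2*m) - p (2*m+1)) * ptil (2*K+1 - 2*m)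
        = (∑ m ∈ range (K+1), (qq m - qq (m+1)) * qq (K - m)) / 2 := by
      rw [Finset.sum_div]
      apply Finset.sum_congr rfl; intro m hm
      have hmK : m < K + 1 := Finset.mem_range.mp hm
      have h1 : 2*K+1 - 2*m = 2*(K-m)+1 := by omega
      rw [hpq m, hpq' m, h1, hptq (K-m)]
      ring
    rw [hodd, hsum, qq_conv', hptq K, qq_succ K]
    have hne : ((K:ℝ)+1) ≠ 0 := by positivity
    push_cast
    field_simp
    ring
end
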